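/- arXiv:2004.02152 — 17 statements merged into one kernel-verified Lean document; each statement's English description precedes it below -/
import Mathlib

section
/- Let (f_n)_{n∈ℤ} be a frame of H with lower bound A and upper bound B, and suppose there is T ∈ GL(H) such that f_n = Tⁿ f_0 for all n ∈ ℤ. Then for every n ∈ ℤ and every x ∈ H one has √(A/B)·‖x‖ ≤ ‖Tⁿ x‖ ≤ √(B/A)·‖x‖ and √(A/B)·‖x‖ ≤ ‖(T*)ⁿ x‖ ≤ √(B/A)·‖x‖; in particular 1 ≤ ‖Tⁿ‖ ≤ √(B/A) for every n ∈ ℤ. -/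
noncomputable section

open scoped InnerProductSpace

/-- `f` is a frame of `H` with lower bound `A` and upper bound `B`. -/
def IsFrame {H : Type} [NormedAddCommGroup H] [InnerProductSpace ℂ H] {I : Type}
    (f : I → H) (A B : ℝ) : Prop :=
  0 < A ∧ 0 < B ∧ ∀ x : H,
    Summable (fun n : I => ‖(inner ℂ x (f n) : ℂ)‖ ^ 2) ∧
    A * ‖x‖ ^ 2 ≤ ∑' n : I, ‖(inner ℂ x (f n) : ℂ)‖ ^ 2 ∧
    ∑' n : I, ‖(inner ℂ x (f n) : ℂ)‖ ^ 2 ≤ B * ‖x‖ ^ 2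

lemma aux_sqrt {c u v : ℝ} (hc : 0 ≤ c) (hu : 0 ≤ u) (hv : 0 ≤ v)
    (h : u ^ 2 ≤ c * v ^ 2) : u ≤ Real.sqrt c * v := by
  have h' := Real.sqrt_le_sqrt h
  rwa [Real.sqrt_sq hu, Real.sqrt_mul hc, Real.sqrt_sq hv] at h'

theorem stmt0 {H : Type} [NormedAddCommGroup H] [InnerProductSpace ℂ H]
    [CompleteSpace H] [TopologicalSpace.SeparableSpace H] [Nontrivial H]
    (f : ℤ → H) (A B : ℝ) (hframe : IsFrame f A B)
    (T : H ≃L[ℂ] H) (hT : ∀ n : ℤ, f n = (T ^ n) (f 0)) :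
    ∀ n : ℤ,
      (∀ x : H,
        Real.sqrt (A / B) * ‖x‖ ≤ ‖(T ^ n) x‖ ∧
        ‖(T ^ n) x‖ ≤ Real.sqrt (B / A) * ‖x‖ ∧
        Real.sqrt (A / B) * ‖x‖ ≤
          ‖(ContinuousLinearMap.adjoint ((T ^ n : H ≃L[ℂ] H) : H →L[ℂ] H)) x‖ ∧
        ‖(ContinuousLinearMap.adjoint ((T ^ n : H ≃L[ℂ] H) : H →L[ℂ] H)) x‖ ≤
          Real.sqrt (B / A) * ‖x‖) ∧
      1 ≤ ‖((T ^ n : H ≃L[ℂ] H) : H →L[ℂ] H)‖ ∧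
      ‖((T ^ n : H ≃L[ℂ] H) : H →L[ℂ] H)‖ ≤ Real.sqrt (B / A) := by
  obtain ⟨hA, hB, hf⟩ := hframe
  have hBA : (0:ℝ) < B / A := div_pos hB hA
  have hAB : (0:ℝ) < A / B := div_pos hA hB
  have hmul : Real.sqrt (A / B) * Real.sqrt (B / A) = 1 := by
    rw [← Real.sqrt_mul hAB.le]
    rw [show A / B * (B / A) = 1 by field_simp]
    exact Real.sqrt_one
  have flip : ∀ u v : ℝ, u ≤ Real.sqrt (B / A) * v → Real.sqrt (A / B) * u ≤ v := by
    intro u v h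
    have := mul_le_mul_of_nonneg_left h (Real.sqrt_nonneg (A / B))
    rwa [← mul_assoc, hmul, one_mul] at this
  set U : ℤ → H →L[ℂ] H :=
    fun n => ContinuousLinearMap.adjoint ((T ^ n : H ≃L[ℂ] H) : H →L[ℂ] H) with hU
  have hTf : ∀ n m : ℤ, (T ^ n) (f m) = f (n + m) := by
    intro n m
    rw [hT m, hT (n + m), zpow_add]
    rfl
  have key : ∀ (n : ℤ) (x : H),
      A * ‖U n x‖ ^ 2 ≤ B * ‖x‖ ^ 2 ∧ A * ‖x‖ ^ 2 ≤ B * ‖U n x‖ ^ 2 := by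
    intro n x
    have h1 : ∀ m : ℤ, (inner ℂ (U n x) (f m) : ℂ) = inner ℂ x (f (n + m)) := by
      intro m
      rw [hU, ContinuousLinearMap.adjoint_inner_left]
      congr 1
      exact hTf n m
    have hsum : ∑' m : ℤ, ‖(inner ℂ (U n x) (f m) : ℂ)‖ ^ 2
        = ∑' m : ℤ, ‖(inner ℂ x (f m) : ℂ)‖ ^ 2 := by
      calc ∑' m : ℤ, ‖(inner ℂ (U n x) (f m) : ℂ)‖ ^ 2
          = ∑' m : ℤ, ‖(inner ℂ x (f (n + m)) : ℂ)‖ ^ 2 := by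
            exact tsum_congr fun m => by rw [h1]
        _ = ∑' m : ℤ, ‖(inner ℂ x (f m) : ℂ)‖ ^ 2 :=
            (Equiv.addLeft n).tsum_eq fun m => ‖(inner ℂ x (f m) : ℂ)‖ ^ 2
    constructor
    · calc A * ‖U n x‖ ^ 2 ≤ ∑' m : ℤ, ‖(inner ℂ (U n x) (f m) : ℂ)‖ ^ 2 := (hf _).2.1
        _ = ∑' m : ℤ, ‖(inner ℂ x (f m) : ℂ)‖ ^ 2 := hsum
        _ ≤ B * ‖x‖ ^ 2 := (hf x).2.2
    · calc A * ‖x‖ ^ 2 ≤ ∑' m : ℤ, ‖(inner ℂ x (f m) : ℂ)‖ ^ 2 := (hf x).2.1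
        _ = ∑' m : ℤ, ‖(inner ℂ (U n x) (f m) : ℂ)‖ ^ 2 := hsum.symm
        _ ≤ B * ‖U n x‖ ^ 2 := (hf _).2.2
  have hadj_ub : ∀ (n : ℤ) (x : H), ‖U n x‖ ≤ Real.sqrt (B / A) * ‖x‖ := by
    intro n x
    refine aux_sqrt hBA.le (norm_nonneg _) (norm_nonneg _) ?_
    rw [div_mul_eq_mul_div, le_div_iff₀ hA]
    nlinarith [(key n x).1]
  have hadj_lb : ∀ (n : ℤ) (x : H), Real.sqrt (A / B) * ‖x‖ ≤ ‖U n x‖ := by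
    intro n x
    refine flip _ _ (aux_sqrt hBA.le (norm_nonneg _) (norm_nonneg _) ?_)
    rw [div_mul_eq_mul_div, le_div_iff₀ hA]
    nlinarith [(key n x).2]
  have hnorm : ∀ n : ℤ, ‖((T ^ n : H ≃L[ℂ] H) : H →L[ℂ] H)‖ ≤ Real.sqrt (B / A) := by
    intro n
    rw [← ContinuousLinearMap.adjoint.norm_map ((T ^ n : H ≃L[ℂ] H) : H →L[ℂ] H)]
    exact ContinuousLinearMap.opNorm_le_bound _ (Real.sqrt_nonneg _) (hadj_ub n)
  have hT_ub : ∀ (n : ℤ) (x : H), ‖(T ^ n) x‖ ≤ Real.sqrt (B / A) * ‖x‖ := by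
    intro n x
    calc ‖(T ^ n) x‖ = ‖((T ^ n : H ≃L[ℂ] H) : H →L[ℂ] H) x‖ := rfl
      _ ≤ ‖((T ^ n : H ≃L[ℂ] H) : H →L[ℂ] H)‖ * ‖x‖ := ContinuousLinearMap.le_opNorm _ _
      _ ≤ Real.sqrt (B / A) * ‖x‖ :=
          mul_le_mul_of_nonneg_right (hnorm n) (norm_nonneg x)
  have hT_lb : ∀ (n : ℤ) (x : H), Real.sqrt (A / B) * ‖x‖ ≤ ‖(T ^ n) x‖ := by
    intro n x
    refine flip _ _ ?_
    have h0 : (T ^ (-n)) ((T ^ n) x) = x := by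
      have : ((T ^ (-n)) * (T ^ n) : H ≃L[ℂ] H) = 1 := by group
      calc (T ^ (-n)) ((T ^ n) x) = ((T ^ (-n)) * (T ^ n) : H ≃L[ℂ] H) x := rfl
        _ = x := by rw [this]; rfl
    calc ‖x‖ = ‖(T ^ (-n)) ((T ^ n) x)‖ := by rw [h0]
      _ ≤ Real.sqrt (B / A) * ‖(T ^ n) x‖ := hT_ub (-n) _
  intro n
  refine ⟨fun x => ⟨hT_lb n x, hT_ub n x, hadj_lb n x, hadj_ub n x⟩, ?_, hnorm n⟩
  by_contra hlt
  push_neg at hlt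
  obtain ⟨x₀, hx₀⟩ := exists_ne (0 : H)
  have hx₀' : 0 < ‖x₀‖ := norm_pos_iff.mpr hx₀
  have hpow : ∀ (k : ℕ) (y : H),
      ‖(T ^ (n * (k : ℤ))) y‖ ≤ ‖((T ^ n : H ≃L[ℂ] H) : H →L[ℂ] H)‖ ^ k * ‖y‖ := by
    intro k
    induction k with
    | zero =>
      intro y
      rw [show (n * ((0:ℕ):ℤ)) = 0 by simp, show (T ^ (0:ℤ)) y = y from rfl]
      simp
    | succ k ih =>
      intro y
      have hsplit : (T ^ (n * ((k : ℤ) + 1)) : H ≃L[ℂ] H)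
          = (T ^ n) * (T ^ (n * (k : ℤ))) := by
        rw [← zpow_add]
        ring_nf
      have happ : (T ^ (n * (((k : ℕ) + 1 : ℕ) : ℤ))) y
          = (T ^ n) ((T ^ (n * (k : ℤ))) y) := by
        rw [show (((k : ℕ) + 1 : ℕ) : ℤ) = (k : ℤ) + 1 by push_cast; ring, hsplit]
        rfl
      rw [happ]
      calc ‖(T ^ n) ((T ^ (n * (k : ℤ))) y)‖
          = ‖((T ^ n : H ≃L[ℂ] H) : H →L[ℂ] H) ((T ^ (n * (k : ℤ))) y)‖ := rfl
        _ ≤ ‖((T ^ n : H ≃L[ℂ] H) : H →L[ℂ] H)‖ * ‖(T ^ (n * (k : ℤ))) y‖ :=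
            ContinuousLinearMap.le_opNorm _ _
        _ ≤ ‖((T ^ n : H ≃L[ℂ] H) : H →L[ℂ] H)‖ *
            (‖((T ^ n : H ≃L[ℂ] H) : H →L[ℂ] H)‖ ^ k * ‖y‖) :=
            mul_le_mul_of_nonneg_left (ih y) (norm_nonneg _)
        _ = ‖((T ^ n : H ≃L[ℂ] H) : H →L[ℂ] H)‖ ^ (k + 1) * ‖y‖ := by ring
  have hsAB : 0 < Real.sqrt (A / B) := Real.sqrt_pos.mpr hAB
  obtain ⟨k, hk⟩ := exists_pow_lt_of_lt_one hsAB hlt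
  have h1 : Real.sqrt (A / B) * ‖x₀‖ ≤ ‖(T ^ (n * (k : ℤ))) x₀‖ := hT_lb _ _
  have h2 := hpow k x₀
  have h3 : ‖((T ^ n : H ≃L[ℂ] H) : H →L[ℂ] H)‖ ^ k * ‖x₀‖
      < Real.sqrt (A / B) * ‖x₀‖ := by
    exact mul_lt_mul_of_pos_right hk hx₀'
  linarith
end
end

section
/- Let (f_n)_{n∈ℤ} be a linearly independent frame of H and let U : ℓ²(ℤ) → H be its synthesis operator. Then there exists T ∈ GL(H) such that f_n = Tⁿ f_0 for all n ∈ ℤ if and only if the kernel N(U) of U is invariant under both the right-shift operator 𝒯 (the map sending a sequence (c_n) to (c_{n+1})) and its inverse 𝒯⁻¹, i.e. 𝒯 N(U) ⊆ N(U) and 𝒯⁻¹ N(U) ⊆ N(U). -/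
noncomputable section

open scoped InnerProductSpace

/-- Lift a CLM through a surjective CLM vanishing on its kernel. -/
lemma lift_CLM {E F G : Type*} [NormedAddCommGroup E] [NormedSpace ℂ E]
    [NormedAddCommGroup F] [NormedSpace ℂ F] [NormedAddCommGroup G] [NormedSpace ℂ G]
    [CompleteSpace E] [CompleteSpace F]
    (U : E →L[ℂ] F) (hsurj : Function.Surjective U) (g : E →L[ℂ] G)
    (hg : ∀ c, U c = 0 → g c = 0) : ∃ W : F →L[ℂ] G, ∀ c, W (U c) = g c := by
  have hwd : ∀ c c', U c = U c' → g c = g c' := by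
    intro c c' h
    have h0 : U (c - c') = 0 := by rw [map_sub, h, sub_self]
    have := hg _ h0
    rw [map_sub, sub_eq_zero] at this
    exact this
  set Wfun : F → G := fun x => g (Function.surjInv hsurj x) with hWfun
  have key : ∀ c, Wfun (U c) = g c := fun c =>
    hwd _ _ (Function.surjInv_eq hsurj (U c))
  have cont : Continuous Wfun := by
    rw [continuous_def]
    intro V hV
    have himg : Wfun ⁻¹' V = U '' (g ⁻¹' V) := by
      ext x
      constructor
      · intro hx
        obtain ⟨a, rfl⟩ := hsurj x
        exact ⟨a, by rwa [Set.mem_preimage, ← key a], rfl⟩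
      · rintro ⟨a, ha, rfl⟩
        simpa [Set.mem_preimage, key a] using ha
    rw [himg]
    exact U.isOpenMap hsurj _ (hV.preimage g.continuous)
  refine ⟨⟨⟨⟨Wfun, ?_⟩, ?_⟩, cont⟩, key⟩
  · intro x y
    obtain ⟨a, rfl⟩ := hsurj x
    obtain ⟨b, rfl⟩ := hsurj y
    rw [← map_add, key, key, key, map_add]
  · intro m x
    obtain ⟨a, rfl⟩ := hsurj x
    show Wfun (m • U a) = m • Wfun (U a)
    rw [← map_smul U m a, key, key, map_smul]

lemma U_single {H : Type} [NormedAddCommGroup H] [InnerProductSpace ℂ H]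
    (f : ℤ → H) (U : lp (fun _ : ℤ => ℂ) 2 →L[ℂ] H)
    (hU : ∀ c : lp (fun _ : ℤ => ℂ) 2, HasSum (fun n : ℤ => c n • f n) (U c))
    (n : ℤ) : U (lp.single 2 n 1) = f n := by
  refine (hU (lp.single 2 n 1)).unique ?_
  have heq : (fun m : ℤ => ((lp.single 2 n (1:ℂ) : lp (fun _ : ℤ => ℂ) 2) : ∀ _ : ℤ, ℂ) m • f m)
      = fun m : ℤ => if m = n then f n else 0 := by
    funext m
    by_cases h : m = n
    · subst h; simp [lp.single_apply_self]
    · simp [lp.single_apply_ne 2 n _ h, h]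
  rw [heq]
  exact hasSum_ite_eq n (f n)

lemma synth_surj {H : Type} [NormedAddCommGroup H] [InnerProductSpace ℂ H]
    [CompleteSpace H]
    (f : ℤ → H) (A B : ℝ) (hframe : IsFrame f A B)
    (U : lp (fun _ : ℤ => ℂ) 2 →L[ℂ] H)
    (hU : ∀ c : lp (fun _ : ℤ => ℂ) 2, HasSum (fun n : ℤ => c n • f n) (U c)) :
    Function.Surjective U := by
  obtain ⟨hA, hB, hfr⟩ := hframe
  set V := ContinuousLinearMap.adjoint U with hV
  have hVco : ∀ (x : H) (n : ℤ), (V x) n = (inner ℂ (f n) x : ℂ) := by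
    intro x n
    have h1 : (inner ℂ (lp.single 2 n (1:ℂ)) (V x) : ℂ) = (V x) n := by
      rw [lp.inner_single_left]
      simp
    have h2 : (inner ℂ (lp.single 2 n (1:ℂ)) (V x) : ℂ) = inner ℂ (U (lp.single 2 n 1)) x := by
      rw [hV, ContinuousLinearMap.adjoint_inner_right]
    rw [← h1, h2, U_single f U hU]
  have hVnorm : ∀ x : H, ‖V x‖ ^ 2 = ∑' n : ℤ, ‖(inner ℂ x (f n) : ℂ)‖ ^ 2 := by
    intro x
    have hs : HasSum (fun n : ℤ => (inner ℂ ((V x) n) ((V x) n) : ℂ)) (inner ℂ (V x) (V x)) :=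
      lp.hasSum_inner (𝕜 := ℂ) (V x) (V x)
    have hre := hs.mapL (RCLike.reCLM (K := ℂ))
    simp only [RCLike.reCLM_apply] at hre
    have heq : (fun n : ℤ => RCLike.re (inner ℂ ((V x) n) ((V x) n) : ℂ)) =
        fun n : ℤ => ‖(inner ℂ x (f n) : ℂ)‖ ^ 2 := by
      funext n
      rw [inner_self_eq_norm_sq, hVco x n, ← norm_inner_symm]
    rw [heq, inner_self_eq_norm_sq] at hre
    exact hre.tsum_eq.symm
  have hlow : ∀ x : H, A * ‖x‖ ^ 2 ≤ ‖V x‖ ^ 2 := by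
    intro x; rw [hVnorm x]; exact (hfr x).2.1
  set S := U ∘L V with hS
  have hre : ∀ x : H, RCLike.re (inner ℂ x (S x) : ℂ) = ‖V x‖ ^ 2 := by
    intro x
    have h3 : (inner ℂ x (S x) : ℂ) = inner ℂ (V x) (V x) := by
      rw [hS]
      simp only [ContinuousLinearMap.comp_apply]
      rw [hV, ← ContinuousLinearMap.adjoint_inner_left]
    rw [h3, inner_self_eq_norm_sq]
  have hbound : ∀ x : H, ‖x‖ ≤ ((⟨A, hA.le⟩ : NNReal)⁻¹ : NNReal) * ‖S x‖ := by
    intro x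
    have h1 : A * ‖x‖ ^ 2 ≤ ‖x‖ * ‖S x‖ := by
      calc A * ‖x‖ ^ 2 ≤ ‖V x‖ ^ 2 := hlow x
        _ = RCLike.re (inner ℂ x (S x) : ℂ) := (hre x).symm
        _ ≤ ‖(inner ℂ x (S x) : ℂ)‖ := RCLike.re_le_norm _
        _ ≤ ‖x‖ * ‖S x‖ := norm_inner_le_norm _ _
    have hcoe : (((⟨A, hA.le⟩ : NNReal)⁻¹ : NNReal) : ℝ) = A⁻¹ := (NNReal.coe_inv _).trans rfl
    rw [hcoe]
    rcases eq_or_ne x 0 with rfl | hx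
    · simp
    · have hxpos : 0 < ‖x‖ := norm_pos_iff.2 hx
      rw [inv_mul_eq_div, le_div_iff₀ hA]
      nlinarith [h1]
  have hanti : AntilipschitzWith ((⟨A, hA.le⟩ : NNReal)⁻¹) S :=
    S.antilipschitz_of_bound hbound
  have hdense : S.range.topologicalClosure = ⊤ := by
    rw [Submodule.topologicalClosure_eq_top_iff, Submodule.eq_bot_iff]
    intro y hy
    have h0 : (inner ℂ (S y) y : ℂ) = 0 :=
      (Submodule.mem_orthogonal _ y).1 hy (S y) ⟨y, rfl⟩
    have h0' : RCLike.re (inner ℂ y (S y) : ℂ) = 0 := by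
      rw [← inner_conj_symm, h0]
      simp
    have hle : A * ‖y‖ ^ 2 ≤ 0 := by
      calc A * ‖y‖ ^ 2 ≤ ‖V y‖ ^ 2 := hlow y
        _ = RCLike.re (inner ℂ y (S y) : ℂ) := (hre y).symm
        _ = 0 := h0'
    have h2 : ‖y‖ ^ 2 ≤ 0 := by nlinarith
    have h3 : ‖y‖ ^ 2 = 0 := le_antisymm h2 (sq_nonneg _)
    exact norm_eq_zero.1 (sq_eq_zero_iff.1 h3)
  have hbij : Function.Bijective S :=
    (ContinuousLinearMap.bijective_iff_dense_range_and_antilipschitz S).2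
      ⟨hdense, ⟨_, hanti⟩⟩
  intro x
  obtain ⟨y, hy⟩ := hbij.2 x
  exact ⟨V y, hy⟩

theorem stmt1 {H : Type} [NormedAddCommGroup H] [InnerProductSpace ℂ H]
    [CompleteSpace H] [TopologicalSpace.SeparableSpace H]
    (f : ℤ → H) (A B : ℝ) (hframe : IsFrame f A B)
    (hli : LinearIndependent ℂ f)
    (U : lp (fun _ : ℤ => ℂ) 2 →L[ℂ] H)
    (hU : ∀ c : lp (fun _ : ℤ => ℂ) 2, HasSum (fun n : ℤ => c n • f n) (U c))
    (𝒯 : lp (fun _ : ℤ => ℂ) 2 ≃L[ℂ] lp (fun _ : ℤ => ℂ) 2)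
    (h𝒯 : ∀ (c : lp (fun _ : ℤ => ℂ) 2) (n : ℤ), (𝒯 c) n = c (n + 1)) :
    (∃ T : H ≃L[ℂ] H, ∀ n : ℤ, f n = (T ^ n) (f 0)) ↔
      ((∀ c : lp (fun _ : ℤ => ℂ) 2, U c = 0 → U (𝒯 c) = 0) ∧
       (∀ c : lp (fun _ : ℤ => ℂ) 2, U c = 0 → U (𝒯.symm c) = 0)) := by
  have happ : ∀ (a b : H ≃L[ℂ] H) (x : H), (a * b) x = a (b x) := fun _ _ _ => rfl
  have hTsc : ∀ (d : lp (fun _ : ℤ => ℂ) 2) (n : ℤ), (𝒯.symm d) n = d (n - 1) := by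
    intro d n
    have h := h𝒯 (𝒯.symm d) (n - 1)
    rw [𝒯.apply_symm_apply, sub_add_cancel] at h
    exact h.symm
  constructor
  · rintro ⟨T, hT⟩
    have hTpow : ∀ n : ℤ, T ((T ^ n) (f 0)) = (T ^ (n + 1)) (f 0) := by
      intro n
      rw [add_comm, zpow_one_add, happ]
    have hstep : ∀ n : ℤ, T (f n) = f (n + 1) := by
      intro n
      rw [hT n, hT (n + 1), hTpow]
    have hstep' : ∀ n : ℤ, T.symm (f n) = f (n - 1) := by
      intro n
      apply T.injective
      rw [T.apply_symm_apply, hstep (n - 1), sub_add_cancel]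
    constructor
    · intro c hc
      have h1 := hU c
      rw [hc] at h1
      have h2 := h1.mapL (T.symm : H →L[ℂ] H)
      simp only [map_smul, map_zero, ContinuousLinearEquiv.coe_coe] at h2
      simp only [hstep'] at h2
      have h3 := (Equiv.hasSum_iff (Equiv.addRight (1 : ℤ))).2 h2
      refine (hU (𝒯 c)).unique ?_
      have heq : (fun n : ℤ => (𝒯 c) n • f n) =
          ((fun n : ℤ => c n • f (n - 1)) ∘ (Equiv.addRight (1 : ℤ))) := by
        funext n
        simp [h𝒯, Function.comp, Equiv.coe_addRight]
      rw [heq]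
      exact h3
    · intro c hc
      have h1 := hU c
      rw [hc] at h1
      have h2 := h1.mapL (T : H →L[ℂ] H)
      simp only [map_smul, map_zero, ContinuousLinearEquiv.coe_coe] at h2
      simp only [hstep] at h2
      have h3 := (Equiv.hasSum_iff (Equiv.subRight (1 : ℤ))).2 h2
      refine (hU (𝒯.symm c)).unique ?_
      have heq : (fun n : ℤ => (𝒯.symm c) n • f n) =
          ((fun n : ℤ => c n • f (n + 1)) ∘ (Equiv.subRight (1 : ℤ))) := by
        funext n
        simp [hTsc, Function.comp, Equiv.subRight_apply, sub_add_cancel]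
      rw [heq]
      exact h3
  · rintro ⟨hk1, hk2⟩
    have hUsurj := synth_surj f A B hframe U hU
    obtain ⟨Wp, hWp⟩ := lift_CLM U hUsurj (U ∘L (𝒯.symm : lp (fun _ : ℤ => ℂ) 2 →L[ℂ] lp (fun _ : ℤ => ℂ) 2))
      (fun c hc => by simpa using hk2 c hc)
    obtain ⟨Wm, hWm⟩ := lift_CLM U hUsurj (U ∘L (𝒯 : lp (fun _ : ℤ => ℂ) 2 →L[ℂ] lp (fun _ : ℤ => ℂ) 2))
      (fun c hc => by simpa using hk1 c hc)
    simp only [ContinuousLinearMap.comp_apply, ContinuousLinearEquiv.coe_coe] at hWp hWm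
    have hinv1 : Function.LeftInverse Wm Wp := by
      intro x
      obtain ⟨c, rfl⟩ := hUsurj x
      rw [hWp, hWm, 𝒯.apply_symm_apply]
    have hinv2 : Function.RightInverse Wm Wp := by
      intro x
      obtain ⟨c, rfl⟩ := hUsurj x
      rw [hWm, hWp, 𝒯.symm_apply_apply]
    set T := ContinuousLinearEquiv.equivOfInverse Wp Wm hinv1 hinv2 with hTdef
    have hTapp : ∀ x : H, T x = Wp x := fun _ => rfl
    have hshift : ∀ n : ℤ, 𝒯.symm (lp.single 2 n (1:ℂ)) = lp.single 2 (n+1) 1 := by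
      intro n
      apply 𝒯.injective
      rw [𝒯.apply_symm_apply]
      apply lp.ext
      funext m
      rw [h𝒯]
      by_cases h : m = n
      · subst h
        rw [lp.single_apply_self, lp.single_apply_self]
      · rw [lp.single_apply_ne 2 n _ h,
          lp.single_apply_ne 2 (n + 1) _ (show m + 1 ≠ n + 1 by omega)]
    have hTf : ∀ n : ℤ, T (f n) = f (n + 1) := by
      intro n
      rw [hTapp, ← U_single f U hU n, hWp, hshift, U_single f U hU]
    refine ⟨T, ?_⟩
    have key : ∀ n : ℤ, (T ^ n) (f 0) = f n := by
      intro n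
      induction n using Int.induction_on with
      | zero => rfl
      | succ k ih =>
        have h : ((k : ℤ) + 1) = 1 + k := add_comm _ _
        rw [h, zpow_one_add, happ, ih, hTf, add_comm (k:ℤ) 1]
      | pred k ih =>
        apply T.injective
        have h1 : T ((T ^ (-(k:ℤ) - 1)) (f 0)) = (T ^ (-(k:ℤ))) (f 0) := by
          have h : (1 : ℤ) + (-(k:ℤ) - 1) = -(k:ℤ) := by ring
          rw [← happ, ← zpow_one_add, h]
        rw [h1, ih, hTf (-(k:ℤ) - 1), sub_add_cancel]
    exact fun n => (key n).symm
end
end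

section
/- Let T : H → H be an injective bounded linear operator and let (f_n)_{n∈ℤ} be a frame of H such that T f_n = f_{n+1} for all n ∈ ℤ. Then T is surjective (hence T ∈ GL(H)). -/
noncomputable section

open scoped InnerProductSpace

theorem stmt2 {H : Type} [NormedAddCommGroup H] [InnerProductSpace ℂ H]
    [CompleteSpace H] [TopologicalSpace.SeparableSpace H]
    (f : ℤ → H) (hframe : ∃ A B : ℝ, IsFrame f A B)
    (T : H →L[ℂ] H) (hinj : Function.Injective T)
    (hT : ∀ n : ℤ, T (f n) = f (n + 1)) :
    Function.Surjective T := by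
  obtain ⟨A, B, hA, hB, hf⟩ := hframe
  set Ts := ContinuousLinearMap.adjoint T with hTs
  -- key lower bound for the adjoint
  have key : ∀ x : H, A * ‖x‖ ^ 2 ≤ B * ‖Ts x‖ ^ 2 := by
    intro x
    obtain ⟨hsum, hlow, _⟩ := hf x
    obtain ⟨_, _, hup⟩ := hf (Ts x)
    have heq : ∀ n : ℤ, ‖(inner ℂ (Ts x) (f n) : ℂ)‖ ^ 2
        = ‖(inner ℂ x (f (n + 1)) : ℂ)‖ ^ 2 := by
      intro n
      rw [hTs, ContinuousLinearMap.adjoint_inner_left, hT]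
    have hshift : ∑' n : ℤ, ‖(inner ℂ x (f (n + 1)) : ℂ)‖ ^ 2
        = ∑' n : ℤ, ‖(inner ℂ x (f n) : ℂ)‖ ^ 2 :=
      (Equiv.addRight (1 : ℤ)).tsum_eq fun n => ‖(inner ℂ x (f n) : ℂ)‖ ^ 2
    calc A * ‖x‖ ^ 2 ≤ ∑' n : ℤ, ‖(inner ℂ x (f n) : ℂ)‖ ^ 2 := hlow
      _ = ∑' n : ℤ, ‖(inner ℂ (Ts x) (f n) : ℂ)‖ ^ 2 := by
          rw [← hshift]; exact (tsum_congr heq).symm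
      _ ≤ B * ‖Ts x‖ ^ 2 := hup
  set S := T.comp Ts with hScomp
  have hinnerS : ∀ x : H, (inner ℂ x (S x) : ℂ) = ((‖Ts x‖ ^ 2 : ℝ) : ℂ) := by
    intro x
    have h1 : (inner ℂ x (S x) : ℂ) = inner ℂ (Ts x) (Ts x) := by
      rw [hScomp, ContinuousLinearMap.comp_apply]
      rw [show T (Ts x) = T (Ts x) from rfl, hTs,
        ← ContinuousLinearMap.adjoint_inner_left]
    rw [h1, inner_self_eq_norm_sq_to_K]
    norm_cast
  have hSTs : ∀ x : H, ‖Ts x‖ ^ 2 ≤ ‖x‖ * ‖S x‖ := by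
    intro x
    have h2 : ‖((‖Ts x‖ ^ 2 : ℝ) : ℂ)‖ ≤ ‖x‖ * ‖S x‖ :=
      hinnerS x ▸ norm_inner_le_norm x (S x)
    rwa [Complex.norm_real, Real.norm_of_nonneg (sq_nonneg _)] at h2
  -- S is bounded below
  have hbelow : ∀ x : H, ‖x‖ ≤ (B / A) * ‖S x‖ := by
    intro x
    rcases eq_or_ne x 0 with rfl | hx
    · simp [div_nonneg hB.le hA.le]
    · have hxpos : 0 < ‖x‖ := norm_pos_iff.mpr hx
      have h2 : A * ‖x‖ ^ 2 ≤ B * (‖x‖ * ‖S x‖) :=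
        le_trans (key x) (mul_le_mul_of_nonneg_left (hSTs x) hB.le)
      have h3 : A * ‖x‖ ≤ B * ‖S x‖ := by nlinarith [sq_nonneg ‖x‖]
      rw [div_mul_eq_mul_div, le_div_iff₀ hA]
      nlinarith
  -- S has closed range
  have hanti : AntilipschitzWith (Real.toNNReal (B / A)) S :=
    S.antilipschitz_of_bound fun x => by
      calc ‖x‖ ≤ (B / A) * ‖S x‖ := hbelow x
        _ = (Real.toNNReal (B / A) : ℝ) * ‖S x‖ := by
            rw [Real.coe_toNNReal _ (div_nonneg hB.le hA.le)]
  have hclosed : IsClosed (Set.range S) :=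
    hanti.isClosed_range S.uniformContinuous
  have hclosed' : IsClosed ((LinearMap.range (S : H →ₗ[ℂ] H) : Submodule ℂ H) : Set H) := by
    have hset : ((LinearMap.range (S : H →ₗ[ℂ] H) : Submodule ℂ H) : Set H) = Set.range S := by
      ext y; simp [LinearMap.mem_range, Set.mem_range]
    rw [hset]; exact hclosed
  haveI : CompleteSpace (LinearMap.range (S : H →ₗ[ℂ] H)) := hclosed'.completeSpace_coe
  -- orthogonal complement of range S is trivial
  have horth : (LinearMap.range (S : H →ₗ[ℂ] H))ᗮ = ⊥ := by
    rw [Submodule.eq_bot_iff]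
    intro y hy
    have h0 : (inner ℂ (S y) y : ℂ) = 0 := hy (S y) (LinearMap.mem_range_self _ y)
    have h0' : (inner ℂ y (S y) : ℂ) = 0 := by
      rw [← inner_conj_symm, h0, map_zero]
    have h1 : ‖Ts y‖ ^ 2 = 0 := by
      have := (hinnerS y).symm.trans h0'
      exact_mod_cast this
    have h2 := key y
    rw [h1, mul_zero] at h2
    have h3 : ‖y‖ ^ 2 = 0 := le_antisymm (by nlinarith) (sq_nonneg _)
    exact norm_eq_zero.mp ((pow_eq_zero_iff two_ne_zero).mp h3)
  have htop : LinearMap.range (S : H →ₗ[ℂ] H) = ⊤ := Submodule.orthogonal_eq_bot_iff.mp horth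
  intro y
  have hy : y ∈ LinearMap.range (S : H →ₗ[ℂ] H) := htop ▸ Submodule.mem_top
  obtain ⟨x, hx⟩ := hy
  exact ⟨Ts x, hx⟩
end
end

section
/- If a frame (f_n)_{n∈ℤ} of a nontrivial Hilbert space H satisfies f_n = Tⁿ f_0 for all n ∈ ℤ for some T ∈ GL(H), then (f_n) is norm-bounded below: there exists m > 0 such that ‖f_n‖ ≥ m for all n ∈ ℤ. -/
noncomputable section

open scoped InnerProductSpace

theorem stmt3 {H : Type} [NormedAddCommGroup H] [InnerProductSpace ℂ H]
    [CompleteSpace H] [TopologicalSpace.SeparableSpace H] [Nontrivial H]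
    (f : ℤ → H) (hframe : ∃ A B : ℝ, IsFrame f A B)
    (T : H ≃L[ℂ] H) (hT : ∀ n : ℤ, f n = (T ^ n) (f 0)) :
    ∃ m : ℝ, 0 < m ∧ ∀ n : ℤ, m ≤ ‖f n‖ := by
  obtain ⟨A, B, hA, hB, hfr⟩ := hframe
  set S : ℤ → (H →L[ℂ] H) := fun n => ((T ^ n : H ≃L[ℂ] H) : H →L[ℂ] H) with hS
  have hshift : ∀ n k : ℤ, f (k + n) = S n (f k) := by
    intro n k
    rw [hT (k + n), hT k, add_comm, zpow_add]
    rfl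
  -- f 0 ≠ 0
  have hf0 : f 0 ≠ 0 := by
    intro h0
    obtain ⟨x, hx⟩ := exists_ne (0 : H)
    have h1 := (hfr x).2.1
    have hz : ∀ n : ℤ, f n = 0 := fun n => by rw [hT n, h0, map_zero]
    have hzero : ∑' n : ℤ, ‖(inner ℂ x (f n) : ℂ)‖ ^ 2 = 0 := by simp [hz]
    rw [hzero] at h1
    have := mul_pos hA (pow_pos (norm_pos_iff.mpr hx) 2)
    linarith
  -- key inequality
  have key : ∀ (n : ℤ) (y : H),
      A * ‖y‖ ^ 2 ≤ B * ‖ContinuousLinearMap.adjoint (S n) y‖ ^ 2 := by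
    intro n y
    have h1 := (hfr y).2.1
    have h2 := (hfr (ContinuousLinearMap.adjoint (S n) y)).2.2
    calc A * ‖y‖ ^ 2 ≤ ∑' k : ℤ, ‖(inner ℂ y (f k) : ℂ)‖ ^ 2 := h1
      _ = ∑' k : ℤ, ‖(inner ℂ y (f (k + n)) : ℂ)‖ ^ 2 :=
          ((Equiv.addRight n).tsum_eq (fun k => ‖(inner ℂ y (f k) : ℂ)‖ ^ 2)).symm
      _ = ∑' k : ℤ, ‖(inner ℂ (ContinuousLinearMap.adjoint (S n) y) (f k) : ℂ)‖ ^ 2 := by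
          refine tsum_congr fun k => ?_
          rw [hshift n k, ContinuousLinearMap.adjoint_inner_left]
      _ ≤ B * ‖ContinuousLinearMap.adjoint (S n) y‖ ^ 2 := h2
  -- adjoint inverse relation
  have hinv : ∀ (n : ℤ) (x : H),
      ContinuousLinearMap.adjoint (S n) (ContinuousLinearMap.adjoint (S (-n)) x) = x := by
    intro n x
    have hcomp : (S (-n)) ∘L (S n) = ContinuousLinearMap.id ℂ H := by
      ext z
      simp only [hS, ContinuousLinearMap.coe_comp', Function.comp_apply,
        ContinuousLinearEquiv.coe_coe, ContinuousLinearMap.id_apply]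
      have : (T ^ (-n)) ((T ^ n) z) = ((T ^ (-n)) * (T ^ n)) z := rfl
      rw [this, ← zpow_add]
      simp
      rfl
    have := congrArg (fun (M : H →L[ℂ] H) => ContinuousLinearMap.adjoint M x) hcomp
    simpa [ContinuousLinearMap.adjoint_comp, ContinuousLinearMap.adjoint_id] using this
  set c := Real.sqrt (B / A) with hc
  have hcpos : 0 < c := Real.sqrt_pos.mpr (div_pos hB hA)
  -- pointwise bound on adjoint (S (-n))
  have hbd : ∀ (n : ℤ) (x : H), ‖ContinuousLinearMap.adjoint (S (-n)) x‖ ≤ c * ‖x‖ := by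
    intro n x
    have h := key n (ContinuousLinearMap.adjoint (S (-n)) x)
    rw [hinv n x] at h
    set z := ContinuousLinearMap.adjoint (S (-n)) x
    have hz2 : ‖z‖ ^ 2 ≤ (B / A) * ‖x‖ ^ 2 := by
      rw [div_mul_eq_mul_div, le_div_iff₀ hA]
      nlinarith
    have := Real.sqrt_le_sqrt hz2
    rw [Real.sqrt_sq (norm_nonneg z), Real.sqrt_mul (le_of_lt (div_pos hB hA)),
      Real.sqrt_sq (norm_nonneg x)] at this
    exact this
  have hSnorm : ∀ n : ℤ, ‖S (-n)‖ ≤ c := by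
    intro n
    have h1 : ‖ContinuousLinearMap.adjoint (S (-n))‖ ≤ c :=
      ContinuousLinearMap.opNorm_le_bound _ (le_of_lt hcpos) (hbd n)
    have h2 : ‖ContinuousLinearMap.adjoint (S (-n))‖ = ‖S (-n)‖ :=
      LinearIsometryEquiv.norm_map ContinuousLinearMap.adjoint (S (-n))
    linarith
  refine ⟨‖f 0‖ / c, div_pos (norm_pos_iff.mpr hf0) hcpos, fun n => ?_⟩
  have hrel : f 0 = S (-n) (f n) := by
    have := hshift (-n) n
    simpa using this
  have hle : ‖f 0‖ ≤ c * ‖f n‖ := by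
    rw [hrel]
    calc ‖S (-n) (f n)‖ ≤ ‖S (-n)‖ * ‖f n‖ := ContinuousLinearMap.le_opNorm _ _
      _ ≤ c * ‖f n‖ := by gcongr; exact hSnorm n
  exact (div_le_iff₀ hcpos).mpr (by linarith)
end
end

section
/- If (f_n)_{n∈ℤ} is a tight frame of H and f_n = Tⁿ f_0 for all n ∈ ℤ with T ∈ GL(H), then T is unitary, i.e. ‖T x‖ = ‖x‖ for all x ∈ H (equivalently T* T = I and T T* = I). -/
noncomputable section

open scoped InnerProductSpace

/-- `f` is a tight frame of `H` with bound `A`. -/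
def IsTightFrame {H : Type} [NormedAddCommGroup H] [InnerProductSpace ℂ H] {I : Type}
    (f : I → H) (A : ℝ) : Prop :=
  0 < A ∧ ∀ x : H, HasSum (fun n : I => ‖(inner ℂ x (f n) : ℂ)‖ ^ 2) (A * ‖x‖ ^ 2)

theorem stmt4 {H : Type} [NormedAddCommGroup H] [InnerProductSpace ℂ H]
    [CompleteSpace H] [TopologicalSpace.SeparableSpace H]
    (f : ℤ → H) (A : ℝ) (hframe : IsTightFrame f A)
    (T : H ≃L[ℂ] H) (hT : ∀ n : ℤ, f n = (T ^ n) (f 0)) :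
    ∀ x : H, ‖T x‖ = ‖x‖ := by
  obtain ⟨hA, hsum⟩ := hframe
  set S : H →L[ℂ] H := ContinuousLinearMap.adjoint (T : H →L[ℂ] H) with hS
  have hTf : ∀ n : ℤ, T (f n) = f (n + 1) := by
    intro n
    rw [hT n, hT (n + 1), show n + 1 = 1 + n by ring, zpow_one_add]
    rfl
  have hiso : ∀ x : H, ‖S x‖ = ‖x‖ := by
    intro x
    have h1 : HasSum (fun n : ℤ => ‖(inner ℂ (S x) (f n) : ℂ)‖ ^ 2) (A * ‖S x‖ ^ 2) := hsum (S x)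
    have h2 : ∀ n : ℤ, ‖(inner ℂ (S x) (f n) : ℂ)‖ ^ 2 = ‖(inner ℂ x (f (n + 1)) : ℂ)‖ ^ 2 := by
      intro n
      rw [hS, ContinuousLinearMap.adjoint_inner_left]
      rw [show ((T : H →L[ℂ] H) (f n)) = T (f n) from rfl, hTf n]
    rw [funext h2] at h1
    have h3 : HasSum (fun n : ℤ => ‖(inner ℂ x (f (n + 1)) : ℂ)‖ ^ 2) (A * ‖x‖ ^ 2) := by
      have := (Equiv.addRight (1 : ℤ)).hasSum_iff.mpr (hsum x)
      exact this
    have h4 : A * ‖S x‖ ^ 2 = A * ‖x‖ ^ 2 := h1.unique h3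
    have h5 : ‖S x‖ ^ 2 = ‖x‖ ^ 2 := mul_left_cancel₀ hA.ne' h4
    nlinarith [norm_nonneg (S x), norm_nonneg x]
  have hinner : ∀ x y : H, (inner ℂ (S x) (S y) : ℂ) = inner ℂ x y :=
    fun x y => (⟨S.toLinearMap, hiso⟩ : H →ₗᵢ[ℂ] H).inner_map_map x y
  have hTS : ∀ y : H, T (S y) = y := by
    intro y
    apply ext_inner_left ℂ
    intro x
    have h := hinner x y
    rw [hS, ContinuousLinearMap.adjoint_inner_left] at h
    exact h
  intro x
  have hSx : S (T x) = x := T.injective (by rw [hTS (T x)])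
  calc ‖T x‖ = ‖S (T x)‖ := (hiso (T x)).symm
    _ = ‖x‖ := by rw [hSx]
end
end

section
/- Let (f_n)_{n∈ℤ} be a frame of H with f_n = Tⁿ f_0 for all n ∈ ℤ, where T ∈ GL(H). If T^s is a normal operator for some s ∈ ℤ (i.e. T^s commutes with its adjoint), then T^s is unitary. -/
noncomputable section

open scoped InnerProductSpace

lemma stmt5_nnnorm_pow_two_pow_of_comm {E : Type*} [NormedRing E] [StarRing E] [CStarRing E]
    {a : E} (h : Commute (star a) a) (k : ℕ) : ‖a ^ 2 ^ k‖₊ = ‖a‖₊ ^ 2 ^ k := by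
  have h1 := (IsSelfAdjoint.star_mul_self a).nnnorm_pow_two_pow k
  have h2 : ‖a ^ 2 ^ k‖₊ ^ 2 = (‖a‖₊ ^ 2 ^ k) ^ 2 := by
    rw [sq, ← CStarRing.nnnorm_star_mul_self (x := a ^ 2 ^ k), star_pow, ← h.mul_pow, h1,
      CStarRing.nnnorm_star_mul_self, ← sq, ← pow_mul, mul_comm 2 (2 ^ k), pow_mul]
  have := congrArg NNReal.sqrt h2
  rwa [NNReal.sqrt_sq, NNReal.sqrt_sq] at this

lemma stmt5_norm_le_one_of_bdd_pows {E : Type*} [NormedRing E] [StarRing E] [CStarRing E]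
    {a : E} (h : Commute (star a) a) {C : ℝ} (hC : ∀ k : ℕ, ‖a ^ k‖ ≤ C) : ‖a‖ ≤ 1 := by
  by_contra hlt
  push_neg at hlt
  obtain ⟨k, hk⟩ := pow_unbounded_of_one_lt C hlt
  have h1 : ‖a‖ ^ k ≤ ‖a‖ ^ 2 ^ k := pow_le_pow_right₀ hlt.le (Nat.lt_two_pow_self (n := k)).le
  have h2 : ‖a‖ ^ 2 ^ k = ‖a ^ 2 ^ k‖ := by
    have := congrArg NNReal.toReal (stmt5_nnnorm_pow_two_pow_of_comm h k).symm
    push_cast at this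
    exact this
  linarith [hC (2 ^ k)]

theorem stmt5 {H : Type} [NormedAddCommGroup H] [InnerProductSpace ℂ H]
    [CompleteSpace H] [TopologicalSpace.SeparableSpace H]
    (f : ℤ → H) (hframe : ∃ A B : ℝ, IsFrame f A B)
    (T : H ≃L[ℂ] H) (hT : ∀ n : ℤ, f n = (T ^ n) (f 0))
    (s : ℤ)
    (hnormal : IsStarNormal (((T ^ s : H ≃L[ℂ] H) : H →L[ℂ] H))) :
    ((T ^ s : H ≃L[ℂ] H) : H →L[ℂ] H) ∈ unitary (H →L[ℂ] H) := by
  obtain ⟨A, B, hA, hB, hf⟩ := hframe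
  set C : ℝ := Real.sqrt (B / A) with hCdef
  -- pointwise bound for adjoints of all integer powers of T
  have key : ∀ (m : ℤ) (x : H),
      ‖ContinuousLinearMap.adjoint ((T ^ m : H ≃L[ℂ] H) : H →L[ℂ] H) x‖ ≤ C * ‖x‖ := by
    intro m x
    set y := ContinuousLinearMap.adjoint ((T ^ m : H ≃L[ℂ] H) : H →L[ℂ] H) x with hy
    have hshift : ∀ n : ℤ, (inner ℂ y (f n) : ℂ) = inner ℂ x (f (n + m)) := by
      intro n
      rw [hy, ContinuousLinearMap.adjoint_inner_left]
      congr 1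
      rw [hT n, hT (n + m), add_comm n m, zpow_add]
      rfl
    have hsum : (∑' n : ℤ, ‖(inner ℂ y (f n) : ℂ)‖ ^ 2) = ∑' n : ℤ, ‖(inner ℂ x (f n) : ℂ)‖ ^ 2 := by
      calc (∑' n : ℤ, ‖(inner ℂ y (f n) : ℂ)‖ ^ 2)
          = ∑' n : ℤ, ‖(inner ℂ x (f (n + m)) : ℂ)‖ ^ 2 :=
            tsum_congr fun n => by rw [hshift n]
        _ = ∑' n : ℤ, ‖(inner ℂ x (f n) : ℂ)‖ ^ 2 :=
            (Equiv.addRight m).tsum_eq (fun n => ‖(inner ℂ x (f n) : ℂ)‖ ^ 2)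
    have h1 := (hf y).2.1
    have h2 := (hf x).2.2
    rw [hsum] at h1
    have hsq : ‖y‖ ^ 2 ≤ (C * ‖x‖) ^ 2 := by
      rw [hCdef, mul_pow, Real.sq_sqrt (by positivity)]
      rw [div_mul_eq_mul_div, le_div_iff₀ hA, mul_comm]
      linarith
    calc ‖y‖ = Real.sqrt (‖y‖ ^ 2) := (Real.sqrt_sq (norm_nonneg y)).symm
      _ ≤ Real.sqrt ((C * ‖x‖) ^ 2) := Real.sqrt_le_sqrt hsq
      _ = C * ‖x‖ := Real.sqrt_sq (by positivity)
  have hC0 : 0 ≤ C := Real.sqrt_nonneg _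
  have opbd : ∀ m : ℤ,
      ‖ContinuousLinearMap.adjoint ((T ^ m : H ≃L[ℂ] H) : H →L[ℂ] H)‖ ≤ C := fun m =>
    ContinuousLinearMap.opNorm_le_bound _ hC0 (key m)
  -- powers of adjoints
  have hpow : ∀ (m : ℤ) (k : ℕ),
      (ContinuousLinearMap.adjoint ((T ^ m : H ≃L[ℂ] H) : H →L[ℂ] H)) ^ k
        = ContinuousLinearMap.adjoint ((T ^ (m * k) : H ≃L[ℂ] H) : H →L[ℂ] H) := by
    intro m k
    induction k with
    | zero =>
      simp only [Nat.cast_zero, mul_zero, zpow_zero, pow_zero]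
      rw [show ((1 : H ≃L[ℂ] H) : H →L[ℂ] H) = ContinuousLinearMap.id ℂ H from rfl,
        ContinuousLinearMap.adjoint_id]
      rfl
    | succ k ih =>
      rw [pow_succ, ih]
      have hcomp : ((T ^ m : H ≃L[ℂ] H) : H →L[ℂ] H) ∘L ((T ^ (m * k) : H ≃L[ℂ] H) : H →L[ℂ] H)
          = ((T ^ (m * (k + 1 : ℕ)) : H ≃L[ℂ] H) : H →L[ℂ] H) := by
        ext x
        have : (m * (k + 1 : ℕ) : ℤ) = m + m * k := by push_cast; ring
        rw [this, zpow_add]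
        rfl
      rw [← hcomp, ContinuousLinearMap.adjoint_comp]
      rfl
  set R : H →L[ℂ] H := ((T ^ s : H ≃L[ℂ] H) : H →L[ℂ] H) with hRdef
  set Q : H →L[ℂ] H := ((T ^ (-s) : H ≃L[ℂ] H) : H →L[ℂ] H) with hQdef
  have hsR : star R = ContinuousLinearMap.adjoint R := ContinuousLinearMap.star_eq_adjoint R
  have hsQ : star Q = ContinuousLinearMap.adjoint Q := ContinuousLinearMap.star_eq_adjoint Q
  -- power bounds
  have hRk : ∀ k : ℕ, ‖R ^ k‖ ≤ C := by
    intro k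
    have : ‖R ^ k‖ = ‖(star R) ^ k‖ := by rw [← star_pow, norm_star]
    rw [this, hsR, hRdef, hpow s k]
    exact opbd _
  have hQk : ∀ k : ℕ, ‖Q ^ k‖ ≤ C := by
    intro k
    have : ‖Q ^ k‖ = ‖(star Q) ^ k‖ := by rw [← star_pow, norm_star]
    rw [this, hsQ, hQdef, hpow (-s) k]
    exact opbd _
  -- inverse relations
  have hQR : Q * R = 1 := by
    ext x
    show (T ^ (-s)) ((T ^ s) x) = x
    rw [show (T ^ (-s)) ((T ^ s) x) = (T ^ (-s) * T ^ s) x from rfl, ← zpow_add, neg_add_cancel]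
    rfl
  have hRQ : R * Q = 1 := by
    ext x
    show (T ^ s) ((T ^ (-s)) x) = x
    rw [show (T ^ s) ((T ^ (-s)) x) = (T ^ s * T ^ (-s)) x from rfl, ← zpow_add, add_neg_cancel]
    rfl
  have hnR : Commute (star R) R := hnormal.star_comm_self
  have hsQsR : star R * star Q = 1 := by rw [← star_mul, hQR, star_one]
  have hsRsQ : star Q * star R = 1 := by rw [← star_mul, hRQ, star_one]
  -- Q is normal
  have hnQ : Commute (star Q) Q := by
    have e1 : (star Q * Q) * (R * star R) = 1 := by
      rw [mul_assoc, ← mul_assoc Q R, hQR, one_mul, hsRsQ]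
    have e2 : (R * star R) * (Q * star Q) = 1 := by
      rw [← hnR.eq, mul_assoc, ← mul_assoc R Q, hRQ, one_mul, hsQsR]
    exact left_inv_eq_right_inv e1 e2
  have hRle : ‖R‖ ≤ 1 := stmt5_norm_le_one_of_bdd_pows hnR hRk
  have hQle : ‖Q‖ ≤ 1 := stmt5_norm_le_one_of_bdd_pows hnQ hQk
  -- R is an isometry
  have hiso : ∀ x : H, ‖R x‖ = ‖x‖ := by
    intro x
    refine le_antisymm ?_ ?_
    · calc ‖R x‖ ≤ ‖R‖ * ‖x‖ := R.le_opNorm x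
        _ ≤ 1 * ‖x‖ := by gcongr
        _ = ‖x‖ := one_mul _
    · have hq : Q (R x) = x := by
        rw [← ContinuousLinearMap.mul_apply, hQR, ContinuousLinearMap.one_apply]
      calc ‖x‖ = ‖Q (R x)‖ := by rw [hq]
        _ ≤ ‖Q‖ * ‖R x‖ := Q.le_opNorm _
        _ ≤ 1 * ‖R x‖ := by gcongr
        _ = ‖R x‖ := one_mul _
  have hadj : ContinuousLinearMap.adjoint R ∘L R = 1 :=
    (ContinuousLinearMap.norm_map_iff_adjoint_comp_self R).mp hiso
  have h1 : star R * R = 1 := by rw [hsR]; exact hadj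
  have h2 : R * star R = 1 := by rw [← hnR.eq]; exact h1
  exact ⟨h1, h2⟩
end
end

section
/- Let (f_n)_{n∈ℤ} be a frame of H such that the map n ↦ f_n is injective and f_n = Tⁿ f_0 for all n ∈ ℤ, where T ∈ GL(H). Then T is not self-adjoint: T ≠ T*. -/
noncomputable section

open scoped InnerProductSpace

open Filter

theorem sa_zpow' {H : Type} [NormedAddCommGroup H] [InnerProductSpace ℂ H]
    (T : H ≃L[ℂ] H) (h : ∀ x y : H, ⟪T x, y⟫_ℂ = ⟪x, T y⟫_ℂ) (n : ℤ) :
    ∀ x y : H, ⟪(T ^ n) x, y⟫_ℂ = ⟪x, (T ^ n) y⟫_ℂ := by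
  have hinv : ∀ x y : H, ⟪T.symm x, y⟫_ℂ = ⟪x, T.symm y⟫_ℂ := by
    intro x y
    calc ⟪T.symm x, y⟫_ℂ = ⟪T.symm x, T (T.symm y)⟫_ℂ := by rw [T.apply_symm_apply]
    _ = ⟪T (T.symm x), T.symm y⟫_ℂ := (h _ _).symm
    _ = ⟪x, T.symm y⟫_ℂ := by rw [T.apply_symm_apply]
  induction n using Int.induction_on with
  | zero => intro x y; rw [show ((T ^ (0:ℤ)) : H ≃L[ℂ] H) = 1 from zpow_zero T]; rfl
  | succ k ih =>
    intro x y
    have e1 : ∀ z : H, (T ^ ((k : ℤ) + 1)) z = (T ^ (k : ℤ)) (T z) := by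
      intro z; rw [zpow_add_one]; rfl
    have e2 : ∀ z : H, (T ^ ((k : ℤ) + 1)) z = T ((T ^ (k : ℤ)) z) := by
      intro z; rw [add_comm, zpow_one_add]; rfl
    calc ⟪(T ^ ((k : ℤ) + 1)) x, y⟫_ℂ = ⟪(T ^ (k : ℤ)) (T x), y⟫_ℂ := by rw [e1]
    _ = ⟪T x, (T ^ (k : ℤ)) y⟫_ℂ := ih _ _
    _ = ⟪x, T ((T ^ (k : ℤ)) y)⟫_ℂ := h _ _
    _ = ⟪x, (T ^ ((k : ℤ) + 1)) y⟫_ℂ := by rw [← e2]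
  | pred k ih =>
    intro x y
    have e1 : ∀ z : H, (T ^ (-(k : ℤ) - 1)) z = (T ^ (-(k : ℤ))) (T.symm z) := by
      intro z; rw [zpow_sub_one]; rfl
    have e2 : ∀ z : H, (T ^ (-(k : ℤ) - 1)) z = T.symm ((T ^ (-(k : ℤ))) z) := by
      intro z
      have e : -(k : ℤ) - 1 = -1 + -(k : ℤ) := by ring
      rw [e, zpow_add, zpow_neg_one]; rfl
    calc ⟪(T ^ (-(k : ℤ) - 1)) x, y⟫_ℂ = ⟪(T ^ (-(k : ℤ))) (T.symm x), y⟫_ℂ := by rw [e1]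
    _ = ⟪T.symm x, (T ^ (-(k : ℤ))) y⟫_ℂ := ih _ _
    _ = ⟪x, T.symm ((T ^ (-(k : ℤ))) y)⟫_ℂ := hinv _ _
    _ = ⟪x, (T ^ (-(k : ℤ) - 1)) y⟫_ℂ := by rw [← e2]

theorem stmt6 {H : Type} [NormedAddCommGroup H] [InnerProductSpace ℂ H]
    [CompleteSpace H] [TopologicalSpace.SeparableSpace H]
    (f : ℤ → H) (hframe : ∃ A B : ℝ, IsFrame f A B)
    (hinj : Function.Injective f)
    (T : H ≃L[ℂ] H) (hT : ∀ n : ℤ, f n = (T ^ n) (f 0)) :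
    (T : H →L[ℂ] H) ≠ ContinuousLinearMap.adjoint (T : H →L[ℂ] H) := by
  intro hadj
  obtain ⟨A, B, hA, hB, hf⟩ := hframe
  -- T is self-adjoint as a bilinear identity
  have hsa : ∀ x y : H, ⟪T x, y⟫_ℂ = ⟪x, T y⟫_ℂ := by
    intro x y
    have := ContinuousLinearMap.adjoint_inner_left (𝕜 := ℂ) (T : H →L[ℂ] H) y x
    rw [← hadj] at this
    simpa using this
  have hsaz := sa_zpow' T hsa
  set c : ℤ → ℂ := fun k => ⟪f 0, (T ^ k) (f 0)⟫_ℂ with hc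
  -- Gram identity
  have key : ∀ m n : ℤ, ⟪f m, f n⟫_ℂ = c (m + n) := by
    intro m n
    rw [hT m, hT n, hsaz m]
    have : (T ^ m) ((T ^ n) (f 0)) = (T ^ (m + n)) (f 0) := by
      rw [zpow_add]; rfl
    rw [this]
  set d : ℤ → ℂ := fun k => c (k + 2) - c k with hd
  -- summability of ‖c‖²
  have hsum0 : Summable (fun k : ℤ => ‖c k‖ ^ 2) := by
    have := (hf (f 0)).1
    simpa [key, zero_add] using this
  -- c tends to 0 cofinitely
  have htendsq := hsum0.tendsto_cofinite_zero
  have htendn : Tendsto (fun k => ‖c k‖) cofinite (nhds 0) := by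
    have hcont := (Real.continuous_sqrt.tendsto' 0 0 (by simp)).comp htendsq
    have : (fun k => Real.sqrt (‖c k‖ ^ 2)) = fun k => ‖c k‖ := by
      funext k; rw [Real.sqrt_sq (norm_nonneg _)]
    rwa [Function.comp_def, this] at hcont
  have htend : Tendsto c cofinite (nhds 0) := by
    rwa [tendsto_zero_iff_norm_tendsto_zero]
  -- inner product of x_j with frame elements
  have hx : ∀ j n : ℤ, ⟪f (j + 1) - f (j - 1), f n⟫_ℂ = d (j - 1 + n) := by
    intro j n
    rw [inner_sub_left, key, key, hd]
    simp only
    congr 2 <;> ring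
  -- summability of ‖d‖²
  have hdsum : Summable (fun k : ℤ => ‖d k‖ ^ 2) := by
    have h1 := (hf (f (1 + 1) - f (1 - 1))).1
    have e : ∀ n : ℤ, (1:ℤ) - 1 + n = n := fun n => by ring
    simp only [hx, e] at h1
    exact h1
  set C : ℝ := ∑' k : ℤ, ‖d k‖ ^ 2 with hC
  -- frame upper bound for x_j, with reindexed sum
  have hCle : ∀ j : ℤ, C ≤ B * ‖f (j + 1) - f (j - 1)‖ ^ 2 := by
    intro j
    have h1 := (hf (f (j + 1) - f (j - 1))).2.2
    have h2 : (∑' n : ℤ, ‖⟪f (j + 1) - f (j - 1), f n⟫_ℂ‖ ^ 2)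
        = ∑' k : ℤ, ‖d k‖ ^ 2 := by
      have := (Equiv.addLeft (j - 1)).tsum_eq (fun k => ‖d k‖ ^ 2)
      rw [← this]
      congr 1; funext n
      rw [hx j n]; rfl
    rw [h2] at h1
    exact h1
  -- norm bound on x_j
  have hnorm : ∀ j : ℤ, ‖f (j + 1) - f (j - 1)‖ ^ 2
      ≤ ‖c (2 * j + 2)‖ + 2 * ‖c (2 * j)‖ + ‖c (2 * j - 2)‖ := by
    intro j
    set x := f (j + 1) - f (j - 1)
    have e : ⟪x, x⟫_ℂ = c (2 * j + 2) - c (2 * j) - (c (2 * j) - c (2 * j - 2)) := by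
      simp only [x, inner_sub_left, inner_sub_right, key]
      have e1 : j + 1 + (j + 1) = 2 * j + 2 := by ring
      have e2 : j - 1 + (j + 1) = 2 * j := by ring
      have e3 : j + 1 + (j - 1) = 2 * j := by ring
      have e4 : j - 1 + (j - 1) = 2 * j - 2 := by ring
      rw [e1, e2, e3, e4]
    have h1 : ‖x‖ ^ 2 = RCLike.re ⟪x, x⟫_ℂ := (inner_self_eq_norm_sq (𝕜 := ℂ) x).symm
    have h2 : RCLike.re ⟪x, x⟫_ℂ ≤ ‖⟪x, x⟫_ℂ‖ := RCLike.re_le_norm _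
    have h3 : ‖⟪x, x⟫_ℂ‖ ≤ ‖c (2 * j + 2)‖ + 2 * ‖c (2 * j)‖ + ‖c (2 * j - 2)‖ := by
      rw [e]
      calc ‖c (2 * j + 2) - c (2 * j) - (c (2 * j) - c (2 * j - 2))‖
          ≤ ‖c (2 * j + 2) - c (2 * j)‖ + ‖c (2 * j) - c (2 * j - 2)‖ := norm_sub_le _ _
        _ ≤ (‖c (2 * j + 2)‖ + ‖c (2 * j)‖) + (‖c (2 * j)‖ + ‖c (2 * j - 2)‖) :=
            add_le_add (norm_sub_le _ _) (norm_sub_le _ _)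
        _ = ‖c (2 * j + 2)‖ + 2 * ‖c (2 * j)‖ + ‖c (2 * j - 2)‖ := by ring
    linarith [h1 ▸ h2]
  -- the bound tends to 0
  have hψ : Tendsto (fun j : ℤ => B * (‖c (2 * j + 2)‖ + 2 * ‖c (2 * j)‖ + ‖c (2 * j - 2)‖))
      cofinite (nhds 0) := by
    have i1 : Function.Injective (fun j : ℤ => 2 * j + 2) := fun a b hab => by dsimp only at hab; omega
    have i2 : Function.Injective (fun j : ℤ => 2 * j) := fun a b hab => by dsimp only at hab; omega
    have i3 : Function.Injective (fun j : ℤ => 2 * j - 2) := fun a b hab => by dsimp only at hab; omega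
    have t1 := htendn.comp i1.tendsto_cofinite
    have t2 := htendn.comp i2.tendsto_cofinite
    have t3 := htendn.comp i3.tendsto_cofinite
    have := ((t1.add (t2.const_mul 2)).add t3).const_mul B
    simpa [Function.comp_def, mul_comm] using this
  have hC0 : C ≤ 0 := by
    refine ge_of_tendsto' hψ ?_
    intro j
    calc C ≤ B * ‖f (j + 1) - f (j - 1)‖ ^ 2 := hCle j
      _ ≤ B * (‖c (2 * j + 2)‖ + 2 * ‖c (2 * j)‖ + ‖c (2 * j - 2)‖) :=
        mul_le_mul_of_nonneg_left (hnorm j) hB.le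
  -- every term of C is zero, giving 2-periodicity
  have per : ∀ k : ℤ, c (k + 2) = c k := by
    intro k
    have hle : ‖d k‖ ^ 2 ≤ C := Summable.le_tsum hdsum k (fun i _ => by positivity)
    have : ‖d k‖ ^ 2 = 0 := le_antisymm (hle.trans hC0) (by positivity)
    have : d k = 0 := by
      simpa using (pow_eq_zero_iff (two_ne_zero)).mp (by simpa using this)
    exact sub_eq_zero.mp this
  -- c is identically zero
  have czero : ∀ k : ℤ, c k = 0 := by
    intro k
    have hconst : ∀ m : ℤ, c (k + 2 * m) = c k := by
      intro m
      induction m using Int.induction_on with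
      | zero => simp
      | succ i ih =>
        have e : k + 2 * ((i : ℤ) + 1) = (k + 2 * i) + 2 := by ring
        rw [e, per, ih]
      | pred i ih =>
        have e : k + 2 * (-(i : ℤ)) = (k + 2 * (-(i : ℤ) - 1)) + 2 := by ring
        rw [e, per] at ih
        rw [ih]
    have iinj : Function.Injective (fun m : ℤ => k + 2 * m) := fun a b hab => by dsimp only at hab; omega
    have t := htend.comp iinj.tendsto_cofinite
    have : Tendsto (fun _ : ℤ => c k) cofinite (nhds 0) := by
      have e : (c ∘ fun m : ℤ => k + 2 * m) = fun _ : ℤ => c k := by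
        funext m; exact hconst m
      rwa [e] at t
    exact tendsto_nhds_unique tendsto_const_nhds this
  -- conclude f 0 = 0
  have hf0 : f 0 = 0 := by
    have h0 : c 0 = ⟪f 0, f 0⟫_ℂ := by
      rw [hc]; simp only
      rw [show ((T ^ (0:ℤ)) : H ≃L[ℂ] H) = 1 from zpow_zero T]; rfl
    have := czero 0
    rw [h0] at this
    exact inner_self_eq_zero.mp this
  have hf1 : f 1 = 0 := by
    rw [hT 1, hf0, map_zero]
  exact absurd (hinj (hf1.trans hf0.symm)) one_ne_zero
end
end

section
/- A linearly independent frame (f_n)_{n∈ℤ} of H is generated over ℤ by a unitary operator (i.e. there exists a unitary T on H with f_n = Tⁿ f_0 for all n ∈ ℤ) if and only if ⟨f_i, f_j⟩ = ⟨f_{i+1}, f_{j+1}⟩ for all i, j ∈ ℤ. -/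
noncomputable section

open scoped InnerProductSpace

theorem stmt7 {H : Type} [NormedAddCommGroup H] [InnerProductSpace ℂ H]
    [CompleteSpace H] [TopologicalSpace.SeparableSpace H]
    (f : ℤ → H) (hframe : ∃ A B : ℝ, IsFrame f A B)
    (hli : LinearIndependent ℂ f) :
    (∃ T : H ≃ₗᵢ[ℂ] H, ∀ n : ℤ, f n = (T ^ n) (f 0)) ↔
      ∀ i j : ℤ, (inner ℂ (f i) (f j) : ℂ) = inner ℂ (f (i + 1)) (f (j + 1)) := by
  classical
  constructor
  · rintro ⟨T, hT⟩ i j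
    have hsucc : ∀ m : ℤ, f (m + 1) = T (f m) := by
      intro m
      rw [hT (m + 1), hT m, add_comm m 1, zpow_add, zpow_one,
        LinearIsometryEquiv.coe_mul, Function.comp_apply]
    rw [hsucc i, hsucc j, LinearIsometryEquiv.inner_map_map]
  · intro hinner
    set V : Submodule ℂ H := Submodule.span ℂ (Set.range f) with hV
    have hmem : ∀ n : ℤ, f n ∈ V := fun n => Submodule.subset_span ⟨n, rfl⟩
    -- density of V
    have hVtop : V.topologicalClosure = ⊤ := by
      rw [Submodule.topologicalClosure_eq_top_iff, Submodule.eq_bot_iff]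
      intro x hx
      obtain ⟨A, B, hA, hB, hfr⟩ := hframe
      have hx0 : ∀ n : ℤ, (inner ℂ x (f n) : ℂ) = 0 := by
        intro n
        have h := (Submodule.mem_orthogonal V x).mp hx (f n) (hmem n)
        exact inner_eq_zero_symm.mp h
      have hsum : (∑' n : ℤ, ‖(inner ℂ x (f n) : ℂ)‖ ^ 2) = 0 := by
        have he : (fun n : ℤ => ‖(inner ℂ x (f n) : ℂ)‖ ^ 2) = fun _ => 0 := by
          funext n; rw [hx0 n]; simp
        rw [he, tsum_zero]
      have h1 := (hfr x).2.1
      rw [hsum] at h1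
      have hx2 : ‖x‖ ^ 2 ≤ 0 := le_of_mul_le_mul_left (by rwa [mul_zero]) hA
      have hx3 : ‖x‖ ^ 2 = 0 := le_antisymm hx2 (sq_nonneg _)
      have hx4 : ‖x‖ = 0 := (pow_eq_zero_iff (by norm_num : (2:ℕ) ≠ 0)).mp hx3
      exact norm_eq_zero.mp hx4
    have hVdense : Dense (V : Set H) :=
      Submodule.dense_iff_topologicalClosure_eq_top.mpr hVtop
    -- basis of V
    let b : Module.Basis ℤ ℂ V := Module.Basis.span hli
    have hb : ∀ n : ℤ, b n = (⟨f n, hmem n⟩ : V) :=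
      fun n => Module.Basis.span_apply hli n
    let Lc : V →ₗ[ℂ] V := b.constr ℂ (fun n => (⟨f (n + 1), hmem (n + 1)⟩ : V))
    let Lc' : V →ₗ[ℂ] V := b.constr ℂ (fun n => (⟨f (n - 1), hmem (n - 1)⟩ : V))
    have hLcb : ∀ n : ℤ, Lc (b n) = ⟨f (n + 1), hmem (n + 1)⟩ :=
      fun n => b.constr_basis ℂ _ n
    have hLcb' : ∀ n : ℤ, Lc' (b n) = ⟨f (n - 1), hmem (n - 1)⟩ :=
      fun n => b.constr_basis ℂ _ n
    -- inner ℂ products preserved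
    have keymap : ∀ (L : V →ₗ[ℂ] V), (∀ i j : ℤ,
        (inner ℂ ((L (b i) : V) : H) ((L (b j) : V) : H) : ℂ) = inner ℂ (f i) (f j)) →
        ∀ x y : V, (inner ℂ ((L x : V) : H) ((L y : V) : H) : ℂ) = inner ℂ (x : H) (y : H) := by
      intro L hLb x y
      have heq : (((innerₛₗ ℂ).comp (V.subtype.comp L)).compl₂ (V.subtype.comp L)) =
          (((innerₛₗ ℂ).comp V.subtype).compl₂ V.subtype) := by
        apply b.ext; intro i; apply b.ext; intro j
        simp only [LinearMap.compl₂_apply, LinearMap.comp_apply, innerₛₗ_apply_apply,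
          Submodule.subtype_apply]
        rw [hLb i j, hb i, hb j]
      have := LinearMap.congr_fun (LinearMap.congr_fun heq x) y
      simpa only [LinearMap.compl₂_apply, LinearMap.comp_apply, innerₛₗ_apply_apply,
        Submodule.subtype_apply] using this
    have keyL : ∀ x y : V, (inner ℂ ((Lc x : V) : H) ((Lc y : V) : H) : ℂ) =
        inner ℂ (x : H) (y : H) := by
      apply keymap
      intro i j
      rw [hLcb i, hLcb j]
      exact (hinner i j).symm
    have keyL' : ∀ x y : V, (inner ℂ ((Lc' x : V) : H) ((Lc' y : V) : H) : ℂ) =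
        inner ℂ (x : H) (y : H) := by
      apply keymap
      intro i j
      rw [hLcb' i, hLcb' j]
      simpa using hinner (i - 1) (j - 1)
    -- isometries V → H
    let L : V →ₗ[ℂ] H := V.subtype.comp Lc
    let L' : V →ₗ[ℂ] H := V.subtype.comp Lc'
    have hLinner : ∀ x y : V, (inner ℂ (L x) (L y) : ℂ) = inner ℂ x y := by
      intro x y
      rw [Submodule.coe_inner]
      exact keyL x y
    have hLinner' : ∀ x y : V, (inner ℂ (L' x) (L' y) : ℂ) = inner ℂ x y := by
      intro x y
      rw [Submodule.coe_inner]
      exact keyL' x y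
    let Li : V →ₗᵢ[ℂ] H := L.isometryOfInner hLinner
    let Li' : V →ₗᵢ[ℂ] H := L'.isometryOfInner hLinner'
    -- extension along the dense inclusion
    let e : V →L[ℂ] H := V.subtypeL
    have h_dense : DenseRange e := hVdense.denseRange_val
    have h_e : IsUniformInducing e := isometry_subtype_coe.isUniformInducing
    let T0 : H →L[ℂ] H := ContinuousLinearMap.extend Li.toContinuousLinearMap e
    let T1 : H →L[ℂ] H := ContinuousLinearMap.extend Li'.toContinuousLinearMap e
    have hT0 : ∀ x : V, T0 (x : H) = L x := fun x =>
      ContinuousLinearMap.extend_eq Li.toContinuousLinearMap h_dense h_e x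
    have hT1 : ∀ x : V, T1 (x : H) = L' x := fun x =>
      ContinuousLinearMap.extend_eq Li'.toContinuousLinearMap h_dense h_e x
    -- Lc' ∘ Lc = id and Lc ∘ Lc' = id
    have hcomp1 : Lc'.comp Lc = LinearMap.id := by
      apply b.ext; intro n
      rw [LinearMap.comp_apply, hLcb n, ← hb (n + 1), hLcb' (n + 1), LinearMap.id_apply, hb n]
      simp
    have hcomp2 : Lc.comp Lc' = LinearMap.id := by
      apply b.ext; intro n
      rw [LinearMap.comp_apply, hLcb' n, ← hb (n - 1), hLcb (n - 1), LinearMap.id_apply, hb n]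
      simp
    -- compositions of extensions are the identity
    have hTT1 : ∀ x : H, T1 (T0 x) = x := by
      have : Set.EqOn (fun x => T1 (T0 x)) id (V : Set H) := by
        intro x hx
        have h1 : T0 x = L ⟨x, hx⟩ := hT0 ⟨x, hx⟩
        have h2 : (L ⟨x, hx⟩ : H) = ((Lc ⟨x, hx⟩ : V) : H) := rfl
        simp only [id_eq]
        rw [h1, h2, hT1 (Lc ⟨x, hx⟩)]
        have h3 : Lc' (Lc ⟨x, hx⟩) = ⟨x, hx⟩ := by
          have := LinearMap.congr_fun hcomp1 ⟨x, hx⟩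
          simpa using this
        show ((Lc' (Lc ⟨x, hx⟩) : V) : H) = x
        rw [h3]
      intro x
      have := Set.EqOn.closure this (T1.continuous.comp T0.continuous) continuous_id
      have hx : x ∈ closure (V : Set H) := hVdense x
      exact this hx
    have hTT2 : ∀ x : H, T0 (T1 x) = x := by
      have : Set.EqOn (fun x => T0 (T1 x)) id (V : Set H) := by
        intro x hx
        have h1 : T1 x = L' ⟨x, hx⟩ := hT1 ⟨x, hx⟩
        have h2 : (L' ⟨x, hx⟩ : H) = ((Lc' ⟨x, hx⟩ : V) : H) := rfl
        simp only [id_eq]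
        rw [h1, h2, hT0 (Lc' ⟨x, hx⟩)]
        have h3 : Lc (Lc' ⟨x, hx⟩) = ⟨x, hx⟩ := by
          have := LinearMap.congr_fun hcomp2 ⟨x, hx⟩
          simpa using this
        show ((Lc (Lc' ⟨x, hx⟩) : V) : H) = x
        rw [h3]
      intro x
      have := Set.EqOn.closure this (T0.continuous.comp T1.continuous) continuous_id
      have hx : x ∈ closure (V : Set H) := hVdense x
      exact this hx
    -- T0 is norm preserving
    have hT0norm : ∀ x : H, ‖T0 x‖ = ‖x‖ := by
      have : Set.EqOn (fun x => ‖T0 x‖) (fun x => ‖x‖) (V : Set H) := by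
        intro x hx
        simp only
        rw [hT0 ⟨x, hx⟩]
        exact Li.norm_map ⟨x, hx⟩
      intro x
      have hcl := Set.EqOn.closure this (continuous_norm.comp T0.continuous) continuous_norm
      have hx : x ∈ closure (V : Set H) := hVdense x
      exact hcl hx
    -- assemble the unitary
    let Teq : H ≃ₗ[ℂ] H :=
      { toFun := T0
        map_add' := T0.map_add
        map_smul' := T0.map_smul
        invFun := T1
        left_inv := hTT1
        right_inv := hTT2 }
    let T : H ≃ₗᵢ[ℂ] H := ⟨Teq, hT0norm⟩
    have hTf : ∀ n : ℤ, T (f n) = f (n + 1) := by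
      intro n
      show T0 (f n) = f (n + 1)
      have h1 : T0 (f n) = L ⟨f n, hmem n⟩ := hT0 ⟨f n, hmem n⟩
      rw [h1]
      show ((Lc ⟨f n, hmem n⟩ : V) : H) = f (n + 1)
      rw [← hb n, hLcb n]
    refine ⟨T, ?_⟩
    have hstep : ∀ m : ℤ, (T ^ (m + 1)) (f 0) = T ((T ^ m) (f 0)) := by
      intro m
      rw [add_comm m 1, zpow_add, zpow_one, LinearIsometryEquiv.coe_mul, Function.comp_apply]
    intro n
    induction n using Int.induction_on with
    | zero => simp
    | succ k ih =>
      rw [hstep k, ← ih, hTf k]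
    | pred k ih =>
      have h1 : (T ^ (-(k : ℤ) - 1 + 1)) (f 0) = T ((T ^ (-(k : ℤ) - 1)) (f 0)) :=
        hstep (-(k : ℤ) - 1)
      rw [sub_add_cancel, ← ih] at h1
      have h2 : T (f (-(k : ℤ) - 1)) = f (-(k : ℤ)) := by
        rw [hTf (-(k : ℤ) - 1), sub_add_cancel]
      exact T.injective (h2.trans h1)
end
end

section
/- Let (f_n)_{n∈ℤ} be a linearly independent frame of H, with frame operator S and canonical dual frame h_n = S⁻¹ f_n. Then there exists T ∈ GL(H) with f_n = Tⁿ f_0 for all n ∈ ℤ if and only if ⟨f_i, h_j⟩ = ⟨f_{i+1}, h_{j+1}⟩ for all i, j ∈ ℤ. -/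
noncomputable section

open scoped InnerProductSpace

section Aux

variable {H : Type} [NormedAddCommGroup H] [InnerProductSpace ℂ H]

set_option maxHeartbeats 1000000 in
/-- Finite synthesis bound for a family with upper frame bound `B`. -/
lemma aux_finset_bound (f : ℤ → H) (B : ℝ) (hB0 : 0 ≤ B)
    (hsum : ∀ x : H, Summable (fun n : ℤ => ‖(inner ℂ x (f n) : ℂ)‖ ^ 2))
    (hb : ∀ x : H, ∑' n : ℤ, ‖(inner ℂ x (f n) : ℂ)‖ ^ 2 ≤ B * ‖x‖ ^ 2)
    (c : ℤ → ℂ) (F : Finset ℤ) :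
    ‖∑ n ∈ F, c n • f n‖ ^ 2 ≤ B * ∑ n ∈ F, ‖c n‖ ^ 2 := by
  classical
  set v : H := ∑ n ∈ F, c n • f n with hv
  have hframeF : ∀ y : H, ∑ n ∈ F, ‖(inner ℂ y (f n) : ℂ)‖ ^ 2 ≤ B * ‖y‖ ^ 2 := fun y =>
    le_trans (Summable.sum_le_tsum F (fun n _ => by positivity) (hsum y)) (hb y)
  have h1 : (inner ℂ v v : ℂ) = ∑ n ∈ F, c n * (inner ℂ v (f n) : ℂ) := by
    have h : (inner ℂ v (∑ n ∈ F, c n • f n) : ℂ) = ∑ n ∈ F, c n * (inner ℂ v (f n) : ℂ) := by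
      rw [inner_sum]
      exact Finset.sum_congr rfl fun n _ => by rw [inner_smul_right]
    rw [← hv] at h
    exact h
  have h2 : ‖v‖ ^ 2 = ‖(inner ℂ v v : ℂ)‖ := by
    rw [@inner_self_eq_norm_sq_to_K ℂ]
    simp [norm_pow]
  set s : ℝ := ∑ n ∈ F, ‖c n‖ ^ 2 with hs
  have hs0 : 0 ≤ s := by positivity
  have hcs : ∑ n ∈ F, ‖c n‖ * ‖(inner ℂ v (f n) : ℂ)‖ ≤
      Real.sqrt s * Real.sqrt (∑ n ∈ F, ‖(inner ℂ v (f n) : ℂ)‖ ^ 2) := by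
    have h := Finset.sum_mul_sq_le_sq_mul_sq F (fun n => ‖c n‖) (fun n => ‖(inner ℂ v (f n) : ℂ)‖)
    have hnn : 0 ≤ ∑ n ∈ F, ‖c n‖ * ‖(inner ℂ v (f n) : ℂ)‖ := by positivity
    calc ∑ n ∈ F, ‖c n‖ * ‖(inner ℂ v (f n) : ℂ)‖
        = Real.sqrt ((∑ n ∈ F, ‖c n‖ * ‖(inner ℂ v (f n) : ℂ)‖) ^ 2) :=
          (Real.sqrt_sq hnn).symm
      _ ≤ Real.sqrt ((∑ n ∈ F, ‖c n‖ ^ 2) * ∑ n ∈ F, ‖(inner ℂ v (f n) : ℂ)‖ ^ 2) :=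
          Real.sqrt_le_sqrt h
      _ = Real.sqrt s * Real.sqrt (∑ n ∈ F, ‖(inner ℂ v (f n) : ℂ)‖ ^ 2) := by
          rw [← hs, Real.sqrt_mul hs0]
  have hkey : ‖v‖ ^ 2 ≤ Real.sqrt s * (Real.sqrt B * ‖v‖) := by
    calc ‖v‖ ^ 2 = ‖(inner ℂ v v : ℂ)‖ := h2
      _ = ‖∑ n ∈ F, c n * (inner ℂ v (f n) : ℂ)‖ := by rw [h1]
      _ ≤ ∑ n ∈ F, ‖c n * (inner ℂ v (f n) : ℂ)‖ := norm_sum_le _ _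
      _ = ∑ n ∈ F, ‖c n‖ * ‖(inner ℂ v (f n) : ℂ)‖ := by
          exact Finset.sum_congr rfl fun n _ => norm_mul _ _
      _ ≤ Real.sqrt s * Real.sqrt (∑ n ∈ F, ‖(inner ℂ v (f n) : ℂ)‖ ^ 2) := hcs
      _ ≤ Real.sqrt s * Real.sqrt (B * ‖v‖ ^ 2) := by
          apply mul_le_mul_of_nonneg_left (Real.sqrt_le_sqrt (hframeF v)) (Real.sqrt_nonneg s)
      _ = Real.sqrt s * (Real.sqrt B * ‖v‖) := by
          rw [Real.sqrt_mul hB0, Real.sqrt_sq (norm_nonneg v)]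
  rcases eq_or_lt_of_le (norm_nonneg v) with h0 | h0
  · have hv0 : ‖v‖ ^ 2 = 0 := by rw [← h0]; ring
    rw [hv0]
    exact mul_nonneg hB0 hs0
  · have hle : ‖v‖ ≤ Real.sqrt s * Real.sqrt B := by
      have h' : ‖v‖ * ‖v‖ ≤ (Real.sqrt s * Real.sqrt B) * ‖v‖ := by
        calc ‖v‖ * ‖v‖ = ‖v‖ ^ 2 := (sq ‖v‖).symm
          _ ≤ Real.sqrt s * (Real.sqrt B * ‖v‖) := hkey
          _ = (Real.sqrt s * Real.sqrt B) * ‖v‖ := by ring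
      exact le_of_mul_le_mul_right h' h0
    have h2' : ‖v‖ ^ 2 ≤ (Real.sqrt s * Real.sqrt B) ^ 2 :=
      pow_le_pow_left₀ (norm_nonneg v) hle 2
    calc ‖v‖ ^ 2 ≤ (Real.sqrt s * Real.sqrt B) ^ 2 := h2'
      _ = s * B := by rw [mul_pow, Real.sq_sqrt hs0, Real.sq_sqrt hB0]
      _ = B * s := mul_comm _ _

/-- ℓ²-coefficient sequences are synthesizable. -/
lemma aux_summable [CompleteSpace H] (f : ℤ → H) (B : ℝ) (hB0 : 0 ≤ B)
    (hsum : ∀ x : H, Summable (fun n : ℤ => ‖(inner ℂ x (f n) : ℂ)‖ ^ 2))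
    (hb : ∀ x : H, ∑' n : ℤ, ‖(inner ℂ x (f n) : ℂ)‖ ^ 2 ≤ B * ‖x‖ ^ 2)
    (c : ℤ → ℂ) (hc : Summable fun n => ‖c n‖ ^ 2) :
    Summable (fun n : ℤ => c n • f n) := by
  rw [summable_iff_vanishing_norm]
  intro ε hε
  obtain ⟨s, hs⟩ := summable_iff_vanishing_norm.1 hc (ε ^ 2 / (B + 1)) (by positivity)
  refine ⟨s, fun t ht => ?_⟩
  have h1 : ‖∑ n ∈ t, c n • f n‖ ^ 2 ≤ B * ∑ n ∈ t, ‖c n‖ ^ 2 :=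
    aux_finset_bound f B hB0 hsum hb c t
  have h2 := hs t ht
  have hQ0 : 0 ≤ ∑ n ∈ t, ‖c n‖ ^ 2 := by positivity
  rw [Real.norm_eq_abs, abs_of_nonneg hQ0] at h2
  have hlt : ‖∑ n ∈ t, c n • f n‖ ^ 2 < ε ^ 2 := by
    have hB1 : (0:ℝ) < B + 1 := by linarith
    calc ‖∑ n ∈ t, c n • f n‖ ^ 2 ≤ B * ∑ n ∈ t, ‖c n‖ ^ 2 := h1
      _ ≤ (B + 1) * ∑ n ∈ t, ‖c n‖ ^ 2 := by nlinarith
      _ < (B + 1) * (ε ^ 2 / (B + 1)) := by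
          exact mul_lt_mul_of_pos_left h2 hB1
      _ = ε ^ 2 := mul_div_cancel₀ _ (ne_of_gt hB1)
  exact lt_of_pow_lt_pow_left₀ 2 (le_of_lt hε) hlt

/-- Norm bound for the synthesized vector. -/
lemma aux_tsum_bound [CompleteSpace H] (f : ℤ → H) (B : ℝ) (hB0 : 0 ≤ B)
    (hsum : ∀ x : H, Summable (fun n : ℤ => ‖(inner ℂ x (f n) : ℂ)‖ ^ 2))
    (hb : ∀ x : H, ∑' n : ℤ, ‖(inner ℂ x (f n) : ℂ)‖ ^ 2 ≤ B * ‖x‖ ^ 2)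
    (c : ℤ → ℂ) (hc : Summable fun n => ‖c n‖ ^ 2) :
    ‖∑' n : ℤ, c n • f n‖ ^ 2 ≤ B * ∑' n : ℤ, ‖c n‖ ^ 2 := by
  have hsummable := aux_summable f B hB0 hsum hb c hc
  have hh : HasSum (fun n : ℤ => c n • f n) (∑' n : ℤ, c n • f n) := hsummable.hasSum
  have htend : Filter.Tendsto (fun F : Finset ℤ => ‖∑ n ∈ F, c n • f n‖ ^ 2)
      Filter.atTop (nhds (‖∑' n : ℤ, c n • f n‖ ^ 2)) := hh.norm.pow 2
  refine le_of_tendsto htend (Filter.Eventually.of_forall fun F => ?_)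
  calc ‖∑ n ∈ F, c n • f n‖ ^ 2 ≤ B * ∑ n ∈ F, ‖c n‖ ^ 2 :=
        aux_finset_bound f B hB0 hsum hb c F
    _ ≤ B * ∑' n : ℤ, ‖c n‖ ^ 2 :=
        mul_le_mul_of_nonneg_left (Summable.sum_le_tsum F (fun n _ => by positivity) hc) hB0

end Aux

theorem stmt8 {H : Type} [NormedAddCommGroup H] [InnerProductSpace ℂ H]
    [CompleteSpace H] [TopologicalSpace.SeparableSpace H]
    (f : ℤ → H) (hframe : ∃ A B : ℝ, IsFrame f A B)
    (hli : LinearIndependent ℂ f)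
    (S : H ≃L[ℂ] H)
    (hS : ∀ x : H, HasSum (fun n : ℤ => (inner ℂ (f n) x : ℂ) • f n) (S x)) :
    (∃ T : H ≃L[ℂ] H, ∀ n : ℤ, f n = (T ^ n) (f 0)) ↔
      ∀ i j : ℤ, (inner ℂ (f i) (S.symm (f j)) : ℂ) =
        inner ℂ (f (i + 1)) (S.symm (f (j + 1))) := by
  obtain ⟨A, B, hApos, hBpos, hfr⟩ := hframe
  have hsum : ∀ x : H, Summable (fun n : ℤ => ‖(inner ℂ x (f n) : ℂ)‖ ^ 2) := fun x => (hfr x).1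
  have hlow : ∀ x : H, A * ‖x‖ ^ 2 ≤ ∑' n : ℤ, ‖(inner ℂ x (f n) : ℂ)‖ ^ 2 :=
    fun x => (hfr x).2.1
  have hb : ∀ x : H, ∑' n : ℤ, ‖(inner ℂ x (f n) : ℂ)‖ ^ 2 ≤ B * ‖x‖ ^ 2 :=
    fun x => (hfr x).2.2
  have happmul : ∀ (a b : H ≃L[ℂ] H) (x : H), (a * b) x = a (b x) := fun _ _ _ => rfl
  constructor
  · rintro ⟨T, hT⟩ i j
    set Tc : H →L[ℂ] H := (T : H →L[ℂ] H) with hTc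
    have hstep : ∀ n : ℤ, f (n + 1) = T (f n) := by
      intro n
      rw [hT (n + 1), hT n, show n + (1:ℤ) = 1 + n by ring, zpow_add, zpow_one, happmul]
    have key : ∀ x : H, T (S (Tc.adjoint x)) = S x := by
      intro x
      have h1 := hS (Tc.adjoint x)
      have h2 := Tc.hasSum h1
      have e1 : ∀ n : ℤ, Tc ((inner ℂ (f n) (Tc.adjoint x) : ℂ) • f n) =
          (inner ℂ (f (n + 1)) x : ℂ) • f (n + 1) := by
        intro n
        rw [map_smul, ContinuousLinearMap.adjoint_inner_right]
        have hfn : Tc (f n) = f (n + 1) := (hstep n).symm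
        rw [hfn]
      simp only [e1] at h2
      have h3 : HasSum (fun n : ℤ => (inner ℂ (f (n + 1)) x : ℂ) • f (n + 1)) (S x) := by
        have h := (Equiv.hasSum_iff (Equiv.addRight (1:ℤ))).2 (hS x)
        simpa [Function.comp_def] using h
      exact h2.unique h3
    have hAd : ∀ x : H, Tc.adjoint x = S.symm (T.symm (S x)) := by
      intro x
      have h := key x
      have h' : S (Tc.adjoint x) = T.symm (S x) := by
        rw [← h, T.symm_apply_apply]
      rw [← h', S.symm_apply_apply]
    have hmain : (inner ℂ (f (i + 1)) (S.symm (f (j + 1))) : ℂ) =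
        inner ℂ (f i) (S.symm (f j)) := by
      rw [show f (i + 1) = Tc (f i) from hstep i, ← ContinuousLinearMap.adjoint_inner_right,
        hAd, S.apply_symm_apply]
      have hsymm : T.symm (f (j + 1)) = f j := by rw [hstep j, T.symm_apply_apply]
      rw [hsymm]
    exact hmain.symm
  · intro hyp
    -- coefficient sequences are ℓ²
    have hcsq : ∀ x : H, Summable (fun n : ℤ => ‖(inner ℂ (f n) (S.symm x) : ℂ)‖ ^ 2) := by
      intro x
      have h : (fun n : ℤ => ‖(inner ℂ (f n) (S.symm x) : ℂ)‖ ^ 2) =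
          fun n : ℤ => ‖(inner ℂ (S.symm x) (f n) : ℂ)‖ ^ 2 :=
        funext fun n => by rw [norm_inner_symm]
      rw [h]
      exact hsum (S.symm x)
    have hctsum : ∀ x : H, ∑' n : ℤ, ‖(inner ℂ (f n) (S.symm x) : ℂ)‖ ^ 2 ≤
        B * ‖S.symm x‖ ^ 2 := by
      intro x
      have h : (fun n : ℤ => ‖(inner ℂ (f n) (S.symm x) : ℂ)‖ ^ 2) =
          fun n : ℤ => ‖(inner ℂ (S.symm x) (f n) : ℂ)‖ ^ 2 :=
        funext fun n => by rw [norm_inner_symm]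
      rw [h]
      exact hb (S.symm x)
    -- shifted coefficient sequences are ℓ² too
    have hcsq' : ∀ (k : ℤ) (x : H),
        Summable (fun m : ℤ => ‖(inner ℂ (f (m - k)) (S.symm x) : ℂ)‖ ^ 2) := by
      intro k x
      have h := ((Equiv.subRight k).summable_iff
        (f := fun n : ℤ => ‖(inner ℂ (f n) (S.symm x) : ℂ)‖ ^ 2)).2 (hcsq x)
      simpa [Function.comp_def] using h
    -- summability of the shifted synthesis
    have main : ∀ (k : ℤ) (x : H),
        Summable (fun n : ℤ => (inner ℂ (f n) (S.symm x) : ℂ) • f (n + k)) := by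
      intro k x
      have h1 : Summable (fun m : ℤ => (inner ℂ (f (m - k)) (S.symm x) : ℂ) • f m) :=
        aux_summable f B hBpos.le hsum hb _ (hcsq' k x)
      have h2 := ((Equiv.addRight k).summable_iff
        (f := fun m : ℤ => (inner ℂ (f (m - k)) (S.symm x) : ℂ) • f m)).2 h1
      simpa [Function.comp_def, add_sub_cancel_right] using h2
    -- reindexed tsum equality
    have htsum_eq : ∀ (k : ℤ) (x : H),
        ∑' n : ℤ, (inner ℂ (f n) (S.symm x) : ℂ) • f (n + k) =
        ∑' m : ℤ, (inner ℂ (f (m - k)) (S.symm x) : ℂ) • f m := by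
      intro k x
      have h := Equiv.tsum_eq (Equiv.addRight k)
        (fun m : ℤ => (inner ℂ (f (m - k)) (S.symm x) : ℂ) • f m)
      simp only [Equiv.coe_addRight, add_sub_cancel_right] at h
      exact h
    -- norm bound
    have hbound : ∀ (k : ℤ) (x : H),
        ‖∑' n : ℤ, (inner ℂ (f n) (S.symm x) : ℂ) • f (n + k)‖ ≤
        (B * ‖(S.symm : H →L[ℂ] H)‖) * ‖x‖ := by
      intro k x
      rw [htsum_eq k x]
      have h1 : ‖∑' m : ℤ, (inner ℂ (f (m - k)) (S.symm x) : ℂ) • f m‖ ^ 2 ≤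
          B * ∑' m : ℤ, ‖(inner ℂ (f (m - k)) (S.symm x) : ℂ)‖ ^ 2 :=
        aux_tsum_bound f B hBpos.le hsum hb _ (hcsq' k x)
      have h2 : ∑' m : ℤ, ‖(inner ℂ (f (m - k)) (S.symm x) : ℂ)‖ ^ 2 =
          ∑' n : ℤ, ‖(inner ℂ (f n) (S.symm x) : ℂ)‖ ^ 2 := by
        have h := Equiv.tsum_eq (Equiv.subRight k)
          (fun n : ℤ => ‖(inner ℂ (f n) (S.symm x) : ℂ)‖ ^ 2)
        simpa [Equiv.subRight_apply] using h
      have h3 : ‖S.symm x‖ ≤ ‖(S.symm : H →L[ℂ] H)‖ * ‖x‖ :=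
        (S.symm : H →L[ℂ] H).le_opNorm x
      have h4 : ‖∑' m : ℤ, (inner ℂ (f (m - k)) (S.symm x) : ℂ) • f m‖ ^ 2 ≤
          (B * (‖(S.symm : H →L[ℂ] H)‖ * ‖x‖)) ^ 2 := by
        calc ‖∑' m : ℤ, (inner ℂ (f (m - k)) (S.symm x) : ℂ) • f m‖ ^ 2
            ≤ B * ∑' m : ℤ, ‖(inner ℂ (f (m - k)) (S.symm x) : ℂ)‖ ^ 2 := h1
          _ = B * ∑' n : ℤ, ‖(inner ℂ (f n) (S.symm x) : ℂ)‖ ^ 2 := by rw [h2]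
          _ ≤ B * (B * ‖S.symm x‖ ^ 2) :=
              mul_le_mul_of_nonneg_left (hctsum x) hBpos.le
          _ ≤ (B * (‖(S.symm : H →L[ℂ] H)‖ * ‖x‖)) ^ 2 := by
              have h5 : ‖S.symm x‖ ^ 2 ≤ (‖(S.symm : H →L[ℂ] H)‖ * ‖x‖) ^ 2 :=
                pow_le_pow_left₀ (norm_nonneg _) h3 2
              have hB2 : B * (B * ‖S.symm x‖ ^ 2) = B ^ 2 * ‖S.symm x‖ ^ 2 := by ring
              rw [hB2, mul_pow]
              exact mul_le_mul_of_nonneg_left h5 (by positivity)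
      have hnn : (0:ℝ) ≤ B * (‖(S.symm : H →L[ℂ] H)‖ * ‖x‖) := by positivity
      have h6 : ‖∑' m : ℤ, (inner ℂ (f (m - k)) (S.symm x) : ℂ) • f m‖ ≤
          B * (‖(S.symm : H →L[ℂ] H)‖ * ‖x‖) := by
        calc ‖∑' m : ℤ, (inner ℂ (f (m - k)) (S.symm x) : ℂ) • f m‖
            = Real.sqrt (‖∑' m : ℤ, (inner ℂ (f (m - k)) (S.symm x) : ℂ) • f m‖ ^ 2) :=
              (Real.sqrt_sq (norm_nonneg _)).symm
          _ ≤ Real.sqrt ((B * (‖(S.symm : H →L[ℂ] H)‖ * ‖x‖)) ^ 2) := Real.sqrt_le_sqrt h4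
          _ = B * (‖(S.symm : H →L[ℂ] H)‖ * ‖x‖) := Real.sqrt_sq hnn
      calc ‖∑' m : ℤ, (inner ℂ (f (m - k)) (S.symm x) : ℂ) • f m‖
          ≤ B * (‖(S.symm : H →L[ℂ] H)‖ * ‖x‖) := h6
        _ = (B * ‖(S.symm : H →L[ℂ] H)‖) * ‖x‖ := by ring
    -- the shifted synthesis as a linear map
    let Tlin : ℤ → (H →ₗ[ℂ] H) := fun k =>
      { toFun := fun x => ∑' n : ℤ, (inner ℂ (f n) (S.symm x) : ℂ) • f (n + k)
        map_add' := by
          intro x y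
          have hx := (main k x).hasSum
          have hy := (main k y).hasSum
          have hxy := hx.add hy
          have he : (fun n : ℤ => (inner ℂ (f n) (S.symm x) : ℂ) • f (n + k) +
              (inner ℂ (f n) (S.symm y) : ℂ) • f (n + k)) =
              fun n : ℤ => (inner ℂ (f n) (S.symm (x + y)) : ℂ) • f (n + k) := by
            funext n
            rw [map_add, inner_add_right, add_smul]
          rw [he] at hxy
          exact hxy.tsum_eq
        map_smul' := by
          intro a x
          have hx := (main k x).hasSum
          have hax := hx.const_smul a
          have he : (fun n : ℤ => a • ((inner ℂ (f n) (S.symm x) : ℂ) • f (n + k))) =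
              fun n : ℤ => (inner ℂ (f n) (S.symm (a • x)) : ℂ) • f (n + k) := by
            funext n
            rw [map_smul, inner_smul_right, smul_smul]
          rw [he] at hax
          exact hax.tsum_eq }
    let Tc1 : H →L[ℂ] H := (Tlin 1).mkContinuous _ (hbound 1)
    let Tcm : H →L[ℂ] H := (Tlin (-1)).mkContinuous _ (hbound (-1))
    have hTc1_apply : ∀ x : H,
        Tc1 x = ∑' n : ℤ, (inner ℂ (f n) (S.symm x) : ℂ) • f (n + 1) := fun x => rfl
    have hTcm_apply : ∀ x : H,
        Tcm x = ∑' n : ℤ, (inner ℂ (f n) (S.symm x) : ℂ) • f (n + (-1)) := fun x => rfl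
    -- reconstruction property
    have hrecon : ∀ y : H, HasSum (fun n : ℤ => (inner ℂ (f n) (S.symm y) : ℂ) • f n) y := by
      intro y
      have h := hS (S.symm y)
      rwa [S.apply_symm_apply] at h
    have hT1 : ∀ j : ℤ, Tc1 (f j) = f (j + 1) := by
      intro j
      rw [hTc1_apply]
      have h0 := hrecon (f (j + 1))
      have h2 := (Equiv.hasSum_iff (Equiv.addRight (1:ℤ))).2 h0
      have h2' : HasSum (fun n : ℤ =>
          (inner ℂ (f (n + 1)) (S.symm (f (j + 1))) : ℂ) • f (n + 1)) (f (j + 1)) := by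
        simpa [Function.comp_def] using h2
      have he : (fun n : ℤ => (inner ℂ (f n) (S.symm (f j)) : ℂ) • f (n + 1)) =
          fun n : ℤ => (inner ℂ (f (n + 1)) (S.symm (f (j + 1))) : ℂ) • f (n + 1) := by
        funext n
        rw [hyp n j]
      rw [he]
      exact h2'.tsum_eq
    have hTm : ∀ j : ℤ, Tcm (f j) = f (j - 1) := by
      intro j
      rw [hTcm_apply]
      have h0 := hrecon (f (j - 1))
      have h2 := (Equiv.hasSum_iff (Equiv.addRight (-1:ℤ))).2 h0
      have h2' : HasSum (fun n : ℤ =>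
          (inner ℂ (f (n + (-1))) (S.symm (f (j - 1))) : ℂ) • f (n + (-1))) (f (j - 1)) := by
        simpa [Function.comp_def] using h2
      have he : (fun n : ℤ => (inner ℂ (f n) (S.symm (f j)) : ℂ) • f (n + (-1))) =
          fun n : ℤ => (inner ℂ (f (n + (-1))) (S.symm (f (j - 1))) : ℂ) • f (n + (-1)) := by
        funext n
        have h := hyp (n + (-1)) (j - 1)
        rw [show n + (-1) + 1 = n by ring, show j - 1 + 1 = j by ring] at h
        rw [← h]
      rw [he]
      exact h2'.tsum_eq
    -- density of the span of the frame vectors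
    have hdense : Dense ((Submodule.span ℂ (Set.range f) : Submodule ℂ H) : Set H) := by
      rw [Submodule.dense_iff_topologicalClosure_eq_top,
        Submodule.topologicalClosure_eq_top_iff, Submodule.eq_bot_iff]
      intro x hx
      have hfx : ∀ n : ℤ, (inner ℂ x (f n) : ℂ) = 0 := by
        intro n
        have h : (inner ℂ (f n) x : ℂ) = 0 :=
          hx (f n) (Submodule.subset_span ⟨n, rfl⟩)
        rw [← inner_conj_symm, h, map_zero]
      have h := hlow x
      have hz : ∑' n : ℤ, ‖(inner ℂ x (f n) : ℂ)‖ ^ 2 = 0 := by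
        simp [hfx]
      rw [hz] at h
      have hx2 : ‖x‖ ^ 2 ≤ 0 := by nlinarith
      have : ‖x‖ = 0 := by nlinarith [sq_nonneg ‖x‖, norm_nonneg x]
      exact norm_eq_zero.1 this
    -- the two maps are inverse to each other
    have hcomp1 : ∀ x : H, Tcm (Tc1 x) = x := by
      have h : Tcm.comp Tc1 = ContinuousLinearMap.id ℂ H := by
        apply ContinuousLinearMap.ext_on hdense
        rintro _ ⟨j, rfl⟩
        simp only [ContinuousLinearMap.comp_apply, ContinuousLinearMap.id_apply]
        rw [hT1 j, hTm (j + 1)]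
        congr 1
        ring
      intro x
      have := ContinuousLinearMap.ext_iff.1 h x
      simpa using this
    have hcomp2 : ∀ x : H, Tc1 (Tcm x) = x := by
      have h : Tc1.comp Tcm = ContinuousLinearMap.id ℂ H := by
        apply ContinuousLinearMap.ext_on hdense
        rintro _ ⟨j, rfl⟩
        simp only [ContinuousLinearMap.comp_apply, ContinuousLinearMap.id_apply]
        rw [hTm j, hT1 (j - 1)]
        congr 1
        ring
      intro x
      have := ContinuousLinearMap.ext_iff.1 h x
      simpa using this
    refine ⟨ContinuousLinearEquiv.equivOfInverse Tc1 Tcm hcomp1 hcomp2, ?_⟩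
    set T : H ≃L[ℂ] H := ContinuousLinearEquiv.equivOfInverse Tc1 Tcm hcomp1 hcomp2 with hTdef
    have hTapp : ∀ j : ℤ, T (f j) = f (j + 1) := by
      intro j
      rw [hTdef, ContinuousLinearEquiv.equivOfInverse_apply]
      exact hT1 j
    have hTinv : ∀ j : ℤ, T⁻¹ (f j) = f (j - 1) := by
      intro j
      show T.symm (f j) = f (j - 1)
      rw [hTdef, ContinuousLinearEquiv.symm_equivOfInverse,
        ContinuousLinearEquiv.equivOfInverse_apply]
      exact hTm j
    have hzpow : ∀ (n : ℤ) (j : ℤ), (T ^ n) (f j) = f (j + n) := by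
      intro n
      induction n using Int.induction_on with
      | zero =>
        intro j
        rw [zpow_zero, add_zero]
        rfl
      | succ k ih =>
        intro j
        rw [zpow_add_one, happmul, hTapp j, ih (j + 1)]
        congr 1
        ring
      | pred k ih =>
        intro j
        rw [zpow_sub_one, happmul, hTinv j, ih (j - 1)]
        congr 1
        ring
    intro n
    rw [hzpow n 0, zero_add]
end
end

section
/- Let (f_n)_{n∈ℤ} be a linearly independent frame of H with frame operator S, let R be the positive self-adjoint square root of S (so R is bounded, self-adjoint, positive, invertible and R∘R = S), and let t_n = R⁻¹ f_n be the canonical tight frame. Then there exists T ∈ GL(H) with f_n = Tⁿ f_0 for all n ∈ ℤ if and only if there exists a unitary operator V on H with t_n = Vⁿ t_0 for all n ∈ ℤ. -/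
noncomputable section

open scoped InnerProductSpace

set_option maxHeartbeats 1000000 in
theorem stmt9 {H : Type} [NormedAddCommGroup H] [InnerProductSpace ℂ H]
    [CompleteSpace H] [TopologicalSpace.SeparableSpace H]
    (f : ℤ → H) (hframe : ∃ A B : ℝ, IsFrame f A B)
    (hli : LinearIndependent ℂ f)
    (S R : H ≃L[ℂ] H)
    (hS : ∀ x : H, HasSum (fun n : ℤ => (inner ℂ (f n) x : ℂ) • f n) (S x))
    (hRsa : IsSelfAdjoint (R : H →L[ℂ] H))
    (hRpos : ∀ x : H, 0 ≤ (inner ℂ x (R x) : ℂ).re)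
    (hRR : ∀ x : H, R (R x) = S x) :
    (∃ T : H ≃L[ℂ] H, ∀ n : ℤ, f n = (T ^ n) (f 0)) ↔
      (∃ V : H ≃ₗᵢ[ℂ] H, ∀ n : ℤ, R.symm (f n) = (V ^ n) (R.symm (f 0))) := by
  clear hframe hli hRpos
  set t : ℤ → H := fun n => R.symm (f n) with ht
  have hRs : ∀ x y : H, ⟪R x, y⟫_ℂ = ⟪x, R y⟫_ℂ := fun x y => hRsa.isSymmetric x y
  have hRsymm : ∀ x y : H, ⟪R.symm x, y⟫_ℂ = ⟪x, R.symm y⟫_ℂ := by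
    intro x y
    calc ⟪R.symm x, y⟫_ℂ = ⟪R.symm x, R (R.symm y)⟫_ℂ := by rw [R.apply_symm_apply]
    _ = ⟪R (R.symm x), R.symm y⟫_ℂ := (hRs _ _).symm
    _ = ⟪x, R.symm y⟫_ℂ := by rw [R.apply_symm_apply]
  -- Parseval equality for the canonical tight frame `t`
  have hPar : ∀ y : H, HasSum (fun n : ℤ => ⟪t n, y⟫_ℂ * ⟪y, t n⟫_ℂ) ⟪y, y⟫_ℂ := by
    intro y
    have h2 := ((innerSL ℂ y).comp (R.symm : H →L[ℂ] H)).hasSum (hS (R.symm y))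
    convert h2 using 1
    · rfl
    · funext n
      show ⟪t n, y⟫_ℂ * ⟪y, t n⟫_ℂ =
        ((innerSL ℂ y).comp (R.symm : H →L[ℂ] H)) (⟪f n, R.symm y⟫_ℂ • f n)
      simp only [ContinuousLinearMap.comp_apply, map_smul, innerSL_apply_apply,
        ContinuousLinearMap.coe_coe, smul_eq_mul]
      rw [← hRsymm (f n) y]
      ring_nf
      rfl
    · show ⟪y, y⟫_ℂ = ((innerSL ℂ y).comp (R.symm : H →L[ℂ] H)) (S (R.symm y))
      simp only [ContinuousLinearMap.comp_apply, innerSL_apply_apply, ContinuousLinearMap.coe_coe]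
      rw [← hRR]
      show ⟪y, y⟫_ℂ = ⟪y, R.symm (R (R (R.symm y)))⟫_ℂ
      rw [R.symm_apply_apply, R.apply_symm_apply]
  constructor
  · rintro ⟨T, hT⟩
    have hTf : ∀ n : ℤ, T (f n) = f (n + 1) := by
      intro n
      rw [hT (n + 1), show n + 1 = 1 + n by ring, zpow_add, hT n]; rfl
    set V0 : H ≃L[ℂ] H := R.trans (T.trans R.symm) with hV0
    have hV0a : ∀ x : H, V0 x = R.symm (T (R x)) := fun _ => rfl
    have hVt : ∀ n : ℤ, V0 (t n) = t (n + 1) := by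
      intro n
      rw [hV0a, ht]
      show R.symm (T (R (R.symm (f n)))) = R.symm (f (n + 1))
      rw [R.apply_symm_apply, hTf]
    have hVt' : ∀ n : ℤ, V0.symm (t n) = t (n - 1) := by
      intro n
      have h := hVt (n - 1)
      rw [sub_add_cancel] at h
      rw [← h, V0.symm_apply_apply]
    set A : H →L[ℂ] H := (V0 : H →L[ℂ] H) with hA
    set Aad : H →L[ℂ] H := ContinuousLinearMap.adjoint A with hAad
    have hinner : ∀ x : H, ⟪Aad x, Aad x⟫_ℂ = ⟪x, x⟫_ℂ := by
      intro x
      have h1 : HasSum (fun n : ℤ => ⟪t (n + 1), x⟫_ℂ * ⟪x, t (n + 1)⟫_ℂ) ⟪x, x⟫_ℂ :=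
        ((Equiv.addRight (1 : ℤ)).hasSum_iff).mpr (hPar x)
      have h3 : HasSum (fun n : ℤ => ⟪t n, Aad x⟫_ℂ * ⟪Aad x, t n⟫_ℂ) ⟪x, x⟫_ℂ := by
        refine h1.congr_fun (fun n => ?_)
        rw [← hVt n]
        have e1 : ⟪V0 (t n), x⟫_ℂ = ⟪t n, Aad x⟫_ℂ :=
          (ContinuousLinearMap.adjoint_inner_right A (t n) x).symm
        have e2 : ⟪x, V0 (t n)⟫_ℂ = ⟪Aad x, t n⟫_ℂ :=
          (ContinuousLinearMap.adjoint_inner_left A (t n) x).symm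
        rw [e1, e2]
      exact (hPar (Aad x)).unique h3
    have hAadnorm : ∀ x : H, ‖Aad x‖ = ‖x‖ := by
      intro x
      have h4 := hinner x
      rw [inner_self_eq_norm_sq_to_K, inner_self_eq_norm_sq_to_K] at h4
      have h5 : ‖Aad x‖ ^ 2 = ‖x‖ ^ 2 := by exact_mod_cast h4
      nlinarith [norm_nonneg (Aad x), norm_nonneg x]
    have hAadinner : ∀ x y : H, ⟪Aad x, Aad y⟫_ℂ = ⟪x, y⟫_ℂ := by
      intro x y
      exact (⟨(Aad : H →ₗ[ℂ] H), hAadnorm⟩ : H →ₗᵢ[ℂ] H).inner_map_map x y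
    have hAAad : ∀ y : H, V0 (Aad y) = y := by
      intro y
      refine ext_inner_left ℂ (fun x => ?_)
      show ⟪x, A (Aad y)⟫_ℂ = ⟪x, y⟫_ℂ
      rw [← ContinuousLinearMap.adjoint_inner_left A (Aad y) x]
      exact hAadinner x y
    have hV0norm : ∀ x : H, ‖V0 x‖ = ‖x‖ := by
      intro x
      have h6 : Aad (V0 x) = x := by
        have := hAAad (V0 x)
        exact V0.injective this
      calc ‖V0 x‖ = ‖Aad (V0 x)‖ := (hAadnorm (V0 x)).symm
      _ = ‖x‖ := by rw [h6]
    refine ⟨⟨V0.toLinearEquiv, hV0norm⟩, ?_⟩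
    set V : H ≃ₗᵢ[ℂ] H := ⟨V0.toLinearEquiv, hV0norm⟩ with hVdef
    have hVapp : ∀ x : H, V x = V0 x := fun _ => rfl
    have hVsymm : ∀ x : H, V.symm x = V0.symm x := fun _ => rfl
    have hstepV : ∀ (n : ℤ) (x : H), (V ^ (n + 1)) x = V ((V ^ n) x) := by
      intro n x
      rw [show n + 1 = 1 + n by ring, zpow_add, zpow_one]; rfl
    have hstepV' : ∀ (n : ℤ) (x : H), (V ^ (n - 1)) x = V.symm ((V ^ n) x) := by
      intro n x
      rw [show n - 1 = -1 + n by ring, zpow_add, zpow_neg_one]; rfl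
    intro n
    show t n = (V ^ n) (t 0)
    induction n using Int.induction_on with
    | zero => rfl
    | succ k ih =>
      rw [hstepV, ← ih]
      show t ((k : ℤ) + 1) = V0 (t k)
      rw [hVt]
    | pred k ih =>
      rw [show -(k : ℤ) - 1 = (-(k : ℤ)) - 1 from rfl, hstepV', ← ih]
      show t (-(k : ℤ) - 1) = V0.symm (t (-(k : ℤ)))
      rw [hVt']
  · rintro ⟨V, hV⟩
    have hVt : ∀ n : ℤ, V (t n) = t (n + 1) := by
      intro n
      rw [ht]
      show V (R.symm (f n)) = R.symm (f (n + 1))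
      rw [hV n, hV (n + 1), show n + 1 = 1 + n by ring, zpow_add, zpow_one]
      rfl
    set T : H ≃L[ℂ] H := R.symm.trans (V.toContinuousLinearEquiv.trans R) with hTdef
    have hTa : ∀ x : H, T x = R (V (R.symm x)) := fun _ => rfl
    have hTf : ∀ n : ℤ, T (f n) = f (n + 1) := by
      intro n
      rw [hTa]
      show R (V (t n)) = f (n + 1)
      rw [hVt n]
      exact R.apply_symm_apply _
    have hTf' : ∀ n : ℤ, T.symm (f n) = f (n - 1) := by
      intro n
      have h := hTf (n - 1)
      rw [sub_add_cancel] at h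
      rw [← h, T.symm_apply_apply]
    have hstepT : ∀ (n : ℤ) (x : H), (T ^ (n + 1)) x = T ((T ^ n) x) := by
      intro n x
      rw [show n + 1 = 1 + n by ring, zpow_add, zpow_one]; rfl
    have hstepT' : ∀ (n : ℤ) (x : H), (T ^ (n - 1)) x = T.symm ((T ^ n) x) := by
      intro n x
      rw [show n - 1 = -1 + n by ring, zpow_add, zpow_neg_one]; rfl
    refine ⟨T, ?_⟩
    intro n
    induction n using Int.induction_on with
    | zero => rfl
    | succ k ih =>
      rw [hstepT, ← ih, hTf]
    | pred k ih =>
      rw [show -(k : ℤ) - 1 = (-(k : ℤ)) - 1 from rfl, hstepT', ← ih, hTf']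
end
end

section
/- Let (f_n)_{n∈ℤ} be a frame of H with synthesis operator U such that f_n = Tⁿ f_0 for all n ∈ ℤ for some T ∈ GL(H). If the frame is overcomplete, i.e. the kernel N(U) of U is nonzero, then N(U) is infinite-dimensional (the frame has infinite excess). -/
noncomputable section

open scoped InnerProductSpace

namespace Stmt10Aux

lemma memℓp_shift (c : lp (fun _ : ℤ => ℂ) 2) :
    Memℓp (fun n : ℤ => c (n - 1)) 2 := by
  have hc : Summable (fun n : ℤ => ‖c n‖ ^ (2 : ENNReal).toReal) :=
    (lp.memℓp c).summable (by norm_num)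
  refine memℓp_gen ?_
  have := ((Equiv.subRight (1 : ℤ)).summable_iff
    (f := fun n : ℤ => ‖c n‖ ^ (2 : ENNReal).toReal)).2 hc
  exact this

/-- The right shift operator on `ℓ²(ℤ)`. -/
def S : lp (fun _ : ℤ => ℂ) 2 →ₗ[ℂ] lp (fun _ : ℤ => ℂ) 2 where
  toFun c := ⟨fun n => c (n - 1), memℓp_shift c⟩
  map_add' c d := by
    apply lp.ext
    ext n
    simp [lp.coeFn_add]
    rfl
  map_smul' a c := by
    apply lp.ext
    ext n
    simp [lp.coeFn_smul]

@[simp] lemma S_apply (c : lp (fun _ : ℤ => ℂ) 2) (n : ℤ) : S c n = c (n - 1) := rfl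

end Stmt10Aux

open Stmt10Aux in
theorem stmt10 {H : Type} [NormedAddCommGroup H] [InnerProductSpace ℂ H]
    [CompleteSpace H] [TopologicalSpace.SeparableSpace H]
    (f : ℤ → H) (hframe : ∃ A B : ℝ, IsFrame f A B)
    (U : lp (fun _ : ℤ => ℂ) 2 →L[ℂ] H)
    (hU : ∀ c : lp (fun _ : ℤ => ℂ) 2, HasSum (fun n : ℤ => c n • f n) (U c))
    (T : H ≃L[ℂ] H) (hT : ∀ n : ℤ, f n = (T ^ n) (f 0))
    (hover : LinearMap.ker (U : lp (fun _ : ℤ => ℂ) 2 →ₗ[ℂ] H) ≠ ⊥) :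
    ¬ FiniteDimensional ℂ (LinearMap.ker (U : lp (fun _ : ℤ => ℂ) 2 →ₗ[ℂ] H)) := by
  intro hfin
  have hTstep : ∀ n : ℤ, f (n + 1) = T (f n) := by
    intro n
    rw [hT (n + 1), hT n, add_comm, zpow_add, zpow_one]
    rfl
  -- S maps the kernel into itself
  have hmap : ∀ c ∈ LinearMap.ker (U : lp (fun _ : ℤ => ℂ) 2 →ₗ[ℂ] H), S c ∈ LinearMap.ker (U : lp (fun _ : ℤ => ℂ) 2 →ₗ[ℂ] H) := by
    intro c hc
    have hc0 : U c = 0 := hc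
    have h1 : HasSum (fun n : ℤ => c n • f n) (U c) := hU c
    have h2 : HasSum (fun n : ℤ => c n • f (n + 1)) (T (U c)) := by
      have := (T : H →L[ℂ] H).hasSum h1
      simpa [hTstep, map_smul] using this
    have h3 : HasSum (fun n : ℤ => (S c) n • f n) (T (U c)) := by
      rw [← (Equiv.addRight (1 : ℤ)).hasSum_iff]
      have he : ((fun n : ℤ => (S c) n • f n) ∘ ⇑(Equiv.addRight (1 : ℤ)))
          = fun n : ℤ => c n • f (n + 1) := by
        funext n
        simp [Equiv.addRight]
      rw [he]
      exact h2
    have : U (S c) = T (U c) := (hU (S c)).unique h3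
    have : U (S c) = 0 := by rw [this, hc0, map_zero]
    exact this
  -- the restriction of S to the kernel has an eigenvector
  have hnt : Nontrivial (LinearMap.ker (U : lp (fun _ : ℤ => ℂ) 2 →ₗ[ℂ] H)) := Submodule.nontrivial_iff_ne_bot.2 hover
  set S' : Module.End ℂ (LinearMap.ker (U : lp (fun _ : ℤ => ℂ) 2 →ₗ[ℂ] H)) := (S).restrict hmap with hS'
  obtain ⟨μ, hμ⟩ := Module.End.exists_eigenvalue S'
  obtain ⟨v, hv⟩ := hμ.exists_hasEigenvector
  have hv0 : (v : lp (fun _ : ℤ => ℂ) 2) ≠ 0 := by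
    simpa [Submodule.coe_eq_zero] using hv.right
  set c : lp (fun _ : ℤ => ℂ) 2 := (v : lp (fun _ : ℤ => ℂ) 2)
  have heig : S c = μ • c := by
    have := hv.apply_eq_smul
    have h := congrArg (Subtype.val) this
    simpa [hS', LinearMap.restrict_apply, c] using h
  have hrec : ∀ n : ℤ, c (n - 1) = μ * c n := by
    intro n
    have := congrFun (congrArg (fun x : lp (fun _ : ℤ => ℂ) 2 => (x : ℤ → ℂ)) heig) n
    simpa [lp.coeFn_smul, Pi.smul_apply, smul_eq_mul] using this
  obtain ⟨n₀, hn₀⟩ : ∃ n₀ : ℤ, c n₀ ≠ 0 := by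
    by_contra h
    push_neg at h
    exact hv0 (lp.ext (funext fun n => h n))
  have hpos : 0 < ‖c n₀‖ := norm_pos_iff.2 hn₀
  -- in either case we get infinitely many coefficients bounded below
  have key : ∃ g : ℕ → ℤ, Function.Injective g ∧ ∀ k : ℕ, ‖c n₀‖ ≤ ‖c (g k)‖ := by
    rcases le_or_gt 1 ‖μ‖ with hμ1 | hμ1
    · refine ⟨fun k => n₀ - k, fun a b hab => by simpa using hab, ?_⟩
      intro k
      induction k with
      | zero => simp
      | succ k ih =>
        have h1 : c (n₀ - (k + 1 : ℕ)) = μ * c (n₀ - k) := by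
          have := hrec (n₀ - k)
          rw [← this]
          congr 1
          push_cast
          ring
        calc ‖c n₀‖ ≤ ‖c (n₀ - k)‖ := ih
          _ ≤ ‖μ‖ * ‖c (n₀ - k)‖ := le_mul_of_one_le_left (norm_nonneg _) hμ1
          _ = ‖c (n₀ - (k + 1 : ℕ))‖ := by rw [h1, norm_mul]
    · refine ⟨fun k => n₀ + k, fun a b hab => by simpa using hab, ?_⟩
      intro k
      induction k with
      | zero => simp
      | succ k ih =>
        have h1 : c (n₀ + k) = μ * c (n₀ + (k + 1 : ℕ)) := by
          have := hrec (n₀ + (k + 1 : ℕ))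
          rw [← this]
          congr 1
          push_cast
          ring
        calc ‖c n₀‖ ≤ ‖c (n₀ + k)‖ := ih
          _ = ‖μ‖ * ‖c (n₀ + (k + 1 : ℕ))‖ := by rw [h1, norm_mul]
          _ ≤ 1 * ‖c (n₀ + (k + 1 : ℕ))‖ := by
              exact mul_le_mul_of_nonneg_right hμ1.le (norm_nonneg _)
          _ = ‖c (n₀ + (k + 1 : ℕ))‖ := one_mul _
  obtain ⟨g, hg, hbd⟩ := key
  have hsum : Summable (fun n : ℤ => ‖c n‖ ^ (2 : ℝ)) := by
    have := (lp.memℓp c).summable (p := 2) (by norm_num)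
    simpa using this
  have hsum2 : Summable (fun k : ℕ => ‖c (g k)‖ ^ (2 : ℝ)) :=
    hsum.comp_injective hg
  have htend := hsum2.tendsto_atTop_zero
  have : (0 : ℝ) ≥ ‖c n₀‖ ^ (2 : ℝ) := by
    refine ge_of_tendsto htend ?_
    filter_upwards with k
    exact Real.rpow_le_rpow (norm_nonneg _) (hbd k) (by norm_num)
  have : (0 : ℝ) < ‖c n₀‖ ^ (2 : ℝ) := Real.rpow_pos_of_pos hpos 2
  linarith
end
end

section
/- Let (f_n)_{n∈ℤ} be a frame of H with frame operator S and canonical dual frame h_n = S⁻¹ f_n, and suppose f_n = Tⁿ f_0 for all n ∈ ℤ with T ∈ GL(H). Then the set Ip(f_i) := { ⟨f_i, h_j⟩ : j ∈ ℤ } ⊆ ℂ does not depend on i; that is, { ⟨f_i, h_j⟩ : j ∈ ℤ } = { ⟨f_0, h_j⟩ : j ∈ ℤ } for every i ∈ ℤ. -/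
noncomputable section

open scoped InnerProductSpace

theorem stmt11 {H : Type} [NormedAddCommGroup H] [InnerProductSpace ℂ H]
    [CompleteSpace H] [TopologicalSpace.SeparableSpace H]
    (f : ℤ → H) (hframe : ∃ A B : ℝ, IsFrame f A B)
    (S : H ≃L[ℂ] H)
    (hS : ∀ x : H, HasSum (fun n : ℤ => (inner ℂ (f n) x : ℂ) • f n) (S x))
    (T : H ≃L[ℂ] H) (hT : ∀ n : ℤ, f n = (T ^ n) (f 0)) :
    ∀ i : ℤ, {c : ℂ | ∃ j : ℤ, c = inner ℂ (f i) (S.symm (f j))} =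
      {c : ℂ | ∃ j : ℤ, c = inner ℂ (f 0) (S.symm (f j))} := by
  set Ta := ContinuousLinearMap.adjoint (T : H →L[ℂ] H) with hTa
  have hTf : ∀ n : ℤ, T (f n) = f (n + 1) := by
    intro n
    rw [hT n, hT (n+1), show n + 1 = 1 + n from add_comm n 1, zpow_add, zpow_one]
    rfl
  -- T (S (T† x)) = S x
  have key : ∀ x : H, T (S (Ta x)) = S x := by
    intro x
    have h1 := (hS (Ta x)).mapL (T : H →L[ℂ] H)
    have h2 : ∀ n : ℤ, (T : H →L[ℂ] H) ((inner ℂ (f n) (Ta x) : ℂ) • f n)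
        = (inner ℂ (f (n+1)) x : ℂ) • f (n+1) := by
      intro n
      rw [map_smul]
      congr 1
      · rw [hTa, ContinuousLinearMap.adjoint_inner_right]
        congr 1
        exact hTf n
      · exact hTf n
    simp only [h2] at h1
    have h3 : HasSum (fun n : ℤ => (inner ℂ (f n) x : ℂ) • f n) (T (S (Ta x))) := by
      exact (Equiv.addRight (1 : ℤ)).hasSum_iff.mp h1
    exact h3.unique (hS x)
  -- T† (S⁻¹ (T y)) = S⁻¹ y
  have key2 : ∀ y : H, Ta (S.symm (T y)) = S.symm y := by
    intro y
    have := key (S.symm (T y))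
    rw [S.apply_symm_apply] at this
    have h4 : S (Ta (S.symm (T y))) = y := by
      have := congrArg T.symm this
      rw [T.symm_apply_apply] at this
      rw [this, T.symm_apply_apply]
    calc Ta (S.symm (T y)) = S.symm (S (Ta (S.symm (T y)))) := (S.symm_apply_apply _).symm
      _ = S.symm y := by rw [h4]
  have one : ∀ a b : H, (inner ℂ (T a) (S.symm (T b)) : ℂ) = inner ℂ a (S.symm b) := by
    intro a b
    rw [← key2 b, hTa, ContinuousLinearMap.adjoint_inner_right]
    rfl
  have main : ∀ i : ℤ, ∀ a b : H,
      (inner ℂ ((T^i) a) (S.symm ((T^i) b)) : ℂ) = inner ℂ a (S.symm b) := by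
    intro i
    induction i using Int.induction_on with
    | zero => intro a b; rw [zpow_zero]; rfl
    | succ k ih =>
      intro a b
      have e : ∀ x : H, (T^((k:ℤ)+1)) x = (T^(k:ℤ)) (T x) := by
        intro x; rw [zpow_add_one]; rfl
      rw [e, e, ih, one]
    | pred k ih =>
      intro a b
      have e : ∀ x : H, (T^(-(k:ℤ)-1)) x = (T^(-(k:ℤ))) (T.symm x) := by
        intro x
        rw [sub_eq_add_neg, zpow_add, zpow_neg_one]
        rfl
      rw [e, e, ih]
      have := one (T.symm a) (T.symm b)
      rw [T.apply_symm_apply, T.apply_symm_apply] at this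
      exact this.symm
  intro i
  ext c
  simp only [Set.mem_setOf_eq]
  constructor
  · rintro ⟨j, rfl⟩
    refine ⟨j - i, ?_⟩
    have hfj : f j = (T^i) (f (j - i)) := by
      rw [hT (j - i), hT j]
      show (T^j) (f 0) = ((T^i) * (T^(j - i))) (f 0)
      rw [← zpow_add, show i + (j - i) = j by ring]
    rw [hT i, hfj, main i]
  · rintro ⟨j, rfl⟩
    refine ⟨j + i, ?_⟩
    have hfj : f (j + i) = (T^i) (f j) := by
      rw [hT j, hT (j + i)]
      show (T^(j+i)) (f 0) = ((T^i) * (T^j)) (f 0)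
      rw [← zpow_add, show i + j = j + i by ring]
    rw [hT i, hfj, main i]
end
end

section
/- Let (f_n)_{n∈ℤ} be a frame of H with frame operator S, and suppose f_n = Tⁿ f_0 for all n ∈ ℤ with T ∈ GL(H). Then the number ⟨f_n, S⁻¹ f_n⟩ is constant in n: ⟨f_n, S⁻¹ f_n⟩ = ⟨f_0, S⁻¹ f_0⟩ for all n ∈ ℤ. -/
noncomputable section

open scoped InnerProductSpace

theorem stmt12 {H : Type} [NormedAddCommGroup H] [InnerProductSpace ℂ H]
    [CompleteSpace H] [TopologicalSpace.SeparableSpace H]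
    (f : ℤ → H) (hframe : ∃ A B : ℝ, IsFrame f A B)
    (S : H ≃L[ℂ] H)
    (hS : ∀ x : H, HasSum (fun n : ℤ => (inner ℂ (f n) x : ℂ) • f n) (S x))
    (T : H ≃L[ℂ] H) (hT : ∀ n : ℤ, f n = (T ^ n) (f 0)) :
    ∀ n : ℤ, (inner ℂ (f n) (S.symm (f n)) : ℂ) = inner ℂ (f 0) (S.symm (f 0)) := by
  set T' := ContinuousLinearMap.adjoint (T : H →L[ℂ] H) with hT'
  have hfT : ∀ n : ℤ, T (f n) = f (n + 1) := by
    intro n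
    rw [hT n, hT (n + 1)]
    have : (T : H ≃L[ℂ] H) ^ (n + 1) = T * T ^ n := by
      rw [add_comm, zpow_add, zpow_one]
    rw [this]
    rfl
  have key : ∀ x : H, T (S (T' x)) = S x := by
    intro x
    have h1 := (hS (T' x)).mapL (T : H →L[ℂ] H)
    have heq : (fun n : ℤ => (T : H →L[ℂ] H) ((inner ℂ (f n) (T' x) : ℂ) • f n)) =
        fun n : ℤ => (inner ℂ (f (n + 1)) x : ℂ) • f (n + 1) := by
      funext n
      rw [map_smul]
      congr 1
      · rw [hT', ContinuousLinearMap.adjoint_inner_right, ← hfT n]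
        simp
      · rw [← hfT n]; simp
    rw [heq] at h1
    have h3 : HasSum (fun n : ℤ => (inner ℂ (f n) x : ℂ) • f n) (T (S (T' x))) :=
      (Equiv.addRight (1 : ℤ)).hasSum_iff.mp h1
    exact h3.unique (hS x)
  have key2 : ∀ y : H, T' (S.symm (T y)) = S.symm y := by
    intro y
    have h := key (S.symm (T y))
    rw [S.apply_symm_apply] at h
    have h2 : S (T' (S.symm (T y))) = y := T.injective h
    calc T' (S.symm (T y)) = S.symm (S (T' (S.symm (T y)))) := (S.symm_apply_apply _).symm
      _ = S.symm y := by rw [h2]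
  have step : ∀ n : ℤ, (inner ℂ (f (n + 1)) (S.symm (f (n + 1))) : ℂ) =
      inner ℂ (f n) (S.symm (f n)) := by
    intro n
    rw [← hfT n]
    calc (inner ℂ (T (f n)) (S.symm (T (f n))) : ℂ)
        = inner ℂ (f n) (T' (S.symm (T (f n)))) := by
          rw [hT', ContinuousLinearMap.adjoint_inner_right]; simp
      _ = inner ℂ (f n) (S.symm (f n)) := by rw [key2]
  intro n
  induction n using Int.induction_on with
  | zero => rfl
  | succ k ih => rw [step k, ih]
  | pred k ih => rw [← ih, ← step (-k - 1)]; ring_nf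
end
end

section
/- Let (f_n)_{n∈ℤ} be a tight frame of H with f_n = Tⁿ f_0 for all n ∈ ℤ, where T ∈ GL(H). Then the frame is norm-constant: ‖f_n‖ = ‖f_0‖ for all n ∈ ℤ. -/
noncomputable section

open scoped InnerProductSpace

theorem stmt13 {H : Type} [NormedAddCommGroup H] [InnerProductSpace ℂ H]
    [CompleteSpace H] [TopologicalSpace.SeparableSpace H]
    (f : ℤ → H) (A : ℝ) (hframe : IsTightFrame f A)
    (T : H ≃L[ℂ] H) (hT : ∀ n : ℤ, f n = (T ^ n) (f 0)) :
    ∀ n : ℤ, ‖f n‖ = ‖f 0‖ := by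
  obtain ⟨hA, hsum⟩ := hframe
  set S : H →L[ℂ] H := ContinuousLinearMap.adjoint (T : H →L[ℂ] H) with hS
  have hshift : ∀ n : ℤ, T (f n) = f (n + 1) := by
    intro n
    rw [hT n, hT (n + 1), add_comm, zpow_add, zpow_one]
    rfl
  have hSiso : ∀ x : H, ‖S x‖ = ‖x‖ := by
    intro x
    have h1 : HasSum (fun n : ℤ => ‖(inner ℂ x (f (n + 1)) : ℂ)‖ ^ 2) (A * ‖x‖ ^ 2) := by
      have := ((Equiv.addRight (1 : ℤ)).hasSum_iff).mpr (hsum x)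
      simpa [Function.comp_def] using this
    have h2 : HasSum (fun n : ℤ => ‖(inner ℂ x (f (n + 1)) : ℂ)‖ ^ 2) (A * ‖S x‖ ^ 2) := by
      have := hsum (S x)
      convert this using 2 with n
      rw [← hshift n, hS, ContinuousLinearMap.adjoint_inner_left]
      rfl
    have := h1.unique h2
    have h3 : ‖x‖ ^ 2 = ‖S x‖ ^ 2 := mul_left_cancel₀ hA.ne' this
    nlinarith [norm_nonneg x, norm_nonneg (S x)]
  -- S preserves inner products, hence T ∘ S = id, so S = T.symm
  have hSli : ∀ x y : H, (inner ℂ (S x) (S y) : ℂ) = inner ℂ x y := by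
    intro x y
    exact (LinearIsometry.inner_map_map ⟨S.toLinearMap, hSiso⟩ x y)
  have hTS : ∀ x : H, T (S x) = x := by
    intro x
    apply ext_inner_right ℂ
    intro y
    have h := ContinuousLinearMap.adjoint_inner_right (T : H →L[ℂ] H) (S x) y
    rw [← hS] at h
    show (inner ℂ ((T : H →L[ℂ] H) (S x)) y : ℂ) = inner ℂ x y
    rw [← h, hSli]
  have hTsymm : ∀ x : H, ‖T.symm x‖ = ‖x‖ := by
    intro x
    have : S x = T.symm x := by
      have := hTS x
      calc S x = T.symm (T (S x)) := (T.symm_apply_apply _).symm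
        _ = T.symm x := by rw [this]
    rw [← this, hSiso]
  have hTiso : ∀ x : H, ‖T x‖ = ‖x‖ := by
    intro x
    have := hTsymm (T x)
    rw [T.symm_apply_apply] at this
    exact this.symm
  have hpow : ∀ n : ℤ, ∀ x : H, ‖(T ^ n) x‖ = ‖x‖ := by
    intro n
    induction n using Int.induction_on with
    | zero => intro x; rw [zpow_zero]; rfl
    | succ k ih =>
        intro x
        have : (T ^ ((k : ℤ) + 1)) x = T ((T ^ (k : ℤ)) x) := by
          rw [add_comm, zpow_add, zpow_one]; rfl
        rw [this, hTiso, ih]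
    | pred k ih =>
        intro x
        have : (T ^ (-(k : ℤ) - 1)) x = T.symm ((T ^ (-(k : ℤ))) x) := by
          rw [sub_eq_add_neg, add_comm, zpow_add, zpow_neg, zpow_one]; rfl
        rw [this, hTsymm, ih]
  intro n
  rw [hT n, hpow]
end
end

section
/- Let (f_n)_{n∈ℤ} be a tight frame of H with bound B > 0 such that f_n = Tⁿ f_0 for all n ∈ ℤ with T ∈ GL(H). If there exists n₀ ∈ ℤ with ‖f_{n₀}‖ = √B, then (f_n)_{n∈ℤ} is a multiple of an orthonormal basis: the family (B^{-1/2} f_n)_{n∈ℤ} is orthonormal and its linear span is dense in H. -/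
noncomputable section

open scoped InnerProductSpace

theorem stmt14 {H : Type} [NormedAddCommGroup H] [InnerProductSpace ℂ H]
    [CompleteSpace H] [TopologicalSpace.SeparableSpace H]
    (f : ℤ → H) (B : ℝ) (hframe : IsTightFrame f B)
    (T : H ≃L[ℂ] H) (hT : ∀ n : ℤ, f n = (T ^ n) (f 0))
    (n₀ : ℤ) (hn₀ : ‖f n₀‖ = Real.sqrt B) :
    Orthonormal ℂ (fun n : ℤ => (((Real.sqrt B)⁻¹ : ℝ) : ℂ) • f n) ∧
      Dense (Submodule.span ℂ
        (Set.range (fun n : ℤ => (((Real.sqrt B)⁻¹ : ℝ) : ℂ) • f n)) : Set H) := by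
  classical
  obtain ⟨hB, hsum⟩ := hframe
  have hsB : (0:ℝ) < Real.sqrt B := Real.sqrt_pos.mpr hB
  -- powers of T applied
  have hpow : ∀ (m k : ℤ) (x : H), (T ^ (m + k)) x = (T ^ m) ((T ^ k) x) := by
    intro m k x; rw [zpow_add]; rfl
  have hstep : ∀ (k : ℤ) (x : H), (T ^ (k + 1)) x = T ((T ^ k) x) := by
    intro k x
    rw [add_comm, hpow 1 k, zpow_one]
  have hstep' : ∀ (k : ℤ) (x : H), (T ^ (k - 1)) x = T.symm ((T ^ k) x) := by
    intro k x
    rw [sub_eq_add_neg, add_comm, hpow (-1) k, zpow_neg_one]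
    rfl
  have hshift : ∀ n : ℤ, f (n + 1) = T (f n) := by
    intro n
    rw [hT (n + 1), hT n, hstep]
  set A : H →L[ℂ] H := ContinuousLinearMap.adjoint (T : H →L[ℂ] H) with hA
  have hAinner : ∀ x y : H, (inner ℂ (A x) y : ℂ) = inner ℂ x (T y) := fun x y =>
    ContinuousLinearMap.adjoint_inner_left _ _ _
  -- A preserves norms
  have hAnorm : ∀ x : H, ‖A x‖ = ‖x‖ := by
    intro x
    have h1 := hsum x
    have h2 : HasSum (fun n : ℤ => ‖(inner ℂ x (f (n + 1)) : ℂ)‖ ^ 2) (B * ‖x‖ ^ 2) := by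
      have h2' := (Equiv.addRight (1:ℤ)).hasSum_iff.mpr h1
      simpa only [Function.comp_def, Equiv.coe_addRight] using h2'
    have h3 : HasSum (fun n : ℤ => ‖(inner ℂ (A x) (f n) : ℂ)‖ ^ 2) (B * ‖x‖ ^ 2) := by
      simpa only [hshift, ← hAinner] using h2
    have h4 := hsum (A x)
    have h5 : B * ‖A x‖ ^ 2 = B * ‖x‖ ^ 2 := h4.unique h3
    have h6 : ‖A x‖ ^ 2 = ‖x‖ ^ 2 := mul_left_cancel₀ hB.ne' h5
    have := congrArg Real.sqrt h6
    rwa [Real.sqrt_sq (norm_nonneg _), Real.sqrt_sq (norm_nonneg _)] at this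
  -- A preserves inner products
  have hAip : ∀ x y : H, (inner ℂ (A x) (A y) : ℂ) = inner ℂ x y := by
    intro x y
    exact (LinearIsometry.inner_map_map ⟨(A : H →ₗ[ℂ] H), hAnorm⟩ x y :)
  -- T ∘ A = id
  have hTA : ∀ x : H, T (A x) = x := by
    intro x
    apply ext_inner_left ℂ
    intro v
    rw [← hAinner v (A x), hAip]
  have hAT : ∀ x : H, A (T x) = x := fun x => T.injective (hTA (T x))
  -- T preserves inner products
  have hTip : ∀ x y : H, (inner ℂ (T x) (T y) : ℂ) = inner ℂ x y := by
    intro x y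
    rw [← hAinner (T x) y, hAT]
  have hTinv : ∀ x y : H, (inner ℂ (T.symm x) (T.symm y) : ℂ) = inner ℂ x y := by
    intro x y
    rw [← hTip (T.symm x) (T.symm y), T.apply_symm_apply, T.apply_symm_apply]
  -- powers of T preserve inner products
  have hzip : ∀ (k : ℤ) (x y : H), (inner ℂ ((T ^ k) x) ((T ^ k) y) : ℂ) = inner ℂ x y := by
    intro k
    induction k using Int.induction_on with
    | zero => intro x y; rfl
    | succ n ih => intro x y; rw [hstep, hstep, hTip, ih]
    | pred n ih => intro x y; rw [hstep', hstep', hTinv, ih]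
  -- shift invariance of inner products of the frame
  have hshiftInner : ∀ (k m n : ℤ), (inner ℂ (f (m + k)) (f (n + k)) : ℂ) = inner ℂ (f m) (f n) := by
    intro k m n
    rw [hT (m + k), hT (n + k), add_comm m k, add_comm n k, hpow k m, hpow k n, hzip,
      ← hT, ← hT]
  have hB2 : ‖f n₀‖ ^ 2 = B := by rw [hn₀, Real.sq_sqrt hB.le]
  have hselfc : (inner ℂ (f n₀) (f n₀) : ℂ) = (B : ℂ) := by
    rw [inner_self_eq_norm_sq_to_K, ← hB2]
    norm_cast
  -- orthogonality against f n₀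
  have hortho : ∀ j : ℤ, j ≠ n₀ → (inner ℂ (f n₀) (f j) : ℂ) = 0 := by
    intro j hj
    have hg := hsum (f n₀)
    have hle : ∑ i ∈ ({n₀, j} : Finset ℤ), ‖(inner ℂ (f n₀) (f i) : ℂ)‖ ^ 2 ≤ B * ‖f n₀‖ ^ 2 :=
      sum_le_hasSum _ (fun i _ => sq_nonneg _) hg
    rw [Finset.sum_pair (Ne.symm hj)] at hle
    have hself : ‖(inner ℂ (f n₀) (f n₀) : ℂ)‖ ^ 2 = B * ‖f n₀‖ ^ 2 := by
      rw [hselfc, hB2, Complex.norm_real, Real.norm_eq_abs, abs_of_pos hB, sq]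
    have h0 : ‖(inner ℂ (f n₀) (f j) : ℂ)‖ ^ 2 = 0 := le_antisymm (by linarith) (sq_nonneg _)
    have := pow_eq_zero_iff (n := 2) (by norm_num) |>.mp h0
    exact norm_eq_zero.mp this
  have hinner_eq : ∀ i : ℤ, (inner ℂ (f i) (f i) : ℂ) = (B : ℂ) := by
    intro i
    have h := hshiftInner (n₀ - i) i i
    rw [show i + (n₀ - i) = n₀ by ring] at h
    rw [← h, hselfc]
  have hinner_ne : ∀ i j : ℤ, i ≠ j → (inner ℂ (f i) (f j) : ℂ) = 0 := by
    intro i j hij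
    have h := hshiftInner (n₀ - i) i j
    rw [show i + (n₀ - i) = n₀ by ring] at h
    rw [← h]
    exact hortho _ (by omega)
  constructor
  · rw [orthonormal_iff_ite]
    intro i j
    rw [inner_smul_left, inner_smul_right, Complex.conj_ofReal]
    by_cases h : i = j
    · subst h
      rw [hinner_eq, if_pos rfl]
      rw [show ((((Real.sqrt B)⁻¹ : ℝ) : ℂ) * ((((Real.sqrt B)⁻¹ : ℝ) : ℂ) * (B : ℂ)))
          = ((((Real.sqrt B)⁻¹ * ((Real.sqrt B)⁻¹ * B)) : ℝ) : ℂ) by push_cast; ring]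
      rw [show ((Real.sqrt B)⁻¹ * ((Real.sqrt B)⁻¹ * B) : ℝ) = 1 by
        rw [show B = Real.sqrt B * Real.sqrt B from (Real.mul_self_sqrt hB.le).symm]
        field_simp
        rw [Real.sqrt_sq hsB.le]]
      norm_num
    · rw [hinner_ne i j h, if_neg h]
      ring
  · have hbot : (Submodule.span ℂ
        (Set.range (fun n : ℤ => (((Real.sqrt B)⁻¹ : ℝ) : ℂ) • f n)))ᗮ = ⊥ := by
      rw [Submodule.eq_bot_iff]
      intro x hx
      have hxf : ∀ n : ℤ, (inner ℂ x (f n) : ℂ) = 0 := by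
        intro n
        have hmem : (((Real.sqrt B)⁻¹ : ℝ) : ℂ) • f n ∈ Submodule.span ℂ
            (Set.range (fun n : ℤ => (((Real.sqrt B)⁻¹ : ℝ) : ℂ) • f n)) :=
          Submodule.subset_span ⟨n, rfl⟩
        have h1 := (Submodule.mem_orthogonal _ x).mp hx _ hmem
        rw [inner_smul_left, Complex.conj_ofReal, mul_eq_zero] at h1
        have hc : ((((Real.sqrt B)⁻¹ : ℝ)) : ℂ) ≠ 0 := by
          exact_mod_cast inv_ne_zero hsB.ne'
        have h2 : (inner ℂ (f n) x : ℂ) = 0 := h1.resolve_left hc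
        rw [← inner_conj_symm, h2, map_zero]
      have h0 : HasSum (fun _ : ℤ => (0 : ℝ)) (B * ‖x‖ ^ 2) := by
        simpa [hxf] using hsum x
      have h1 : B * ‖x‖ ^ 2 = 0 := (hasSum_zero.unique h0).symm
      have h2 : ‖x‖ ^ 2 = 0 := by
        rcases mul_eq_zero.mp h1 with h | h
        · exact absurd h hB.ne'
        · exact h
      have : ‖x‖ = 0 := by
        have := pow_eq_zero_iff (n := 2) (by norm_num) |>.mp h2
        exact this
      exact norm_eq_zero.mp this
    rw [Submodule.dense_iff_topologicalClosure_eq_top,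
      Submodule.topologicalClosure_eq_top_iff]
    exact hbot
end
end

section
/- Let (f_n)_{n∈ℤ} be a linearly independent overcomplete frame of H with frame operator S. Suppose there is a map κ : ℤ → ℤ with infinite range (so the frame is the disjoint union of the infinitely many nonempty subfamilies F_k = { f_n : κ(n) = k }) such that ⟨f_i, S⁻¹ f_j⟩ = 0 whenever κ(i) ≠ κ(j). Then, regardless of the ordering over ℤ, the frame is not generated by an operator in GL(H): for every bijection σ : ℤ → ℤ and every T ∈ GL(H) it is not the case that f_{σ(n)} = Tⁿ f_{σ(0)} for all n ∈ ℤ. -/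
noncomputable section

open scoped InnerProductSpace

theorem stmt15 {H : Type} [NormedAddCommGroup H] [InnerProductSpace ℂ H]
    [CompleteSpace H] [TopologicalSpace.SeparableSpace H]
    (f : ℤ → H) (hframe : ∃ A B : ℝ, IsFrame f A B)
    (hli : LinearIndependent ℂ f)
    (hover : ∃ c : lp (fun _ : ℤ => ℂ) 2, c ≠ 0 ∧ HasSum (fun n : ℤ => c n • f n) 0)
    (S : H ≃L[ℂ] H)
    (hS : ∀ x : H, HasSum (fun n : ℤ => (inner ℂ (f n) x : ℂ) • f n) (S x))
    (κ : ℤ → ℤ) (hκ : (Set.range κ).Infinite)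
    (horth : ∀ i j : ℤ, κ i ≠ κ j → (inner ℂ (f i) (S.symm (f j)) : ℂ) = 0) :
    ∀ (σ : ℤ ≃ ℤ) (T : H ≃L[ℂ] H), ¬ (∀ n : ℤ, f (σ n) = (T ^ n) (f (σ 0))) := by
  intro σ T horb
  obtain ⟨A, B, hA, hB, hfr⟩ := hframe
  set g : H := f (σ 0) with hg
  -- powers compose
  have hpow : ∀ (a b : ℤ) (x : H), (T ^ (a + b)) x = (T ^ a) ((T ^ b) x) := by
    intro a b x; rw [zpow_add]; rfl
  -- frame operator as orbit sum
  have hBsum : ∀ x : H,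
      HasSum (fun k : ℤ => (inner ℂ ((T ^ k) g) x : ℂ) • (T ^ k) g) (S x) := by
    intro x
    have h1 : HasSum ((fun n : ℤ => (inner ℂ (f n) x : ℂ) • f n) ∘ σ) (S x) :=
      (Equiv.hasSum_iff σ).mpr (hS x)
    have h2 : ∀ k : ℤ, ((fun n : ℤ => (inner ℂ (f n) x : ℂ) • f n) ∘ σ) k
        = (inner ℂ ((T ^ k) g) x : ℂ) • (T ^ k) g := by
      intro k; simp only [Function.comp, horb k]
    rwa [funext h2] at h1
  -- Toeplitz property of the cross-Gram
  have key : ∀ m n : ℤ, (inner ℂ ((T ^ m) g) (S.symm ((T ^ n) g)) : ℂ)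
      = inner ℂ g (S.symm ((T ^ (n - m)) g)) := by
    intro m n
    set u : H := S.symm ((T ^ n) g) with hu
    set v : H := ContinuousLinearMap.adjoint ((T ^ m : H ≃L[ℂ] H) : H →L[ℂ] H) u with hv
    have hSu : S u = (T ^ n) g := S.apply_symm_apply _
    have h1 : HasSum (fun k : ℤ => (inner ℂ ((T ^ k) g) u : ℂ) • (T ^ k) g) ((T ^ n) g) := by
      rw [← hSu]; exact hBsum u
    have h2 : HasSum (fun k : ℤ => (inner ℂ ((T ^ k) g) u : ℂ) • (T ^ (k - m)) g)
        ((T ^ (n - m)) g) := by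
      have h3 := h1.mapL ((T ^ (-m) : H ≃L[ℂ] H) : H →L[ℂ] H)
      have h4 : ∀ k : ℤ, ((T ^ (-m) : H ≃L[ℂ] H) : H →L[ℂ] H)
          ((inner ℂ ((T ^ k) g) u : ℂ) • (T ^ k) g)
          = (inner ℂ ((T ^ k) g) u : ℂ) • (T ^ (k - m)) g := by
        intro k
        rw [map_smul]
        congr 1
        rw [show k - m = -m + k by ring, hpow]
        rfl
      have h5 : ((T ^ (-m) : H ≃L[ℂ] H) : H →L[ℂ] H) ((T ^ n) g) = (T ^ (n - m)) g := by
        rw [show n - m = -m + n by ring, hpow]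
        rfl
      rwa [funext h4, h5] at h3
    have h6 : HasSum (fun k : ℤ => (inner ℂ ((T ^ k) g) v : ℂ) • (T ^ k) g)
        ((T ^ (n - m)) g) := by
      have h7 := (Equiv.hasSum_iff (Equiv.addRight m)).mpr h2
      have h8 : ∀ k : ℤ, ((fun k : ℤ => (inner ℂ ((T ^ k) g) u : ℂ) • (T ^ (k - m)) g)
          ∘ (Equiv.addRight m)) k = (inner ℂ ((T ^ k) g) v : ℂ) • (T ^ k) g := by
        intro k
        simp only [Function.comp, Equiv.coe_addRight]
        rw [hv, ContinuousLinearMap.adjoint_inner_right]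
        congr 2
        · rw [show k + m = m + k by ring, hpow]; rfl
        · rw [show k + m - m = k by ring]
      rwa [funext h8] at h7
    have h9 : S v = (T ^ (n - m)) g := HasSum.unique (hBsum v) h6
    have h10 : v = S.symm ((T ^ (n - m)) g) := by rw [← h9, S.symm_apply_apply]
    rw [← h10, hv, ContinuousLinearMap.adjoint_inner_right]
    rfl
  -- define φ and Toeplitz in original coordinates
  set φ : ℤ → ℂ := fun d => inner ℂ g (S.symm ((T ^ d) g)) with hφ
  have tpl : ∀ m n : ℤ, (inner ℂ (f (σ m)) (S.symm (f (σ n))) : ℂ) = φ (n - m) := by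
    intro m n; rw [horb m, horb n]; exact key m n
  -- off-diagonal vanishing
  have hφz : ∀ d : ℤ, d ≠ 0 → φ d = 0 := by
    intro d hd
    by_contra hne
    have hper : ∀ m : ℤ, κ (σ (m + d)) = κ (σ m) := by
      intro m
      by_contra hkm
      apply hne
      have := horth (σ m) (σ (m + d)) (fun h => hkm h.symm)
      rw [tpl m (m + d), show m + d - m = d by ring] at this
      exact this
    -- periodicity with period |d|
    set e : ℤ := |d| with he
    have he0 : 0 < e := abs_pos.mpr hd
    have hpere : ∀ m : ℤ, κ (σ (m + e)) = κ (σ m) := by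
      intro m
      rcases abs_choice d with h | h
      · rw [he, h]; exact hper m
      · rw [he, h]
        have := hper (m + -d)
        rw [show m + -d + d = m by ring] at this
        exact this.symm
    have hmul : ∀ (k : ℕ) (m : ℤ), κ (σ (m + k * e)) = κ (σ m) := by
      intro k
      induction k with
      | zero => intro m; norm_num
      | succ k ih =>
        intro m
        have h1 : m + (k + 1 : ℕ) * e = (m + k * e) + e := by push_cast; ring
        rw [h1, hpere, ih]
    have hrange : Set.range κ ⊆ (fun r : ℤ => κ (σ r)) '' (Set.Ico 0 e) := by
      intro y hy
      obtain ⟨i, hi⟩ := hy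
      set m : ℤ := σ.symm i with hm
      have him : i = σ m := by rw [hm, Equiv.apply_symm_apply]
      have hr0 : 0 ≤ m % e := Int.emod_nonneg m (ne_of_gt he0)
      have hr1 : m % e < e := Int.emod_lt_of_pos m he0
      refine ⟨m % e, ⟨hr0, hr1⟩, ?_⟩
      have hdecomp : m = m % e + (m / e) * e := by
        rw [mul_comm]
        exact (Int.emod_add_mul_ediv m e).symm
      show κ (σ (m % e)) = y
      rcases Int.lt_or_le (m / e) 0 with hql | hqg
      · -- negative quotient: go the other way
        set q : ℤ := -(m / e) with hqd
        have hqn : ∃ k : ℕ, q = (k : ℤ) := ⟨q.toNat, (Int.toNat_of_nonneg (by omega)).symm⟩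
        obtain ⟨k, hk⟩ := hqn
        have h3 := hmul k m
        have h2 : m + (k : ℤ) * e = m % e := by
          rw [← hk, hqd]
          linarith [hdecomp]
        rw [h2] at h3
        rw [h3, ← him]
        exact hi
      · have hqn : ∃ k : ℕ, m / e = (k : ℤ) := ⟨(m / e).toNat, (Int.toNat_of_nonneg hqg).symm⟩
        obtain ⟨k, hk⟩ := hqn
        have h3 := hmul k (m % e)
        have h2 : m % e + (k : ℤ) * e = m := by
          rw [← hk]
          linarith [hdecomp]
        rw [h2] at h3
        rw [← h3, ← him]
        exact hi
    exact hκ (((Set.finite_Ico (0 : ℤ) e).image _).subset hrange)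
  -- φ 0 ≠ 0
  have hgne : g ≠ 0 := hli.ne_zero (σ 0)
  have hφ0 : φ 0 ≠ 0 := by
    set y : H := S.symm g with hy
    have hyne : y ≠ 0 := by
      intro h
      apply hgne
      have := congrArg S h
      rwa [S.apply_symm_apply, map_zero] at this
    have h1 := (hS y).mapL (innerSL ℂ y)
    have h2 : ∀ n : ℤ, (innerSL ℂ y) ((inner ℂ (f n) y : ℂ) • f n)
        = ((‖(inner ℂ y (f n) : ℂ)‖ ^ 2 : ℝ) : ℂ) := by
      intro n
      simp only [innerSL_apply_apply, inner_smul_right]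
      rw [← inner_conj_symm y (f n), Complex.mul_conj', RCLike.norm_conj]
      push_cast
      ring
    rw [funext h2] at h1
    have h3 : HasSum (fun n : ℤ => ((‖(inner ℂ y (f n) : ℂ)‖ ^ 2 : ℝ) : ℂ))
        ((∑' n : ℤ, ‖(inner ℂ y (f n) : ℂ)‖ ^ 2 : ℝ) : ℂ) :=
      ((hfr y).1.hasSum).mapL Complex.ofRealCLM
    have h4 : (innerSL ℂ y) (S y) = ((∑' n : ℤ, ‖(inner ℂ y (f n) : ℂ)‖ ^ 2 : ℝ) : ℂ) :=
      HasSum.unique h1 h3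
    have h5 : (0 : ℝ) < ∑' n : ℤ, ‖(inner ℂ y (f n) : ℂ)‖ ^ 2 := by
      have := (hfr y).2.1
      have hn : 0 < ‖y‖ := norm_pos_iff.mpr hyne
      nlinarith [mul_pos hA (pow_pos hn 2)]
    have h6 : (inner ℂ y (S y) : ℂ) ≠ 0 := by
      rw [show (inner ℂ y (S y) : ℂ) = (innerSL ℂ y) (S y) from rfl, h4]
      exact_mod_cast ne_of_gt h5
    have h7 : φ 0 = inner ℂ g y := by
      rw [hφ]
      congr 1
    have h8 : (inner ℂ g y : ℂ) = (starRingEnd ℂ) (inner ℂ y (S y) : ℂ) := by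
      rw [inner_conj_symm]
      congr 1
      rw [hy, S.apply_symm_apply]
    rw [h7, h8]
    intro hz
    exact h6 ((starRingEnd ℂ).injective (by rw [map_zero]; exact hz))
  -- biorthogonality kills overcompleteness
  obtain ⟨c, hc0, hcs⟩ := hover
  apply hc0
  have hcz : ∀ j : ℤ, c j = 0 := by
    intro j
    have h1 := hcs.mapL (innerSL ℂ (S.symm (f j)))
    rw [map_zero] at h1
    have h2 : ∀ n : ℤ, n ≠ j →
        (innerSL ℂ (S.symm (f j))) (c n • f n) = 0 := by
      intro n hn
      simp only [innerSL_apply_apply, inner_smul_right]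
      have h3 : (inner ℂ (f n) (S.symm (f j)) : ℂ) = 0 := by
        have := tpl (σ.symm n) (σ.symm j)
        rw [Equiv.apply_symm_apply, Equiv.apply_symm_apply] at this
        rw [this]
        apply hφz
        intro h
        apply hn
        have : σ.symm n = σ.symm j := by omega
        exact σ.symm.injective this
      rw [← inner_conj_symm, h3, map_zero, mul_zero]
    have h4 : HasSum (fun n : ℤ => (innerSL ℂ (S.symm (f j))) (c n • f n))
        ((innerSL ℂ (S.symm (f j))) (c j • f j)) := hasSum_single j h2
    have h5 : (innerSL ℂ (S.symm (f j))) (c j • f j) = 0 := HasSum.unique h4 h1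
    have h6 : (inner ℂ (f j) (S.symm (f j)) : ℂ) ≠ 0 := by
      have := tpl (σ.symm j) (σ.symm j)
      rw [Equiv.apply_symm_apply, sub_self] at this
      rw [this]
      exact hφ0
    simp only [innerSL_apply_apply, inner_smul_right] at h5
    rcases mul_eq_zero.mp h5 with h | h
    · exact h
    · exfalso
      apply h6
      rw [← inner_conj_symm, h]
      simp
  exact lp.ext (funext hcz)
end
end

section
/- Let G(g,a,b) = (g_{m,n})_{(m,n)∈ℤ×ℤ} be an overcomplete Gabor frame of L²(ℝ) whose window g is supported in an interval of length a: g(x) = 0 for almost every x ∉ [c, c+a], for some c ∈ ℝ. Then, regardless of the ordering over ℤ, G(g,a,b) is not generated by an operator in GL(L²(ℝ)): for every bijection σ : ℤ → ℤ×ℤ and every T ∈ GL(L²(ℝ)) it is not the case that g_{σ(n)} = Tⁿ g_{σ(0)} for all n ∈ ℤ. -/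
noncomputable section

open MeasureTheory
open scoped InnerProductSpace ENNReal

namespace Stmt16Aux

variable {ι : Type} [DecidableEq ι]

lemma summable_sq (f : lp (fun _ : ι => ℂ) 2) :
    Summable (fun i => ‖f i‖ ^ (2 : ℝ≥0∞).toReal) :=
  (lp.memℓp f).summable (by norm_num)

lemma memℓp_mask (s : ι → Prop) [DecidablePred s] (f : lp (fun _ : ι => ℂ) 2) :
    Memℓp (fun i => if s i then f i else 0) 2 := by
  refine memℓp_gen ?_
  refine Summable.of_nonneg_of_le (fun i => ?_) (fun i => ?_) (summable_sq f)
  · positivity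
  · refine Real.rpow_le_rpow (norm_nonneg _) ?_ (by norm_num)
    by_cases h : s i <;> simp [h]

/-- multiplication by an indicator (coordinate mask) on `ℓ²(ι)` as a linear map. -/
def maskL (s : ι → Prop) [DecidablePred s] :
    lp (fun _ : ι => ℂ) 2 →ₗ[ℂ] lp (fun _ : ι => ℂ) 2 where
  toFun f := ⟨fun i => if s i then f i else 0, memℓp_mask s f⟩
  map_add' f g := by
    ext i
    change (if s i then (f + g) i else 0)
      = (if s i then f i else 0) + (if s i then g i else 0)
    by_cases h : s i <;> simp [h, lp.coeFn_add]
  map_smul' r f := by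
    ext i
    change (if s i then (r • f) i else 0) = r • (if s i then f i else 0)
    by_cases h : s i <;> simp [h, lp.coeFn_smul]

lemma maskL_norm_le (s : ι → Prop) [DecidablePred s] (f : lp (fun _ : ι => ℂ) 2) :
    ‖maskL s f‖ ≤ 1 * ‖f‖ := by
  rw [one_mul]
  refine lp.norm_le_of_forall_sum_le (by norm_num) (lp.norm_nonneg' f) (fun F => ?_)
  calc ∑ i ∈ F, ‖(maskL s f) i‖ ^ (2 : ℝ≥0∞).toReal
      ≤ ∑ i ∈ F, ‖f i‖ ^ (2 : ℝ≥0∞).toReal := by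
        refine Finset.sum_le_sum (fun i _ => ?_)
        refine Real.rpow_le_rpow (norm_nonneg _) ?_ (by norm_num)
        show ‖if s i then f i else 0‖ ≤ ‖f i‖
        by_cases h : s i <;> simp [h]
    _ ≤ ‖f‖ ^ (2 : ℝ≥0∞).toReal := lp.sum_rpow_le_norm_rpow (by norm_num) f F

/-- coordinate mask as a continuous linear map. -/
def maskCLM (s : ι → Prop) [DecidablePred s] :
    lp (fun _ : ι => ℂ) 2 →L[ℂ] lp (fun _ : ι => ℂ) 2 :=
  (maskL s).mkContinuous 1 (maskL_norm_le s)

@[simp] lemma maskCLM_apply (s : ι → Prop) [DecidablePred s] (f : lp (fun _ : ι => ℂ) 2)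
    (i : ι) : (maskCLM s f) i = if s i then f i else 0 := rfl

lemma maskCLM_inner (s : ι → Prop) [DecidablePred s] (x y : lp (fun _ : ι => ℂ) 2) :
    ⟪maskCLM s x, y⟫_ℂ = ⟪x, maskCLM s y⟫_ℂ := by
  rw [lp.inner_eq_tsum, lp.inner_eq_tsum]
  refine tsum_congr (fun i => ?_)
  simp only [maskCLM_apply, RCLike.inner_apply]
  by_cases h : s i <;> simp [h]

lemma maskCLM_single_of_mem (s : ι → Prop) [DecidablePred s] {p : ι} (hp : s p) (v : ℂ) :
    maskCLM s (lp.single 2 p v) = lp.single 2 p v := by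
  ext i
  simp only [maskCLM_apply]
  by_cases h : i = p
  · subst h; simp [lp.single_apply_self, hp]
  · rw [lp.single_apply_ne (E := fun _ : ι => ℂ) 2 p v h]; simp

lemma maskCLM_single_of_not_mem (s : ι → Prop) [DecidablePred s] {p : ι} (hp : ¬ s p) (v : ℂ) :
    maskCLM s (lp.single 2 p v) = 0 := by
  ext i
  simp only [maskCLM_apply]
  by_cases h : i = p
  · subst h; simp [lp.single_apply_self, hp]
  · rw [lp.single_apply_ne (E := fun _ : ι => ℂ) 2 p v h]; simp

lemma memℓp_comp (e : ι ≃ ι) (f : lp (fun _ : ι => ℂ) 2) :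
    Memℓp (fun i => f (e i)) 2 := by
  refine memℓp_gen ?_
  exact (e.summable_iff (f := fun i => ‖f i‖ ^ (2 : ℝ≥0∞).toReal)).2 (summable_sq f)

/-- reindexing along an equiv as a linear map on `ℓ²(ι)`. -/
def compL (e : ι ≃ ι) :
    lp (fun _ : ι => ℂ) 2 →ₗ[ℂ] lp (fun _ : ι => ℂ) 2 where
  toFun f := ⟨fun i => f (e i), memℓp_comp e f⟩
  map_add' f g := by
    ext i
    change (f + g) (e i) = f (e i) + g (e i)
    simp [lp.coeFn_add]
  map_smul' r f := by
    ext i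
    change (r • f) (e i) = r • (f (e i))
    simp [lp.coeFn_smul]

lemma compL_norm_le (e : ι ≃ ι) (f : lp (fun _ : ι => ℂ) 2) :
    ‖compL e f‖ ≤ 1 * ‖f‖ := by
  rw [one_mul]
  refine lp.norm_le_of_forall_sum_le (by norm_num) (lp.norm_nonneg' f) (fun F => ?_)
  calc ∑ i ∈ F, ‖(compL e f) i‖ ^ (2 : ℝ≥0∞).toReal
      = ∑ j ∈ F.map e.toEmbedding, ‖f j‖ ^ (2 : ℝ≥0∞).toReal := by
        rw [Finset.sum_map]; rfl
    _ ≤ ‖f‖ ^ (2 : ℝ≥0∞).toReal := lp.sum_rpow_le_norm_rpow (by norm_num) f _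

/-- reindexing along an equiv as a continuous linear map. -/
def compCLM (e : ι ≃ ι) :
    lp (fun _ : ι => ℂ) 2 →L[ℂ] lp (fun _ : ι => ℂ) 2 :=
  (compL e).mkContinuous 1 (compL_norm_le e)

@[simp] lemma compCLM_apply (e : ι ≃ ι) (f : lp (fun _ : ι => ℂ) 2) (i : ι) :
    (compCLM e f) i = f (e i) := rfl

lemma compCLM_inner (e : ι ≃ ι) (x y : lp (fun _ : ι => ℂ) 2) :
    ⟪compCLM e x, compCLM e y⟫_ℂ = ⟪x, y⟫_ℂ := by
  rw [lp.inner_eq_tsum, lp.inner_eq_tsum]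
  exact e.tsum_eq (fun i => ⟪x i, y i⟫_ℂ)

lemma compCLM_single (e : ι ≃ ι) (p : ι) (v : ℂ) :
    compCLM e (lp.single 2 p v) = lp.single 2 (e.symm p) v := by
  ext i
  show (lp.single 2 p v : ∀ _ : ι, ℂ) (e i) = _
  by_cases h : i = e.symm p
  · subst h
    simp [lp.single_apply_self]
  · have h2 : e i ≠ p := fun hc => h (by simp [← hc])
    rw [lp.single_apply_ne (E := fun _ : ι => ℂ) 2 p v h2,
      lp.single_apply_ne (E := fun _ : ι => ℂ) 2 (e.symm p) v h]

lemma inner_single_one_left (p : ι) (x : lp (fun _ : ι => ℂ) 2) :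
    ⟪lp.single 2 p (1 : ℂ), x⟫_ℂ = x p := by
  rw [lp.inner_single_left]
  simp [RCLike.inner_apply]

lemma exists_ne_zero_coord {f : lp (fun _ : ι => ℂ) 2} (hf : f ≠ 0) : ∃ p, f p ≠ 0 := by
  by_contra h
  push_neg at h
  exact hf (by ext i; simpa using h i)

/-- surjective maps `ℤ → ℤ` are not periodic. -/
lemma no_periodic_surj {v : ℤ → ℤ} (hsurj : Function.Surjective v) {t : ℤ} (ht : t ≠ 0)
    (hper : ∀ j, v (j + t) = v j) : False := by
  have hper' : ∀ j, v (j - t) = v j := by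
    intro j
    have := hper (j - t)
    simpa using this.symm
  set m : ℤ := |t| with hm
  have hm0 : 0 < m := abs_pos.2 ht
  have habs : ∀ j, v (j + m) = v j := by
    intro j
    rcases abs_cases t with ⟨h1, _⟩ | ⟨h1, _⟩
    · rw [hm, h1]; exact hper j
    · rw [hm, h1]
      have := hper' j
      simpa [sub_eq_add_neg] using this
  have habs' : ∀ j, v (j - m) = v j := by
    intro j
    have := habs (j - m)
    simpa using this.symm
  have hmul : ∀ s : ℤ, ∀ j, v (j + m * s) = v j := by
    intro s
    induction s using Int.induction_on with
    | zero => simp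
    | succ k ih =>
        intro j
        have h1 : j + m * ((k : ℤ) + 1) = (j + m * k) + m := by ring
        rw [h1, habs, ih]
    | pred k ih =>
        intro j
        have h1 : j + m * (-(k : ℤ) - 1) = (j + m * (-(k : ℤ))) - m := by ring
        rw [h1, habs', ih]
  have hmod : ∀ j, v j = v (j % m) := by
    intro j
    conv_lhs => rw [← Int.emod_add_mul_ediv j m]
    exact hmul (j / m) (j % m)
  have hfin : (Set.range v).Finite := by
    have hsub : Set.range v ⊆ v '' (Set.Icc 0 m) := by
      rintro _ ⟨j, rfl⟩
      exact ⟨j % m, ⟨Int.emod_nonneg j hm0.ne', (Int.emod_lt_of_pos j hm0).le⟩, (hmod j).symm⟩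
    exact ((Set.finite_Icc (0 : ℤ) m).image v).subset hsub
  rw [Set.range_eq_univ.2 hsurj] at hfin
  exact Set.infinite_univ hfin

section MulInd

lemma indicator_ae_add (s : Set ℝ) (f g : Lp ℂ 2 (volume : Measure ℝ)) :
    s.indicator (⇑(f + g)) =ᵐ[volume] s.indicator ⇑f + s.indicator ⇑g := by
  filter_upwards [Lp.coeFn_add f g] with x hx
  by_cases hxs : x ∈ s
  · rw [Pi.add_apply, Set.indicator_of_mem hxs, Set.indicator_of_mem hxs,
      Set.indicator_of_mem hxs, hx, Pi.add_apply]
  · rw [Pi.add_apply, Set.indicator_of_notMem hxs, Set.indicator_of_notMem hxs,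
      Set.indicator_of_notMem hxs, add_zero]

lemma indicator_ae_smul (s : Set ℝ) (r : ℂ) (f : Lp ℂ 2 (volume : Measure ℝ)) :
    s.indicator (⇑(r • f)) =ᵐ[volume] r • s.indicator ⇑f := by
  filter_upwards [Lp.coeFn_smul r f] with x hx
  by_cases hxs : x ∈ s
  · rw [Pi.smul_apply, Set.indicator_of_mem hxs, Set.indicator_of_mem hxs, hx, Pi.smul_apply]
  · rw [Pi.smul_apply, Set.indicator_of_notMem hxs, Set.indicator_of_notMem hxs, smul_zero]

lemma memInd (s : Set ℝ) (hs : MeasurableSet s) (f : Lp ℂ 2 (volume : Measure ℝ)) :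
    MemLp (s.indicator ⇑f) 2 (volume : Measure ℝ) :=
  (Lp.memLp f).indicator hs

/-- multiplication by the indicator of a measurable set as a linear map on `L²(ℝ)`. -/
def mulIndL (s : Set ℝ) (hs : MeasurableSet s) :
    Lp ℂ 2 (volume : Measure ℝ) →ₗ[ℂ] Lp ℂ 2 (volume : Measure ℝ) where
  toFun f := (memInd s hs f).toLp (s.indicator ⇑f)
  map_add' f g := by
    have h1 := MemLp.toLp_congr (memInd s hs (f + g)) ((memInd s hs f).add (memInd s hs g))
      (indicator_ae_add s f g)
    exact h1.trans (MemLp.toLp_add (memInd s hs f) (memInd s hs g))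
  map_smul' r f := by
    simp only [RingHom.id_apply]
    have h1 := MemLp.toLp_congr (memInd s hs (r • f)) ((memInd s hs f).const_smul r)
      (indicator_ae_smul s r f)
    exact h1.trans (MemLp.toLp_const_smul r (memInd s hs f))

lemma mulIndL_norm_le (s : Set ℝ) (hs : MeasurableSet s) (f : Lp ℂ 2 (volume : Measure ℝ)) :
    ‖mulIndL s hs f‖ ≤ 1 * ‖f‖ := by
  rw [one_mul]
  show ‖(memInd s hs f).toLp (s.indicator ⇑f)‖ ≤ ‖f‖
  rw [Lp.norm_toLp (s.indicator ⇑f) (memInd s hs f), Lp.norm_def]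
  exact ENNReal.toReal_mono (Lp.eLpNorm_ne_top f) (eLpNorm_indicator_le _)

/-- multiplication by the indicator of a measurable set as a CLM on `L²(ℝ)`. -/
def mulIndCLM (s : Set ℝ) (hs : MeasurableSet s) :
    Lp ℂ 2 (volume : Measure ℝ) →L[ℂ] Lp ℂ 2 (volume : Measure ℝ) :=
  (mulIndL s hs).mkContinuous 1 (mulIndL_norm_le s hs)

lemma mulIndCLM_coeFn (s : Set ℝ) (hs : MeasurableSet s) (f : Lp ℂ 2 (volume : Measure ℝ)) :
    ⇑(mulIndCLM s hs f) =ᵐ[volume] s.indicator ⇑f :=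
  MemLp.coeFn_toLp (memInd s hs f)

lemma mulIndCLM_eq_zero (s : Set ℝ) (hs : MeasurableSet s) {u : Lp ℂ 2 (volume : Measure ℝ)}
    (h : ∀ᵐ x ∂(volume : Measure ℝ), x ∈ s → (u : ℝ → ℂ) x = 0) :
    mulIndCLM s hs u = 0 := by
  refine MeasureTheory.Lp.ext ?_
  filter_upwards [mulIndCLM_coeFn s hs u, h, Lp.coeFn_zero ℂ 2 (volume : Measure ℝ)]
    with x hx h0 hz
  rw [hx, hz]
  by_cases hxs : x ∈ s
  · simp [Set.indicator_of_mem hxs, h0 hxs]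
  · simp [Set.indicator_of_notMem hxs]

lemma mulIndCLM_eq_self (s : Set ℝ) (hs : MeasurableSet s) {u : Lp ℂ 2 (volume : Measure ℝ)}
    (h : ∀ᵐ x ∂(volume : Measure ℝ), x ∉ s → (u : ℝ → ℂ) x = 0) :
    mulIndCLM s hs u = u := by
  refine MeasureTheory.Lp.ext ?_
  filter_upwards [mulIndCLM_coeFn s hs u, h] with x hx h0
  rw [hx]
  by_cases hxs : x ∈ s
  · simp [Set.indicator_of_mem hxs]
  · simp [Set.indicator_of_notMem hxs, h0 hxs]

end MulInd

end Stmt16Aux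

set_option maxHeartbeats 1000000 in
theorem stmt16 (g : Lp ℂ 2 (volume : Measure ℝ)) (a b : ℝ) (ha : 0 < a) (hb : 0 < b)
    (G : ℤ × ℤ → Lp ℂ 2 (volume : Measure ℝ))
    (hG : ∀ m n : ℤ, (G (m, n) : ℝ → ℂ) =ᵐ[volume]
      fun x : ℝ => Complex.exp (2 * (Real.pi : ℂ) * Complex.I * (m : ℂ) * (b : ℂ) * (x : ℂ)) *
        (g : ℝ → ℂ) (x - (n : ℝ) * a))
    (hframe : ∃ A B : ℝ, IsFrame G A B)
    (hover : ∃ c : lp (fun _ : ℤ × ℤ => ℂ) 2, c ≠ 0 ∧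
      HasSum (fun p : ℤ × ℤ => c p • G p) 0)
    (c₀ : ℝ)
    (hsupp : ∀ᵐ x : ℝ, x ∉ Set.Icc c₀ (c₀ + a) → (g : ℝ → ℂ) x = 0) :
    ∀ (σ : ℤ ≃ ℤ × ℤ) (T : Lp ℂ 2 (volume : Measure ℝ) ≃L[ℂ] Lp ℂ 2 (volume : Measure ℝ)),
      ¬ (∀ n : ℤ, G (σ n) = (T ^ n) (G (σ 0))) := by
  classical
  intro σ T hrep
  obtain ⟨A, B, hA, hB, hfr⟩ := hframe
  obtain ⟨c, hc0, hcsum⟩ := hover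
  -- the index shift induced by `σ`
  set τ : ℤ × ℤ ≃ ℤ × ℤ := σ.symm.trans ((Equiv.addRight (1 : ℤ)).trans σ) with hτdef
  have hτ_apply : ∀ p, τ p = σ (σ.symm p + 1) := fun p => rfl
  have hτσ : ∀ i : ℤ, τ (σ i) = σ (i + 1) := by
    intro i; rw [hτ_apply]; simp
  -- `T` moves `G` along `τ`
  have hTG : ∀ p : ℤ × ℤ, T (G p) = G (τ p) := by
    intro p
    have h1 := hrep (σ.symm p)
    have h2 := hrep (σ.symm p + 1)
    rw [Equiv.apply_symm_apply] at h1
    rw [hτ_apply, h2, h1, show σ.symm p + 1 = 1 + σ.symm p from add_comm _ _, zpow_add,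
      zpow_one]
    rfl
  have hTG' : ∀ p : ℤ × ℤ, T.symm (G p) = G (τ.symm p) := by
    intro p
    have h := hTG (τ.symm p)
    rw [Equiv.apply_symm_apply] at h
    rw [← h, ContinuousLinearEquiv.symm_apply_apply]
  -- the kernel of the synthesis operator
  let N : Submodule ℂ (lp (fun _ : ℤ × ℤ => ℂ) 2) :=
    { carrier := {d | HasSum (fun p : ℤ × ℤ => d p • G p) 0}
      add_mem' := by
        intro d e hd he
        have h := HasSum.add hd he
        rw [add_zero] at h
        have heq : (fun p : ℤ × ℤ => ((d + e : lp (fun _ : ℤ × ℤ => ℂ) 2) p) • G p)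
            = fun p => d p • G p + e p • G p := by
          funext p
          rw [lp.coeFn_add, Pi.add_apply, add_smul]
        show HasSum _ 0
        rw [heq]; exact h
      zero_mem' := by
        have heq : (fun p : ℤ × ℤ => ((0 : lp (fun _ : ℤ × ℤ => ℂ) 2) p) • G p)
            = fun _ => (0 : Lp ℂ 2 (volume : Measure ℝ)) := by
          funext p
          rw [lp.coeFn_zero, Pi.zero_apply, zero_smul]
        show HasSum _ 0
        rw [heq]; exact hasSum_zero
      smul_mem' := by
        intro r d hd
        have h := HasSum.const_smul r hd
        rw [smul_zero] at h
        have heq : (fun p : ℤ × ℤ => ((r • d : lp (fun _ : ℤ × ℤ => ℂ) 2) p) • G p)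
            = fun p => r • (d p • G p) := by
          funext p
          rw [lp.coeFn_smul, Pi.smul_apply, smul_smul, smul_eq_mul]
        show HasSum _ 0
        rw [heq]; exact h }
  have hcN : c ∈ N := hcsum
  -- translated support condition
  have hsuppn : ∀ n : ℤ, ∀ᵐ x : ℝ,
      (x - (n : ℝ) * a ∉ Set.Icc c₀ (c₀ + a) → (g : ℝ → ℂ) (x - (n : ℝ) * a) = 0) := by
    intro n
    rw [MeasureTheory.ae_iff] at hsupp ⊢
    exact ((measurePreserving_sub_right (volume : Measure ℝ)
      ((n : ℝ) * a)).quasiMeasurePreserving).preimage_null hsupp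
  have hGsupp : ∀ m n : ℤ, ∀ᵐ x : ℝ,
      x ∉ Set.Icc (c₀ + (n : ℝ) * a) (c₀ + (n : ℝ) * a + a) → (G (m, n) : ℝ → ℂ) x = 0 := by
    intro m n
    filter_upwards [hG m n, hsuppn n] with x hx hsup hnot
    rw [hx]
    have h1 : x - (n : ℝ) * a ∉ Set.Icc c₀ (c₀ + a) := by
      intro hmem
      rw [Set.mem_Icc] at hmem
      exact hnot (Set.mem_Icc.2 ⟨by linarith [hmem.1], by linarith [hmem.2]⟩)
    rw [hsup h1, mul_zero]
  -- the intervals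
  set J : ℤ → Set ℝ := fun n => Set.Ioo (c₀ + (n : ℝ) * a) (c₀ + (n : ℝ) * a + a) with hJdef
  have hR0 : ∀ (m n n' : ℤ), n' ≠ n →
      Stmt16Aux.mulIndCLM (J n) measurableSet_Ioo (G (m, n')) = 0 := by
    intro m n n' hne
    refine Stmt16Aux.mulIndCLM_eq_zero _ _ ?_
    filter_upwards [hGsupp m n'] with x hx hxJ
    refine hx ?_
    intro hmem
    rw [Set.mem_Icc] at hmem
    obtain ⟨h3, h4⟩ := hmem
    obtain ⟨h1, h2⟩ := hxJ
    rcases lt_or_gt_of_ne hne with hlt | hgt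
    · have hz : (n' : ℝ) + 1 ≤ (n : ℝ) := by exact_mod_cast Int.add_one_le_iff.mpr hlt
      have hz2 : ((n' : ℝ) + 1) * a ≤ (n : ℝ) * a :=
        mul_le_mul_of_nonneg_right hz ha.le
      nlinarith
    · have hz : (n : ℝ) + 1 ≤ (n' : ℝ) := by exact_mod_cast Int.add_one_le_iff.mpr hgt
      have hz2 : ((n : ℝ) + 1) * a ≤ (n' : ℝ) * a :=
        mul_le_mul_of_nonneg_right hz ha.le
      nlinarith
  have hpt : ∀ r : ℝ, ∀ᵐ x : ℝ, x ≠ r := by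
    intro r
    have h0 : {x : ℝ | ¬ x ≠ r} = {r} := by ext y; simp
    rw [MeasureTheory.ae_iff, h0]
    exact Real.volume_singleton
  have hR1 : ∀ (m n : ℤ),
      Stmt16Aux.mulIndCLM (J n) measurableSet_Ioo (G (m, n)) = G (m, n) := by
    intro m n
    refine Stmt16Aux.mulIndCLM_eq_self _ _ ?_
    filter_upwards [hGsupp m n, hpt (c₀ + (n : ℝ) * a), hpt (c₀ + (n : ℝ) * a + a)]
      with x hx h1 h2 hxJ
    refine hx ?_
    intro hmem
    rw [Set.mem_Icc] at hmem
    exact hxJ ⟨lt_of_le_of_ne hmem.1 (Ne.symm h1), lt_of_le_of_ne hmem.2 h2⟩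
  -- columns of kernel elements are in the kernel
  have hcol : ∀ (n : ℤ) (d : lp (fun _ : ℤ × ℤ => ℂ) 2), d ∈ N →
      Stmt16Aux.maskCLM (fun p : ℤ × ℤ => p.2 = n) d ∈ N := by
    intro n d hd
    have hd' : HasSum (fun p : ℤ × ℤ => d p • G p) 0 := hd
    have h := (Stmt16Aux.mulIndCLM (J n) measurableSet_Ioo).hasSum hd'
    rw [map_zero] at h
    have heq : (fun p : ℤ × ℤ =>
          (Stmt16Aux.maskCLM (fun p : ℤ × ℤ => p.2 = n) d) p • G p)
        = fun p => Stmt16Aux.mulIndCLM (J n) measurableSet_Ioo (d p • G p) := by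
      funext p
      obtain ⟨m, n'⟩ := p
      rw [_root_.map_smul, Stmt16Aux.maskCLM_apply]
      by_cases hn : n' = n
      · subst hn
        rw [hR1 m n']
        simp
      · rw [hR0 m n n' hn]
        simp [hn]
    show HasSum _ 0
    rw [heq]; exact h
  -- shift invariance of the kernel
  have hshiftU : ∀ d ∈ N, Stmt16Aux.compCLM τ.symm d ∈ N := by
    intro d hd
    have hd' : HasSum (fun p : ℤ × ℤ => d p • G p) 0 := hd
    have h1 := (T.toContinuousLinearMap).hasSum hd'
    rw [map_zero] at h1
    have heq1 : (fun p : ℤ × ℤ => T.toContinuousLinearMap (d p • G p))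
        = fun p => d p • G (τ p) := by
      funext p
      rw [ContinuousLinearEquiv.coe_coe, _root_.map_smul, hTG p]
    rw [heq1] at h1
    have heq2 : (fun q : ℤ × ℤ => d (τ.symm q) • G q) ∘ τ = fun p => d p • G (τ p) := by
      funext p
      simp
    have h2 : HasSum ((fun q : ℤ × ℤ => d (τ.symm q) • G q) ∘ τ) 0 := by
      rw [heq2]; exact h1
    have h3 := (Equiv.hasSum_iff τ).1 h2
    show HasSum _ 0
    exact h3
  have hshiftV : ∀ d ∈ N, Stmt16Aux.compCLM τ d ∈ N := by
    intro d hd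
    have hd' : HasSum (fun p : ℤ × ℤ => d p • G p) 0 := hd
    have h1 := (T.symm.toContinuousLinearMap).hasSum hd'
    rw [map_zero] at h1
    have heq1 : (fun p : ℤ × ℤ => T.symm.toContinuousLinearMap (d p • G p))
        = fun p => d p • G (τ.symm p) := by
      funext p
      rw [ContinuousLinearEquiv.coe_coe, _root_.map_smul, hTG' p]
    rw [heq1] at h1
    have heq2 : (fun q : ℤ × ℤ => d (τ q) • G q) ∘ τ.symm = fun p => d p • G (τ.symm p) := by
      funext p
      simp
    have h2 : HasSum ((fun q : ℤ × ℤ => d (τ q) • G q) ∘ τ.symm) 0 := by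
      rw [heq2]; exact h1
    have h3 := (Equiv.hasSum_iff τ.symm).1 h2
    show HasSum _ 0
    exact h3
  -- the closure of the kernel and the orthogonal projection onto it
  set NC := N.topologicalClosure with hNCdef
  haveI : CompleteSpace NC := (Submodule.isClosed_topologicalClosure N).completeSpace_coe
  set P : lp (fun _ : ℤ × ℤ => ℂ) 2 →L[ℂ] lp (fun _ : ℤ × ℤ => ℂ) 2 :=
    NC.subtypeL.comp (Submodule.orthogonalProjectionOnto NC) with hPdef
  have hinv : ∀ (L : lp (fun _ : ℤ × ℤ => ℂ) 2 →L[ℂ] lp (fun _ : ℤ × ℤ => ℂ) 2),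
      (∀ d ∈ N, L d ∈ N) → ∀ x ∈ NC, L x ∈ NC := by
    intro L hL x hx
    exact map_mem_closure L.continuous hx (fun y hy => hL y hy)
  have hPmem : ∀ x, P x ∈ NC := fun x => (Submodule.orthogonalProjectionOnto NC x).2
  have hPid : ∀ x ∈ NC, P x = x := by
    intro x hx
    have h := Submodule.orthogonalProjectionOnto_mem_subspace_eq_self (K := NC) ⟨x, hx⟩
    exact congrArg Subtype.val h
  have hPsym : ∀ x y, ⟪P x, y⟫_ℂ = ⟪x, P y⟫_ℂ :=
    fun x y => Submodule.inner_starProjection_left_eq_right NC x y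
  set U := Stmt16Aux.compCLM (ι := ℤ × ℤ) τ.symm with hUdef
  set V := Stmt16Aux.compCLM (ι := ℤ × ℤ) τ with hVdef
  have hUV : ∀ w, U (V w) = w := by
    intro w
    ext q
    show w (τ (τ.symm q)) = w q
    rw [Equiv.apply_symm_apply]
  have hUP : ∀ x, P (U x) = U (P x) := by
    intro x
    have hmem : U (P x) ∈ NC := hinv U hshiftU (P x) (hPmem x)
    have hortho : ∀ w ∈ NC, ⟪U x - U (P x), w⟫_ℂ = 0 := by
      intro w hw
      rw [← map_sub, ← hUV w, Stmt16Aux.compCLM_inner]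
      exact Submodule.starProjection_inner_eq_zero x (V w) (hinv V hshiftV w hw)
    exact Submodule.eq_starProjection_of_mem_of_inner_eq_zero hmem hortho
  have hDP : ∀ (n : ℤ) x, P (Stmt16Aux.maskCLM (fun p : ℤ × ℤ => p.2 = n) x)
      = Stmt16Aux.maskCLM (fun p : ℤ × ℤ => p.2 = n) (P x) := by
    intro n x
    refine ext_inner_right ℂ ?_
    intro y
    have hDPx : Stmt16Aux.maskCLM (fun p : ℤ × ℤ => p.2 = n) (P x) ∈ NC :=
      hinv _ (hcol n) (P x) (hPmem x)
    have hDPy : Stmt16Aux.maskCLM (fun p : ℤ × ℤ => p.2 = n) (P y) ∈ NC :=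
      hinv _ (hcol n) (P y) (hPmem y)
    calc ⟪P (Stmt16Aux.maskCLM (fun p : ℤ × ℤ => p.2 = n) x), y⟫_ℂ
        = ⟪Stmt16Aux.maskCLM (fun p : ℤ × ℤ => p.2 = n) x, P y⟫_ℂ := hPsym _ _
      _ = ⟪x, Stmt16Aux.maskCLM (fun p : ℤ × ℤ => p.2 = n) (P y)⟫_ℂ :=
          Stmt16Aux.maskCLM_inner _ _ _
      _ = ⟪x, P (Stmt16Aux.maskCLM (fun p : ℤ × ℤ => p.2 = n) (P y))⟫_ℂ := by
          rw [hPid _ hDPy]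
      _ = ⟪P x, Stmt16Aux.maskCLM (fun p : ℤ × ℤ => p.2 = n) (P y)⟫_ℂ := (hPsym x _).symm
      _ = ⟪Stmt16Aux.maskCLM (fun p : ℤ × ℤ => p.2 = n) (P x), P y⟫_ℂ :=
          (Stmt16Aux.maskCLM_inner _ _ _).symm
      _ = ⟪P (Stmt16Aux.maskCLM (fun p : ℤ × ℤ => p.2 = n) (P x)), y⟫_ℂ :=
          (hPsym _ _).symm
      _ = ⟪Stmt16Aux.maskCLM (fun p : ℤ × ℤ => p.2 = n) (P x), y⟫_ℂ := by
          rw [hPid _ hDPx]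
  -- matrix entries of `P`
  set Ent : ℤ → ℤ → ℂ :=
    fun j k => ⟪lp.single 2 (σ j) (1 : ℂ), P (lp.single 2 (σ k) (1 : ℂ))⟫_ℂ with hEntdef
  have hUe : ∀ p : ℤ × ℤ, U (lp.single 2 p (1 : ℂ)) = lp.single 2 (τ p) (1 : ℂ) := by
    intro p
    have h := Stmt16Aux.compCLM_single τ.symm p (1 : ℂ)
    rw [Equiv.symm_symm] at h
    exact h
  have hE1 : ∀ j k, Ent (j + 1) (k + 1) = Ent j k := by
    intro j k
    show ⟪lp.single 2 (σ (j + 1)) (1 : ℂ), P (lp.single 2 (σ (k + 1)) (1 : ℂ))⟫_ℂ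
      = ⟪lp.single 2 (σ j) (1 : ℂ), P (lp.single 2 (σ k) (1 : ℂ))⟫_ℂ
    rw [← hτσ j, ← hτσ k, ← hUe, ← hUe, hUP, Stmt16Aux.compCLM_inner]
  have hEsub : ∀ j k, Ent j k = Ent 0 (k - j) := by
    intro j
    induction j using Int.induction_on with
    | zero => intro k; simp
    | succ i ih =>
        intro k
        have h1 : Ent (i + 1) k = Ent i (k - 1) := by
          have h := hE1 i (k - 1)
          rw [sub_add_cancel] at h
          exact h
        rw [h1, ih (k - 1)]
        congr 1
        ring
    | pred i ih =>
        intro k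
        have h := hE1 (-(i : ℤ) - 1) k
        rw [show (-(i : ℤ) - 1) + 1 = -(i : ℤ) by ring] at h
        rw [← h, ih (k + 1)]
        congr 1
        ring
  have hE3 : ∀ j k, (σ j).2 ≠ (σ k).2 → Ent j k = 0 := by
    intro j k hne
    show ⟪lp.single 2 (σ j) (1 : ℂ), P (lp.single 2 (σ k) (1 : ℂ))⟫_ℂ = 0
    have h1 : Stmt16Aux.maskCLM (fun p : ℤ × ℤ => p.2 = (σ k).2) (lp.single 2 (σ k) (1 : ℂ))
        = lp.single 2 (σ k) (1 : ℂ) :=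
      Stmt16Aux.maskCLM_single_of_mem (fun p : ℤ × ℤ => p.2 = (σ k).2) rfl 1
    rw [← h1, hDP, ← Stmt16Aux.maskCLM_inner,
      Stmt16Aux.maskCLM_single_of_not_mem (fun p : ℤ × ℤ => p.2 = (σ k).2) hne 1,
      inner_zero_left]
  by_cases hcase : ∃ t : ℤ, t ≠ 0 ∧ Ent 0 t ≠ 0
  · -- nontrivial off-diagonal entry: the second coordinate of σ is periodic, contradiction
    obtain ⟨t, ht0, htne⟩ := hcase
    have hper : ∀ j : ℤ, (σ (j + t)).2 = (σ j).2 := by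
      intro j
      by_contra hne
      have h := hE3 j (j + t) (fun hh => hne hh.symm)
      rw [hEsub j (j + t)] at h
      rw [add_sub_cancel_left] at h
      exact htne h
    have hsurj : Function.Surjective (fun j : ℤ => (σ j).2) := by
      intro n
      exact ⟨σ.symm (0, n), by simp⟩
    exact Stmt16Aux.no_periodic_surj hsurj ht0 hper
  · push_neg at hcase
    -- P is a scalar multiple of the identity
    have hPe : ∀ q : ℤ × ℤ,
        P (lp.single 2 q (1 : ℂ)) = Ent 0 0 • lp.single 2 q (1 : ℂ) := by
      intro q
      have hcoords : ∀ p : ℤ × ℤ,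
          (P (lp.single 2 q (1 : ℂ))) p = (if p = q then Ent 0 0 else 0) := by
        intro p
        have h1 : (P (lp.single 2 q (1 : ℂ))) p
            = ⟪lp.single 2 p (1 : ℂ), P (lp.single 2 q (1 : ℂ))⟫_ℂ :=
          (Stmt16Aux.inner_single_one_left p _).symm
        have h2 : ⟪lp.single 2 p (1 : ℂ), P (lp.single 2 q (1 : ℂ))⟫_ℂ
            = Ent (σ.symm p) (σ.symm q) := by
          show _ = ⟪lp.single 2 (σ (σ.symm p)) (1 : ℂ), P (lp.single 2 (σ (σ.symm q)) (1 : ℂ))⟫_ℂ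
          rw [Equiv.apply_symm_apply, Equiv.apply_symm_apply]
        rw [h1, h2, hEsub]
        by_cases hpq : p = q
        · subst hpq
          simp
        · have hne : σ.symm q - σ.symm p ≠ 0 := by
            rw [sub_ne_zero]
            intro hh
            exact hpq (σ.symm.injective hh).symm
          rw [if_neg hpq]
          exact hcase _ hne
      ext p
      rw [hcoords p]
      rw [lp.coeFn_smul, Pi.smul_apply]
      by_cases hpq : p = q
      · subst hpq
        rw [if_pos rfl, lp.single_apply_self, smul_eq_mul, mul_one]
      · rw [if_neg hpq, lp.single_apply_ne (E := fun _ : ℤ × ℤ => ℂ) 2 q 1 hpq, smul_zero]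
    -- the scalar is 1
    have hcNC : c ∈ NC := Submodule.le_topologicalClosure N hcN
    obtain ⟨p0, hp0⟩ := Stmt16Aux.exists_ne_zero_coord hc0
    have hcoord : (starRingEnd ℂ) (Ent 0 0) * c p0 = c p0 := by
      have h1 : ⟪P (lp.single 2 p0 (1 : ℂ)), c⟫_ℂ = ⟪lp.single 2 p0 (1 : ℂ), P c⟫_ℂ :=
        hPsym _ _
      rw [hPid c hcNC, hPe p0, inner_smul_left] at h1
      calc (starRingEnd ℂ) (Ent 0 0) * c p0
          = (starRingEnd ℂ) (Ent 0 0) * ⟪lp.single 2 p0 (1 : ℂ), c⟫_ℂ := by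
            rw [Stmt16Aux.inner_single_one_left]
        _ = ⟪lp.single 2 p0 (1 : ℂ), c⟫_ℂ := h1
        _ = c p0 := Stmt16Aux.inner_single_one_left p0 c
    have hfE0 : (starRingEnd ℂ) (Ent 0 0) = 1 := by
      have h2 : ((starRingEnd ℂ) (Ent 0 0) - 1) * c p0 = 0 := by
        linear_combination hcoord
      rcases mul_eq_zero.1 h2 with h3 | h3
      · exact sub_eq_zero.1 h3
      · exact absurd h3 hp0
    have hfE0' : Ent 0 0 = 1 := by
      have h := congrArg (starRingEnd ℂ) hfE0
      simpa using h
    have hsingleNC : ∀ q : ℤ × ℤ, lp.single 2 q (1 : ℂ) ∈ NC := by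
      intro q
      have h := hPmem (lp.single 2 q (1 : ℂ))
      rwa [hPe q, hfE0', one_smul] at h
    -- all frame vectors vanish
    have hGzero : ∀ q : ℤ × ℤ, G q = 0 := by
      intro q
      have hinner : ∀ fH : Lp ℂ 2 (volume : Measure ℝ), ⟪fH, G q⟫_ℂ = 0 := by
        intro fH
        have hw2 : Memℓp (fun p : ℤ × ℤ => (starRingEnd ℂ) (⟪fH, G p⟫_ℂ)) 2 := by
          refine memℓp_gen ?_
          have hs := (hfr fH).1
          have heq : (fun p : ℤ × ℤ =>
              ‖(starRingEnd ℂ) (⟪fH, G p⟫_ℂ)‖ ^ (2 : ℝ≥0∞).toReal)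
              = fun p => ‖(⟪fH, G p⟫_ℂ : ℂ)‖ ^ (2 : ℕ) := by
            funext p
            rw [RCLike.norm_conj,
              show ((2 : ℝ≥0∞).toReal) = ((2 : ℕ) : ℝ) by norm_num, Real.rpow_natCast]
          rw [heq]
          exact hs
        let w : lp (fun _ : ℤ × ℤ => ℂ) 2 :=
          ⟨fun p => (starRingEnd ℂ) (⟪fH, G p⟫_ℂ), hw2⟩
        have hker : N ≤ LinearMap.ker (innerSL ℂ w).toLinearMap := by
          intro d hd
          have hd' : HasSum (fun p : ℤ × ℤ => d p • G p) 0 := hd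
          have h1 := (innerSL ℂ fH).hasSum hd'
          rw [map_zero] at h1
          rw [LinearMap.mem_ker]
          show ⟪w, d⟫_ℂ = 0
          rw [lp.inner_eq_tsum]
          have h3 : (fun p : ℤ × ℤ => ⟪w p, d p⟫_ℂ)
              = fun p => (innerSL ℂ fH) (d p • G p) := by
            funext p
            rw [RCLike.inner_apply]
            show d p * (starRingEnd ℂ) ((starRingEnd ℂ) (⟪fH, G p⟫_ℂ)) = _
            rw [Complex.conj_conj, innerSL_apply_apply, inner_smul_right]
          rw [h3]
          exact h1.tsum_eq
        have hkerNC : NC ≤ LinearMap.ker (innerSL ℂ w).toLinearMap :=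
          Submodule.topologicalClosure_minimal N hker (ContinuousLinearMap.isClosed_ker _)
        have h4 : ⟪w, lp.single 2 q (1 : ℂ)⟫_ℂ = 0 := hkerNC (hsingleNC q)
        rw [lp.inner_single_right, RCLike.inner_apply] at h4
        have h5 : (starRingEnd ℂ) (w q) * 1 = ⟪fH, G q⟫_ℂ := by
          show (starRingEnd ℂ) ((starRingEnd ℂ) (⟪fH, G q⟫_ℂ)) * 1 = _
          rw [Complex.conj_conj, mul_one]
        rw [mul_comm, h5] at h4
        exact h4
      exact inner_self_eq_zero.1 (hinner (G q))
    -- contradiction with the lower frame bound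
    have hμ : volume (Set.Icc (0 : ℝ) 1) ≠ ⊤ := by
      rw [Real.volume_Icc]
      exact ENNReal.ofReal_ne_top
    set x0 : Lp ℂ 2 (volume : Measure ℝ) :=
      indicatorConstLp 2 measurableSet_Icc hμ (1 : ℂ) with hx0def
    have hx0 : ‖x0‖ = 1 := by
      rw [hx0def, norm_indicatorConstLp (by norm_num) (by norm_num), Real.volume_real_Icc]
      norm_num
    have hlow := (hfr x0).2.1
    have hz : (fun p : ℤ × ℤ => ‖(⟪x0, G p⟫_ℂ : ℂ)‖ ^ 2) = fun _ => (0 : ℝ) := by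
      funext p
      rw [hGzero p, inner_zero_right]
      simp
    rw [hz, tsum_zero, hx0] at hlow
    nlinarith
end
end
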